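/- arXiv:math/0505332 — 9 statements merged into one kernel-verified Lean document; each statement's English description precedes it below -/
import Mathlib

section
/- Assume c := sup_{m≥1} P(S_m < 0) < 1. Then for every integer n ≥ 1 and every real x > 0: P(max_{0≤k≤n} S_k ≥ x) ≤ (1/(1−c))·P(S_n ≥ x). -/
open MeasureTheory ProbabilityTheory Filter

noncomputable section

/-- The random walk `S_n = ξ₁ + ⋯ + ξ_n` associated with the steps `ξ`. -/
def walk {Ω : Type*} (ξ : ℕ → Ω → ℝ) (n : ℕ) (ω : Ω) : ℝ :=
  ∑ i ∈ Finset.range n, ξ i ω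

/-- Sum of independent identically distributed pairs. -/
lemma aux_identDistrib_add {Ω : Type*} [MeasurableSpace Ω] {P : Measure Ω}
    [IsProbabilityMeasure P] {X Y X' Y' : Ω → ℝ}
    (hX : Measurable X) (hY : Measurable Y) (hX' : Measurable X') (hY' : Measurable Y')
    (hXY : IndepFun X Y P) (hXY' : IndepFun X' Y' P)
    (h1 : IdentDistrib X X' P P) (h2 : IdentDistrib Y Y' P P) :
    IdentDistrib (fun ω => X ω + Y ω) (fun ω => X' ω + Y' ω) P P := by
  have hp : IdentDistrib (fun ω => (X ω, Y ω)) (fun ω => (X' ω, Y' ω)) P P := by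
    refine ⟨(hX.prodMk hY).aemeasurable, (hX'.prodMk hY').aemeasurable, ?_⟩
    rw [(indepFun_iff_map_prod_eq_prod_map_map hX.aemeasurable hY.aemeasurable).1 hXY,
      (indepFun_iff_map_prod_eq_prod_map_map hX'.aemeasurable hY'.aemeasurable).1 hXY',
      h1.map_eq, h2.map_eq]
  exact hp.comp measurable_add

lemma aux_sum_Ico {Ω : Type*} [MeasurableSpace Ω] {P : Measure Ω}
    [IsProbabilityMeasure P] {ξ : ℕ → Ω → ℝ} (hmeas : ∀ i, Measurable (ξ i))
    (hindep : iIndepFun ξ P)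
    (hident : ∀ i, IdentDistrib (ξ i) (ξ 0) P P) (k m : ℕ) :
    IdentDistrib (fun ω => ∑ i ∈ Finset.Ico k (k + m), ξ i ω) (walk ξ m) P P := by
  induction m with
  | zero =>
      have h1 : (fun ω : Ω => ∑ i ∈ Finset.Ico k (k + 0), ξ i ω) = fun _ => (0 : ℝ) := by
        funext ω; simp
      have h2 : walk ξ 0 = fun _ => (0 : ℝ) := by funext ω; simp [walk]
      rw [h1, h2]
      exact IdentDistrib.refl aemeasurable_const
  | succ m ih =>
      have hsum : ∀ (s : Finset ℕ), Measurable fun ω => ∑ i ∈ s, ξ i ω :=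
        fun s => Finset.measurable_sum s fun i _ => hmeas i
      have hXY : IndepFun (fun ω => ∑ i ∈ Finset.Ico k (k + m), ξ i ω) (ξ (k + m)) P := by
        have := hindep.indepFun_finsetSum_of_notMem hmeas
          (s := Finset.Ico k (k + m)) (i := k + m) (by simp)
        have he : (∑ j ∈ Finset.Ico k (k + m), ξ j) =
            fun ω => ∑ i ∈ Finset.Ico k (k + m), ξ i ω := by
          funext ω; simp
        rwa [he] at this
      have hXY' : IndepFun (walk ξ m) (ξ m) P := by
        have := hindep.indepFun_finsetSum_of_notMem hmeas
          (s := Finset.range m) (i := m) (by simp)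
        have he : (∑ j ∈ Finset.range m, ξ j) = walk ξ m := by
          funext ω; simp [walk]
        rwa [he] at this
      have hkey := aux_identDistrib_add (hsum _) (hmeas (k + m)) (hsum (Finset.range m))
        (hmeas m) hXY hXY' ih ((hident (k + m)).trans (hident m).symm)
      have h1 : (fun ω => (∑ i ∈ Finset.Ico k (k + m), ξ i ω) + ξ (k + m) ω) =
          fun ω => ∑ i ∈ Finset.Ico k (k + (m + 1)), ξ i ω := by
        funext ω
        rw [← Nat.add_assoc, Finset.sum_Ico_succ_top (Nat.le_add_right k m)]
      have h2 : (fun ω => (∑ i ∈ Finset.range m, ξ i ω) + ξ m ω) = walk ξ (m + 1) := by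
        funext ω; simp [walk, Finset.sum_range_succ]
      rwa [h1, h2] at hkey

lemma aux_indep_event {Ω : Type*} [MeasurableSpace Ω] {P : Measure Ω}
    [IsProbabilityMeasure P] {ξ : ℕ → Ω → ℝ} (hmeas : ∀ i, Measurable (ξ i))
    (hindep : iIndepFun ξ P) (k n : ℕ) (x : ℝ) :
    P ({ω | x ≤ walk ξ k ω ∧ ∀ j < k, walk ξ j ω < x}
        ∩ {ω | 0 ≤ ∑ i ∈ Finset.Ico k n, ξ i ω})
      = P {ω | x ≤ walk ξ k ω ∧ ∀ j < k, walk ξ j ω < x}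
        * P {ω | 0 ≤ ∑ i ∈ Finset.Ico k n, ξ i ω} := by
  classical
  set S := Finset.range k with hS
  set T := Finset.Ico k n with hT
  have hST : Disjoint S T := by
    rw [Finset.disjoint_left]
    intro a ha hb
    rw [hS, Finset.mem_range] at ha
    rw [hT, Finset.mem_Ico] at hb
    omega
  have hIF := hindep.indepFun_finset S T hST hmeas
  set g : ℕ → (↥S → ℝ) → ℝ :=
    fun j v => ∑ i ∈ Finset.range j, if h : i ∈ S then v ⟨i, h⟩ else 0 with hg
  have hgmeas : ∀ j, Measurable (g j) := by
    intro j
    apply Finset.measurable_sum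
    intro i _
    by_cases h : i ∈ S
    · simpa [h] using measurable_pi_apply (⟨i, h⟩ : ↥S)
    · simp [h]
  have hgF : ∀ j, j ≤ k → ∀ ω : Ω, g j (fun i : ↥S => ξ i ω) = walk ξ j ω := by
    intro j hj ω
    rw [hg, walk]
    refine Finset.sum_congr rfl fun i hi => ?_
    have hik : i ∈ S := by
      rw [hS, Finset.mem_range]
      exact lt_of_lt_of_le (Finset.mem_range.1 hi) hj
    simp [hik]
  set h : (↥T → ℝ) → ℝ := fun v => ∑ i ∈ T.attach, v i with hh
  have hhmeas : Measurable h :=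
    Finset.measurable_sum _ fun i _ => measurable_pi_apply i
  have hhG : ∀ ω : Ω, h (fun i : ↥T => ξ i ω) = ∑ i ∈ T, ξ i ω := by
    intro ω
    rw [hh]
    exact Finset.sum_attach T (fun i => ξ i ω)
  set SA : Set (↥S → ℝ) := {v | x ≤ g k v} ∩ ⋂ j ∈ Finset.range k, {v | g j v < x} with hSA
  set SB : Set (↥T → ℝ) := {v | 0 ≤ h v} with hSB
  have hSAm : MeasurableSet SA :=
    (measurableSet_le measurable_const (hgmeas k)).inter
      (MeasurableSet.biInter (Finset.range k).countable_toSet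
        fun j _ => measurableSet_lt (hgmeas j) measurable_const)
  have hSBm : MeasurableSet SB := measurableSet_le measurable_const hhmeas
  have hApre : (fun a (i : ↥S) => ξ i a) ⁻¹' SA
      = {ω | x ≤ walk ξ k ω ∧ ∀ j < k, walk ξ j ω < x} := by
    ext ω
    simp only [hSA, Set.mem_preimage, Set.mem_inter_iff, Set.mem_setOf_eq, Set.mem_iInter,
      Finset.mem_range]
    constructor
    · rintro ⟨h1, h2⟩
      exact ⟨by rwa [hgF k le_rfl ω] at h1,
        fun j hj => by have := h2 j hj; rwa [hgF j hj.le ω] at this⟩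
    · rintro ⟨h1, h2⟩
      exact ⟨by rwa [hgF k le_rfl ω], fun j hj => by rw [hgF j hj.le ω]; exact h2 j hj⟩
  have hBpre : (fun a (i : ↥T) => ξ i a) ⁻¹' SB
      = {ω | 0 ≤ ∑ i ∈ Finset.Ico k n, ξ i ω} := by
    ext ω
    simp only [hSB, Set.mem_preimage, Set.mem_setOf_eq, hhG ω, hT]
  have := hIF.measure_inter_preimage_eq_mul SA SB hSAm hSBm
  rwa [hApre, hBpre] at this

/-- `max_{0 ≤ k ≤ n} S_k`. -/
def walkMax {Ω : Type*} (ξ : ℕ → Ω → ℝ) (n : ℕ) (ω : Ω) : ℝ :=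
  (Finset.range (n + 1)).sup' Finset.nonempty_range_add_one fun k => walk ξ k ω

/-- If `c := sup_{m ≥ 1} P(S_m < 0) < 1`, then for every `n ≥ 1` and
`x > 0`, `P(max_{0 ≤ k ≤ n} S_k ≥ x) ≤ (1/(1-c)) ⬝ P(S_n ≥ x)`. -/
theorem reflection_bound_of_sup_neg_lt_one
    {Ω : Type*} [MeasurableSpace Ω] (P : Measure Ω) [IsProbabilityMeasure P]
    (ξ : ℕ → Ω → ℝ) (hmeas : ∀ i, Measurable (ξ i))
    (hindep : iIndepFun ξ P)
    (hident : ∀ i, IdentDistrib (ξ i) (ξ 0) P P)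
    (c : ℝ)
    (hc_def : c = ⨆ m : ℕ, (P {ω | walk ξ (m + 1) ω < 0}).toReal)
    (hc : c < 1)
    (n : ℕ) (hn : 1 ≤ n) (x : ℝ) (hx : 0 < x) :
    (P {ω | x ≤ walkMax ξ n ω}).toReal
      ≤ (1 / (1 - c)) * (P {ω | x ≤ walk ξ n ω}).toReal := by
  classical
  have hwm : ∀ m, Measurable (walk ξ m) :=
    fun m => Finset.measurable_sum _ fun i _ => hmeas i
  set A : ℕ → Set Ω := fun k => {ω | x ≤ walk ξ k ω ∧ ∀ j < k, walk ξ j ω < x} with hA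
  set B : ℕ → Set Ω := fun k => {ω | 0 ≤ ∑ i ∈ Finset.Ico k n, ξ i ω} with hB
  have hAm : ∀ k, MeasurableSet (A k) := by
    intro k
    have hrw : A k = {ω | x ≤ walk ξ k ω} ∩ ⋂ j ∈ Finset.range k, {ω | walk ξ j ω < x} := by
      ext ω
      simp only [hA, Set.mem_setOf_eq, Set.mem_inter_iff, Set.mem_iInter, Finset.mem_range]
    rw [hrw]
    exact (measurableSet_le measurable_const (hwm k)).inter
      (MeasurableSet.biInter (Finset.range k).countable_toSet
        fun j _ => measurableSet_lt (hwm j) measurable_const)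
  have hBm : ∀ k, MeasurableSet (B k) :=
    fun k => measurableSet_le measurable_const (Finset.measurable_sum _ fun i _ => hmeas i)
  -- disjointness of the A k
  have hdisj : ∀ k l, k ≠ l → Disjoint (A k) (A l) := by
    have key : ∀ k l, k < l → Disjoint (A k) (A l) := by
      intro k l hkl
      rw [Set.disjoint_left]
      rintro ω ⟨h1, _⟩ ⟨_, h2⟩
      exact absurd h1 (not_le.2 (h2 k hkl))
    intro k l hkl
    rcases hkl.lt_or_gt with h | h
    · exact key k l h
    · exact (key l k h).symm
  -- the union of the A k over k ≤ n is the event on the max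
  have hunion : (⋃ k ∈ Finset.range (n + 1), A k) = {ω | x ≤ walkMax ξ n ω} := by
    ext ω
    simp only [Set.mem_iUnion, Finset.mem_range, Set.mem_setOf_eq, exists_prop]
    constructor
    · rintro ⟨k, hk, hk1, -⟩
      exact le_trans hk1 (Finset.le_sup' (fun k => walk ξ k ω) (Finset.mem_range.2 hk))
    · intro hω
      obtain ⟨k, hk, hke⟩ := Finset.exists_mem_eq_sup' Finset.nonempty_range_add_one
        (fun k => walk ξ k ω)
      have hQ : ∃ m, x ≤ walk ξ m ω := ⟨k, hke ▸ hω⟩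
      refine ⟨Nat.find hQ, ?_, Nat.find_spec hQ, fun j hj => ?_⟩
      · exact lt_of_le_of_lt (Nat.find_le (hke ▸ hω)) (Finset.mem_range.1 hk)
      · exact not_le.1 (Nat.find_min hQ hj)
  -- A k ∩ B k ⊆ {x ≤ S_n}
  have hsub : ∀ k, k ≤ n → A k ∩ B k ⊆ {ω | x ≤ walk ξ n ω} := by
    rintro k hk ω ⟨⟨h1, -⟩, h2⟩
    have : walk ξ n ω = walk ξ k ω + ∑ i ∈ Finset.Ico k n, ξ i ω :=
      (Finset.sum_range_add_sum_Ico _ hk).symm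
    rw [Set.mem_setOf_eq, this]
    linarith [Set.mem_setOf_eq ▸ h2]
  -- bounds involving c
  have hbdd : BddAbove (Set.range fun m : ℕ => (P {ω | walk ξ (m + 1) ω < 0}).toReal) := by
    refine ⟨1, ?_⟩
    rintro y ⟨m, rfl⟩
    exact ENNReal.toReal_le_of_le_ofReal zero_le_one (by simpa using prob_le_one)
  have hc0 : 0 ≤ c :=
    le_trans ENNReal.toReal_nonneg (hc_def ▸ le_ciSup hbdd 0)
  have hBbound : ∀ k, k ≤ n → 1 - c ≤ (P (B k)).toReal := by
    intro k hk
    rcases eq_or_lt_of_le hk with rfl | hkn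
    · have : B k = Set.univ := by
        ext ω; simp [hB]
      rw [this]
      simp only [measure_univ, ENNReal.toReal_one]
      linarith
    · set m := n - k - 1 with hm
      have hnm : k + (m + 1) = n := by omega
      have hid : IdentDistrib (fun ω => ∑ i ∈ Finset.Ico k n, ξ i ω) (walk ξ (m + 1)) P P := by
        have := aux_sum_Ico hmeas hindep hident k (m + 1)
        rwa [hnm] at this
      have hneg : P {ω | (∑ i ∈ Finset.Ico k n, ξ i ω) < 0} = P {ω | walk ξ (m + 1) ω < 0} :=
        hid.measure_mem_eq (s := Set.Iio 0) measurableSet_Iio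
      have hle : (P {ω | (∑ i ∈ Finset.Ico k n, ξ i ω) < 0}).toReal ≤ c := by
        rw [hneg, hc_def]
        exact le_ciSup hbdd m
      have hcompl : B k = {ω | (∑ i ∈ Finset.Ico k n, ξ i ω) < 0}ᶜ := by
        ext ω; simp [hB, not_lt]
      have hmeasneg : MeasurableSet {ω | (∑ i ∈ Finset.Ico k n, ξ i ω) < 0} :=
        measurableSet_lt (Finset.measurable_sum _ fun i _ => hmeas i) measurable_const
      rw [hcompl, prob_compl_eq_one_sub hmeasneg,
        ENNReal.toReal_sub_of_le prob_le_one ENNReal.one_ne_top, ENNReal.toReal_one]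
      linarith
  -- main computation
  have hABm : ∀ k, MeasurableSet (A k ∩ B k) := fun k => (hAm k).inter (hBm k)
  have hPmax : (P {ω | x ≤ walkMax ξ n ω}).toReal
      = ∑ k ∈ Finset.range (n + 1), (P (A k)).toReal := by
    rw [← hunion, measure_biUnion_finset ?_ (fun k _ => hAm k),
      ENNReal.toReal_sum (fun k _ => measure_ne_top P (A k))]
    intro k _ l _ hkl
    exact hdisj k l hkl
  have hPn : ∑ k ∈ Finset.range (n + 1), (P (A k ∩ B k)).toReal
      ≤ (P {ω | x ≤ walk ξ n ω}).toReal := by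
    rw [← ENNReal.toReal_sum (fun k _ => measure_ne_top P _),
      ← measure_biUnion_finset ?_ (fun k _ => hABm k)]
    · refine ENNReal.toReal_mono (measure_ne_top P _) (measure_mono ?_)
      refine Set.iUnion₂_subset fun k hk => ?_
      exact hsub k (Nat.lt_succ_iff.1 (Finset.mem_range.1 hk))
    · intro k _ l _ hkl
      exact (hdisj k l hkl).mono Set.inter_subset_left Set.inter_subset_left
  have hstep : ∀ k ∈ Finset.range (n + 1),
      (1 - c) * (P (A k)).toReal ≤ (P (A k ∩ B k)).toReal := by
    intro k hk
    have hkn : k ≤ n := Nat.lt_succ_iff.1 (Finset.mem_range.1 hk)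
    have hid := aux_indep_event hmeas hindep k n x
    have : (P (A k ∩ B k)).toReal = (P (A k)).toReal * (P (B k)).toReal := by
      rw [hA, hB] at *
      rw [hid, ENNReal.toReal_mul]
    rw [this, mul_comm (1 - c)]
    exact mul_le_mul_of_nonneg_left (hBbound k hkn) ENNReal.toReal_nonneg
  have hchain : (1 - c) * (P {ω | x ≤ walkMax ξ n ω}).toReal
      ≤ (P {ω | x ≤ walk ξ n ω}).toReal := by
    rw [hPmax, Finset.mul_sum]
    exact le_trans (Finset.sum_le_sum hstep) hPn
  have h1c : 0 < 1 - c := by linarith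
  rw [div_mul_eq_mul_div, one_mul, le_div_iff₀ h1c]
  linarith
end
end

section
/- For every real x > 0, every real b with 0 < b < 1, and all integers m ≥ 0 and n ≥ 0: P(V^#_n ≤ x and max_{0≤k≤n} S_k ≤ b·x) ≥ P(V^#_m ≤ b·x and min_{0≤k≤m} S_k ≤ (b−1)·x) · P(V^#_n ≤ x). -/
open MeasureTheory ProbabilityTheory Filter

noncomputable section

/-- `min_{0 ≤ k ≤ n} S_k`. -/
def walkMin {Ω : Type*} (ξ : ℕ → Ω → ℝ) (n : ℕ) (ω : Ω) : ℝ :=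
  (Finset.range (n + 1)).inf' Finset.nonempty_range_add_one fun k => walk ξ k ω

/-- `V^#_n = max_{0 ≤ u ≤ v ≤ n} (S_v - S_u)`, the supremum of the reflected walk. -/
def reflMax {Ω : Type*} (ξ : ℕ → Ω → ℝ) (n : ℕ) (ω : Ω) : ℝ :=
  (Finset.range (n + 1)).sup' Finset.nonempty_range_add_one fun v =>
    (Finset.range (v + 1)).sup' Finset.nonempty_range_add_one fun u =>
      walk ξ v ω - walk ξ u ω

set_option linter.unusedSectionVars false
set_option linter.unusedVariables false

namespace RWAux

variable {Ω : Type*}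

lemma walk_zero (ξ : ℕ → Ω → ℝ) (ω : Ω) : walk ξ 0 ω = 0 := by simp [walk]

lemma walk_add (ξ : ℕ → Ω → ℝ) (k j : ℕ) (ω : Ω) :
    walk ξ (k + j) ω = walk ξ k ω + walk (fun i => ξ (k + i)) j ω := by
  unfold walk
  rw [← Finset.sum_range_add_sum_Ico (fun i => ξ i ω) (Nat.le_add_right k j),
    Finset.sum_Ico_eq_sum_range]
  simp

lemma reflMax_le_iff {ξ : ℕ → Ω → ℝ} {n : ℕ} {ω : Ω} {y : ℝ} :
    reflMax ξ n ω ≤ y ↔ ∀ v ≤ n, ∀ u ≤ v, walk ξ v ω - walk ξ u ω ≤ y := by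
  simp [reflMax, Finset.sup'_le_iff, Nat.lt_succ_iff]

lemma walkMax_le_iff {ξ : ℕ → Ω → ℝ} {n : ℕ} {ω : Ω} {y : ℝ} :
    walkMax ξ n ω ≤ y ↔ ∀ v ≤ n, walk ξ v ω ≤ y := by
  simp [walkMax, Finset.sup'_le_iff, Nat.lt_succ_iff]

lemma walkMin_le_iff {ξ : ℕ → Ω → ℝ} {n : ℕ} {ω : Ω} {y : ℝ} :
    walkMin ξ n ω ≤ y ↔ ∃ v ≤ n, walk ξ v ω ≤ y := by
  simp [walkMin, Finset.inf'_le_iff, Nat.lt_succ_iff]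

lemma measurable_walk (ξ : ℕ → Ω → ℝ) [MeasurableSpace Ω] (hmeas : ∀ i, Measurable (ξ i))
    (u : ℕ) : Measurable (walk ξ u) :=
  Finset.measurable_sum _ fun i _ => hmeas i

lemma measurable_reflMax (ξ : ℕ → Ω → ℝ) [MeasurableSpace Ω] (hmeas : ∀ i, Measurable (ξ i))
    (n : ℕ) : Measurable (reflMax ξ n) := by
  have he : reflMax ξ n = (Finset.range (n + 1)).sup' Finset.nonempty_range_add_one fun v =>
      (Finset.range (v + 1)).sup' Finset.nonempty_range_add_one fun u ω =>
        walk ξ v ω - walk ξ u ω := by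
    funext ω; simp [reflMax, Finset.sup'_apply]
  rw [he]
  exact Finset.measurable_sup' _ fun v _ => Finset.measurable_sup' _ fun u _ =>
    (measurable_walk ξ hmeas v).sub (measurable_walk ξ hmeas u)

lemma filter_range_lt {v n : ℕ} (h : v ≤ n) :
    (Finset.range n).filter (fun j => j < v) = Finset.range v := by
  ext j; simp only [Finset.mem_filter, Finset.mem_range]; omega


/-- Event: first passage below `c` happens exactly at time `k`, with reflected max `≤ y`. -/
def Ek (ξ : ℕ → Ω → ℝ) (c y : ℝ) (k : ℕ) : Set Ω :=
  {ω | reflMax ξ k ω ≤ y ∧ walk ξ k ω ≤ c ∧ ∀ u < k, c < walk ξ u ω}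

/-- Event: the reflected max of the shifted walk (steps `ξ k, ξ (k+1), …`) up to `n` is `≤ x`. -/
def Fk (ξ : ℕ → Ω → ℝ) (x : ℝ) (n k : ℕ) : Set Ω :=
  {ω | reflMax (fun i => ξ (k + i)) n ω ≤ x}

lemma incl {ξ : ℕ → Ω → ℝ} {x b : ℝ} (hx : 0 < x) (hb1 : b ≤ 1) (k n : ℕ) :
    Ek ξ ((b - 1) * x) (b * x) k ∩ Fk ξ x n k ⊆
      {ω | reflMax ξ n ω ≤ x ∧ walkMax ξ n ω ≤ b * x} := by
  rintro ω ⟨⟨hE1, hE2, hE3⟩, hF⟩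
  have hbx : b * x ≤ x := by nlinarith
  have hEpair := reflMax_le_iff.mp hE1
  have hTpair := reflMax_le_iff.mp hF
  have hT : ∀ j ≤ n, walk (fun i => ξ (k + i)) j ω ≤ x := by
    intro j hj
    have := hTpair j hj 0 (Nat.zero_le _)
    simpa [walk_zero] using this
  have hM : ∀ v ≤ k + n, walk ξ v ω ≤ b * x := by
    intro v hv
    rcases le_or_gt v k with h | h
    · have := hEpair v h 0 (Nat.zero_le _)
      simpa [walk_zero] using this
    · obtain ⟨j, rfl⟩ : ∃ j, v = k + j := ⟨v - k, by omega⟩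
      have hj : j ≤ n := by omega
      rw [walk_add]
      have := hT j hj
      nlinarith [hE2]
  have hV : ∀ v ≤ k + n, ∀ u ≤ v, walk ξ v ω - walk ξ u ω ≤ x := by
    intro v hv u hu
    rcases le_or_gt v k with h | h
    · exact le_trans (hEpair v h u hu) hbx
    · obtain ⟨j, rfl⟩ : ∃ j, v = k + j := ⟨v - k, by omega⟩
      have hj : j ≤ n := by omega
      rcases le_or_gt k u with h2 | h2
      · obtain ⟨i, rfl⟩ : ∃ i, u = k + i := ⟨u - k, by omega⟩
        rw [walk_add ξ k j, walk_add ξ k i]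
        have := hTpair j hj i (by omega)
        linarith
      · have h3 := hE3 u h2
        rw [walk_add]
        have := hT j hj
        linarith [hE2]
  exact ⟨reflMax_le_iff.mpr fun v hv u hu => hV v (by omega) u hu,
    walkMax_le_iff.mpr fun v hv => hM v (by omega)⟩

lemma cover {ξ : ℕ → Ω → ℝ} {c y : ℝ} (m : ℕ) :
    {ω | reflMax ξ m ω ≤ y ∧ walkMin ξ m ω ≤ c} ⊆
      ⋃ k ∈ Finset.range (m + 1), Ek ξ c y k := by
  rintro ω ⟨h1, h2⟩
  obtain ⟨v, hv, hvc⟩ := walkMin_le_iff.mp h2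
  have hex : ∃ u, walk ξ u ω ≤ c := ⟨v, hvc⟩
  have hkv : Nat.find hex ≤ v := Nat.find_min' hex hvc
  simp only [Set.mem_iUnion, Finset.mem_range]
  refine ⟨Nat.find hex, by omega, ?_, Nat.find_spec hex, fun u hu => ?_⟩
  · exact reflMax_le_iff.mpr fun v' hv' u hu =>
      reflMax_le_iff.mp h1 v' (by omega) u hu
  · exact lt_of_not_ge (Nat.find_min hex hu)

lemma Ek_disjoint {ξ : ℕ → Ω → ℝ} {c y : ℝ} {k l : ℕ} (hkl : k ≠ l) :
    Disjoint (Ek ξ c y k) (Ek ξ c y l) := by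
  rw [Set.disjoint_left]
  rintro ω ⟨_, hk2, hk3⟩ ⟨_, hl2, hl3⟩
  rcases Nat.lt_or_ge k l with h | h
  · exact absurd hk2 (not_le.mpr (hl3 k h))
  · exact absurd hl2 (not_le.mpr (hk3 l (by omega)))


section Tuples

def WX (n : ℕ) (g : Fin n → ℝ) (v : ℕ) : ℝ := ∑ i : Fin n, if (i : ℕ) < v then g i else 0

lemma WX_walk {ξ : ℕ → Ω → ℝ} (k n : ℕ) (ω : Ω) {v : ℕ} (hv : v ≤ n) :
    WX n (fun i : Fin n => ξ (k + i) ω) v = walk (fun i => ξ (k + i)) v ω := by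
  unfold WX walk
  rw [Fin.sum_univ_eq_sum_range (fun j => if j < v then ξ (k + j) ω else 0) n,
    ← Finset.sum_filter, filter_range_lt hv]

lemma measurable_WX (n v : ℕ) : Measurable fun g : Fin n → ℝ => WX n g v := by
  apply Finset.measurable_sum
  intro i _
  split_ifs
  · exact measurable_pi_apply i
  · exact measurable_const

def setX (n : ℕ) (x : ℝ) : Set (Fin n → ℝ) := {g | ∀ v ≤ n, ∀ u ≤ v, WX n g v - WX n g u ≤ x}

lemma measurable_setX (n : ℕ) (x : ℝ) : MeasurableSet (setX n x) := by
  have h : setX n x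
      = ⋂ (v : ℕ) (_ : v ≤ n) (u : ℕ) (_ : u ≤ v), {g | WX n g v - WX n g u ≤ x} := by
    ext g; simp [setX]
  rw [h]
  exact MeasurableSet.iInter fun v => MeasurableSet.iInter fun _ =>
    MeasurableSet.iInter fun u => MeasurableSet.iInter fun _ =>
      measurableSet_le ((measurable_WX n v).sub (measurable_WX n u)) measurable_const

lemma Fk_eq_preimage (ξ : ℕ → Ω → ℝ) (x : ℝ) (n k : ℕ) :
    Fk ξ x n k = (fun ω (i : Fin n) => ξ (k + i) ω) ⁻¹' setX n x := by
  ext ω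
  simp only [Fk, Set.mem_preimage, setX, Set.mem_setOf_eq, reflMax_le_iff]
  constructor
  · intro h v hv u hu
    rw [WX_walk k n ω hv, WX_walk k n ω (le_trans hu hv)]
    exact h v hv u hu
  · intro h v hv u hu
    have := h v hv u hu
    rwa [WX_walk k n ω hv, WX_walk k n ω (le_trans hu hv)] at this

end Tuples

section MeasureLemmas

variable [MeasurableSpace Ω] {P : Measure Ω} [IsProbabilityMeasure P]
  {ξ : ℕ → Ω → ℝ}

lemma map_tuple (hmeas : ∀ i, Measurable (ξ i))
    (hindep : iIndepFun ξ P)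
    (hident : ∀ i, IdentDistrib (ξ i) (ξ 0) P P) (k n : ℕ) :
    Measure.map (fun ω (i : Fin n) => ξ (k + i) ω) P
      = Measure.pi fun _ : Fin n => Measure.map (ξ 0) P := by
  have hprob : IsProbabilityMeasure (Measure.map (ξ 0) P) :=
    Measure.isProbabilityMeasure_map (hmeas 0).aemeasurable
  have hX : Measurable fun ω (i : Fin n) => ξ (k + i) ω :=
    measurable_pi_lambda _ fun i => hmeas _
  refine (Measure.pi_eq fun s hs => ?_).symm
  classical
  set s' : ℕ → Set ℝ := fun j => if h : j < n then s ⟨j, h⟩ else Set.univ with hs'def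
  have hs'meas : ∀ j, MeasurableSet (s' j) := by
    intro j
    by_cases h : j < n
    · simpa [hs'def, h] using hs ⟨j, h⟩
    · simp [hs'def, h]
  have hset : (fun ω (i : Fin n) => ξ (k + i) ω) ⁻¹' Set.pi Set.univ s
      = ⋂ j ∈ Finset.range n, ξ (k + j) ⁻¹' s' j := by
    ext ω
    simp only [Set.mem_preimage, Set.mem_pi, Set.mem_univ, true_implies, Set.mem_iInter,
      Finset.mem_range]
    constructor
    · intro h j hj
      simpa [hs'def, hj] using h ⟨j, hj⟩
    · intro h i
      have := h i i.isLt
      simpa [hs'def, i.isLt] using this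
  have himg : ⋂ j ∈ Finset.range n, ξ (k + j) ⁻¹' s' j
      = ⋂ i ∈ Finset.image (fun j => k + j) (Finset.range n), ξ i ⁻¹' s' (i - k) := by
    ext ω
    simp only [Set.mem_iInter, Finset.mem_image, Finset.mem_range, Set.mem_preimage]
    constructor
    · rintro h i ⟨j, hj, rfl⟩
      simpa using h j hj
    · intro h j hj
      have := h (k + j) ⟨j, hj, rfl⟩
      simpa using this
  have hbiInter := hindep.meas_biInter
    (S := Finset.image (fun j => k + j) (Finset.range n))
    (s := fun i => ξ i ⁻¹' s' (i - k))
    (fun i _ => ⟨s' (i - k), hs'meas _, rfl⟩)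
  have hprod : ∏ i ∈ Finset.image (fun j => k + j) (Finset.range n), P (ξ i ⁻¹' s' (i - k))
      = ∏ j ∈ Finset.range n, P (ξ (k + j) ⁻¹' s' j) := by
    rw [Finset.prod_image (fun a _ b _ h => by omega)]
    exact Finset.prod_congr rfl fun j _ => by simp
  have hone : ∀ j, P (ξ (k + j) ⁻¹' s' j) = Measure.map (ξ 0) P (s' j) := by
    intro j
    rw [← (hident (k + j)).map_eq, Measure.map_apply (hmeas _) (hs'meas j)]
  rw [Measure.map_apply hX (MeasurableSet.univ_pi hs), hset, himg, hbiInter, hprod]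
  calc ∏ j ∈ Finset.range n, P (ξ (k + j) ⁻¹' s' j)
      = ∏ j ∈ Finset.range n, Measure.map (ξ 0) P (s' j) :=
        Finset.prod_congr rfl fun j _ => hone j
    _ = ∏ i : Fin n, Measure.map (ξ 0) P (s' i) :=
        (Fin.prod_univ_eq_prod_range (fun j => Measure.map (ξ 0) P (s' j)) n).symm
    _ = ∏ i : Fin n, Measure.map (ξ 0) P (s i) :=
        Finset.prod_congr rfl fun i _ => by simp [hs'def, i.isLt]

lemma PFk_eq (hmeas : ∀ i, Measurable (ξ i))
    (hindep : iIndepFun ξ P)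
    (hident : ∀ i, IdentDistrib (ξ i) (ξ 0) P P) (x : ℝ) (n k : ℕ) :
    P (Fk ξ x n k) = P {ω | reflMax ξ n ω ≤ x} := by
  have hXk : Measurable fun ω (i : Fin n) => ξ (k + i) ω :=
    measurable_pi_lambda _ fun i => hmeas _
  have hX0 : Measurable fun ω (i : Fin n) => ξ (0 + i) ω :=
    measurable_pi_lambda _ fun i => hmeas _
  have h0 : {ω | reflMax ξ n ω ≤ x} = Fk ξ x n 0 := by
    have he : (fun i => ξ (0 + i)) = ξ := by funext i; simp
    simp [Fk, he]
  rw [h0, Fk_eq_preimage, Fk_eq_preimage,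
    ← Measure.map_apply hXk (measurable_setX n x),
    ← Measure.map_apply hX0 (measurable_setX n x),
    map_tuple hmeas hindep hident k n, map_tuple hmeas hindep hident 0 n]

end MeasureLemmas

section WS

def WS (A : Finset ℕ) (g : (i : ↥A) → ℝ) (v : ℕ) : ℝ :=
  ∑ i ∈ A.attach, if (i : ℕ) < v then g i else 0

lemma measurable_WS (A : Finset ℕ) (v : ℕ) : Measurable fun g : (i : ↥A) → ℝ => WS A g v := by
  apply Finset.measurable_sum
  intro i _
  split_ifs
  · exact measurable_pi_apply i
  · exact measurable_const

lemma WS_walk_range {ξ : ℕ → Ω → ℝ} (ω : Ω) {k v : ℕ} (hv : v ≤ k) :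
    WS (Finset.range k) (fun i => ξ (i : ℕ) ω) v = walk ξ v ω := by
  unfold WS walk
  rw [Finset.sum_attach (Finset.range k) (fun i => if i < v then ξ i ω else 0),
    ← Finset.sum_filter, filter_range_lt hv]

lemma WS_walk_Ico {ξ : ℕ → Ω → ℝ} (ω : Ω) {k n v : ℕ} (hv : v ≤ n) :
    WS (Finset.Ico k (k + n)) (fun i => ξ (i : ℕ) ω) (k + v)
      = walk (fun i => ξ (k + i)) v ω := by
  unfold WS walk
  rw [Finset.sum_attach (Finset.Ico k (k + n)) (fun i => if i < k + v then ξ i ω else 0),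
    ← Finset.sum_filter]
  have hfil : (Finset.Ico k (k + n)).filter (fun i => i < k + v) = Finset.Ico k (k + v) := by
    ext j; simp only [Finset.mem_filter, Finset.mem_Ico]; omega
  rw [hfil, Finset.sum_Ico_eq_sum_range]
  simp

end WS

section Indep

variable [MeasurableSpace Ω] {P : Measure Ω} [IsProbabilityMeasure P] {ξ : ℕ → Ω → ℝ}

lemma PEk_inter_Fk (hmeas : ∀ i, Measurable (ξ i))
    (hindep : iIndepFun ξ P)
    (c y x : ℝ) (n k : ℕ) :
    P (Ek ξ c y k ∩ Fk ξ x n k) = P (Ek ξ c y k) * P (Fk ξ x n k) := by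
  classical
  set S : Finset ℕ := Finset.range k with hS
  set T : Finset ℕ := Finset.Ico k (k + n) with hT
  have hST : Disjoint S T := by
    rw [Finset.disjoint_left]
    intro a haS haT
    rw [hS, Finset.mem_range] at haS
    rw [hT, Finset.mem_Ico] at haT
    omega
  have hIF := hindep.indepFun_finset S T hST hmeas
  set setE : Set ((i : ↥S) → ℝ) :=
    {g | (∀ v ≤ k, ∀ u ≤ v, WS S g v - WS S g u ≤ y) ∧ WS S g k ≤ c ∧
      ∀ u < k, c < WS S g u} with hsetE
  set setT : Set ((i : ↥T) → ℝ) :=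
    {g | ∀ v ≤ n, ∀ u ≤ v, WS T g (k + v) - WS T g (k + u) ≤ x} with hsetT
  have hmE : MeasurableSet setE := by
    rw [hsetE]
    have h1 : MeasurableSet {g : (i : ↥S) → ℝ | ∀ v ≤ k, ∀ u ≤ v, WS S g v - WS S g u ≤ y} := by
      have : {g : (i : ↥S) → ℝ | ∀ v ≤ k, ∀ u ≤ v, WS S g v - WS S g u ≤ y}
          = ⋂ (v : ℕ) (_ : v ≤ k) (u : ℕ) (_ : u ≤ v), {g | WS S g v - WS S g u ≤ y} := by
        ext g; simp
      rw [this]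
      exact MeasurableSet.iInter fun v => MeasurableSet.iInter fun _ =>
        MeasurableSet.iInter fun u => MeasurableSet.iInter fun _ =>
          measurableSet_le ((measurable_WS S v).sub (measurable_WS S u)) measurable_const
    have h2 : MeasurableSet {g : (i : ↥S) → ℝ | WS S g k ≤ c} :=
      measurableSet_le (measurable_WS S k) measurable_const
    have h3 : MeasurableSet {g : (i : ↥S) → ℝ | ∀ u < k, c < WS S g u} := by
      have : {g : (i : ↥S) → ℝ | ∀ u < k, c < WS S g u}
          = ⋂ (u : ℕ) (_ : u < k), {g | c < WS S g u} := by
        ext g; simp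
      rw [this]
      exact MeasurableSet.iInter fun u => MeasurableSet.iInter fun _ =>
        measurableSet_lt measurable_const (measurable_WS S u)
    exact (h1.inter (h2.inter h3))
  have hmT : MeasurableSet setT := by
    rw [hsetT]
    have : {g : (i : ↥T) → ℝ | ∀ v ≤ n, ∀ u ≤ v, WS T g (k + v) - WS T g (k + u) ≤ x}
        = ⋂ (v : ℕ) (_ : v ≤ n) (u : ℕ) (_ : u ≤ v),
            {g | WS T g (k + v) - WS T g (k + u) ≤ x} := by
      ext g; simp
    rw [this]
    exact MeasurableSet.iInter fun v => MeasurableSet.iInter fun _ =>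
      MeasurableSet.iInter fun u => MeasurableSet.iInter fun _ =>
        measurableSet_le ((measurable_WS T _).sub (measurable_WS T _)) measurable_const
  have hEk : Ek ξ c y k = (fun ω (i : ↥S) => ξ (i : ℕ) ω) ⁻¹' setE := by
    ext ω
    simp only [Ek, Set.mem_setOf_eq, Set.mem_preimage, hsetE, reflMax_le_iff]
    constructor
    · rintro ⟨h1, h2, h3⟩
      refine ⟨fun v hv u hu => ?_, ?_, fun u hu => ?_⟩
      · rw [WS_walk_range ω hv, WS_walk_range ω (le_trans hu hv)]; exact h1 v hv u hu
      · rw [WS_walk_range ω le_rfl]; exact h2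
      · rw [WS_walk_range ω (le_of_lt hu)]; exact h3 u hu
    · rintro ⟨h1, h2, h3⟩
      refine ⟨fun v hv u hu => ?_, ?_, fun u hu => ?_⟩
      · have := h1 v hv u hu
        rwa [WS_walk_range ω hv, WS_walk_range ω (le_trans hu hv)] at this
      · have := h2; rwa [WS_walk_range ω le_rfl] at this
      · have := h3 u hu; rwa [WS_walk_range ω (le_of_lt hu)] at this
  have hFk : Fk ξ x n k = (fun ω (i : ↥T) => ξ (i : ℕ) ω) ⁻¹' setT := by
    ext ω
    simp only [Fk, Set.mem_setOf_eq, Set.mem_preimage, hsetT, reflMax_le_iff]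
    constructor
    · intro h v hv u hu
      rw [WS_walk_Ico ω hv, WS_walk_Ico ω (le_trans hu hv)]
      exact h v hv u hu
    · intro h v hv u hu
      have := h v hv u hu
      rwa [WS_walk_Ico ω hv, WS_walk_Ico ω (le_trans hu hv)] at this
  rw [hEk, hFk]
  exact hIF.measure_inter_preimage_eq_mul setE setT hmE hmT

end Indep

end RWAux

/-- For every `x > 0`, `0 < b < 1` and integers `m, n ≥ 0`:
`P(V^#_n ≤ x, max_{0≤k≤n} S_k ≤ b·x)
  ≥ P(V^#_m ≤ b·x, min_{0≤k≤m} S_k ≤ (b-1)·x) ⬝ P(V^#_n ≤ x)`. -/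
theorem reflMax_with_max_constraint_lower_bound
    {Ω : Type*} [MeasurableSpace Ω] (P : Measure Ω) [IsProbabilityMeasure P]
    (ξ : ℕ → Ω → ℝ) (hmeas : ∀ i, Measurable (ξ i))
    (hindep : iIndepFun ξ P)
    (hident : ∀ i, IdentDistrib (ξ i) (ξ 0) P P)
    (x b : ℝ) (hx : 0 < x) (hb0 : 0 < b) (hb1 : b < 1) (m n : ℕ) :
    (P {ω | reflMax ξ m ω ≤ b * x ∧ walkMin ξ m ω ≤ (b - 1) * x}).toReal
        * (P {ω | reflMax ξ n ω ≤ x}).toReal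
      ≤ (P {ω | reflMax ξ n ω ≤ x ∧ walkMax ξ n ω ≤ b * x}).toReal := by
  classical
  set c : ℝ := (b - 1) * x with hc
  set y : ℝ := b * x with hy
  suffices h : P {ω | reflMax ξ m ω ≤ y ∧ walkMin ξ m ω ≤ c} * P {ω | reflMax ξ n ω ≤ x}
      ≤ P {ω | reflMax ξ n ω ≤ x ∧ walkMax ξ n ω ≤ y} by
    calc (P {ω | reflMax ξ m ω ≤ y ∧ walkMin ξ m ω ≤ c}).toReal
          * (P {ω | reflMax ξ n ω ≤ x}).toReal
        = (P {ω | reflMax ξ m ω ≤ y ∧ walkMin ξ m ω ≤ c}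
            * P {ω | reflMax ξ n ω ≤ x}).toReal := (ENNReal.toReal_mul).symm
      _ ≤ _ := ENNReal.toReal_mono (measure_ne_top P _) h
  have hmeasEk : ∀ k, MeasurableSet (RWAux.Ek ξ c y k) := by
    intro k
    have he : RWAux.Ek ξ c y k = {ω | reflMax ξ k ω ≤ y} ∩ ({ω | walk ξ k ω ≤ c}
        ∩ ⋂ (u : ℕ) (_ : u < k), {ω | c < walk ξ u ω}) := by
      ext ω; simp [RWAux.Ek]
    rw [he]
    exact (measurableSet_le (RWAux.measurable_reflMax ξ hmeas k) measurable_const).inter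
      ((measurableSet_le (RWAux.measurable_walk ξ hmeas k) measurable_const).inter
        (MeasurableSet.iInter fun u => MeasurableSet.iInter fun _ =>
          measurableSet_lt measurable_const (RWAux.measurable_walk ξ hmeas u)))
  have hmeasFk : ∀ k, MeasurableSet (RWAux.Fk ξ x n k) := fun k =>
    measurableSet_le (RWAux.measurable_reflMax _ (fun i => hmeas (k + i)) n) measurable_const
  set G : ℕ → Set Ω := fun k => RWAux.Ek ξ c y k ∩ RWAux.Fk ξ x n k with hG
  have h1 : P {ω | reflMax ξ m ω ≤ y ∧ walkMin ξ m ω ≤ c}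
      ≤ ∑ k ∈ Finset.range (m + 1), P (RWAux.Ek ξ c y k) :=
    le_trans (measure_mono (RWAux.cover m)) (measure_biUnion_finset_le _ _)
  have h2 : ∀ k, P (G k) = P (RWAux.Ek ξ c y k) * P {ω | reflMax ξ n ω ≤ x} := fun k => by
    rw [hG]
    dsimp only
    rw [RWAux.PEk_inter_Fk hmeas hindep c y x n k, RWAux.PFk_eq hmeas hindep hident x n k]
  have h3 : P {ω | reflMax ξ m ω ≤ y ∧ walkMin ξ m ω ≤ c} * P {ω | reflMax ξ n ω ≤ x}
      ≤ ∑ k ∈ Finset.range (m + 1), P (G k) := by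
    calc P {ω | reflMax ξ m ω ≤ y ∧ walkMin ξ m ω ≤ c} * P {ω | reflMax ξ n ω ≤ x}
        ≤ (∑ k ∈ Finset.range (m + 1), P (RWAux.Ek ξ c y k)) * P {ω | reflMax ξ n ω ≤ x} :=
          mul_le_mul_left h1 _
      _ = ∑ k ∈ Finset.range (m + 1), P (RWAux.Ek ξ c y k) * P {ω | reflMax ξ n ω ≤ x} :=
          Finset.sum_mul _ _ _
      _ = ∑ k ∈ Finset.range (m + 1), P (G k) :=
          Finset.sum_congr rfl fun k _ => (h2 k).symm
  have h4 : ∑ k ∈ Finset.range (m + 1), P (G k) = P (⋃ k ∈ Finset.range (m + 1), G k) := by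
    rw [measure_biUnion_finset (fun k _ l _ hkl =>
        Disjoint.mono Set.inter_subset_left Set.inter_subset_left (RWAux.Ek_disjoint hkl))
      (fun k _ => (hmeasEk k).inter (hmeasFk k))]
  have h5 : P (⋃ k ∈ Finset.range (m + 1), G k)
      ≤ P {ω | reflMax ξ n ω ≤ x ∧ walkMax ξ n ω ≤ y} :=
    measure_mono (Set.iUnion₂_subset fun k _ => RWAux.incl hx (le_of_lt hb1) k n)
  exact le_trans h3 (le_trans (le_of_eq h4) h5)
end
end

section
/- For every real x ≥ 0 and all integers m ≥ 0, n ≥ 0: P(V^#_{m+n+2} ≤ x) ≥ P(ξ₁ ≤ 0)² · P(V^#_m ≤ x and S_m − min_{0≤k≤m} S_k ≤ x/2) · P(V^#_n ≤ x and max_{0≤k≤n} S_k ≤ x/2). -/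
open MeasureTheory ProbabilityTheory Filter

noncomputable section

namespace RMS
variable {Ω : Type*}

variable {Ω : Type*}

lemma reflMax_le_iff {ξ : ℕ → Ω → ℝ} {n : ℕ} {ω : Ω} {x : ℝ} :
    reflMax ξ n ω ≤ x ↔ ∀ v ≤ n, ∀ u ≤ v, walk ξ v ω - walk ξ u ω ≤ x := by
  simp [reflMax, Finset.sup'_le_iff, Finset.mem_range, Nat.lt_succ_iff]

lemma walkMax_le_iff {ξ : ℕ → Ω → ℝ} {n : ℕ} {ω : Ω} {y : ℝ} :
    walkMax ξ n ω ≤ y ↔ ∀ k ≤ n, walk ξ k ω ≤ y := by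
  simp [walkMax, Finset.sup'_le_iff, Finset.mem_range, Nat.lt_succ_iff]

lemma sub_walkMin_le_iff {ξ : ℕ → Ω → ℝ} {m : ℕ} {ω : Ω} {y : ℝ} :
    walk ξ m ω - walkMin ξ m ω ≤ y ↔ ∀ k ≤ m, walk ξ m ω - walk ξ k ω ≤ y := by
  constructor
  · intro h k hk
    have h2 : walkMin ξ m ω ≤ walk ξ k ω :=
      Finset.inf'_le _ (by simp [Finset.mem_range, Nat.lt_succ_iff, hk])
    linarith
  · intro h
    have h2 : walk ξ m ω - y ≤ walkMin ξ m ω := by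
      apply Finset.le_inf'
      intro k hk
      have := h k (Nat.lt_succ_iff.mp (Finset.mem_range.mp hk))
      linarith
    linarith

lemma walk_add (ξ : ℕ → Ω → ℝ) (c v : ℕ) (ω : Ω) :
    walk ξ (c + v) ω = walk ξ c ω + walk (fun i => ξ (c + i)) v ω := by
  induction v with
  | zero => simp [walk]
  | succ v ih =>
      have h2 : c + (v + 1) = (c + v) + 1 := by omega
      rw [h2]
      simp only [walk, Finset.sum_range_succ] at *
      rw [ih]; ring

variable {Ω : Type*}

/-- partial sums of the first `min k n` coordinates of `y : Fin n → ℝ`. -/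
def pwalk (n k : ℕ) (y : Fin n → ℝ) : ℝ :=
  ∑ i ∈ Finset.range k, if h : i < n then y ⟨i, h⟩ else 0

lemma measurable_pwalk (n k : ℕ) : Measurable (pwalk n k) := by
  apply Finset.measurable_sum
  intro i _
  by_cases h : i < n
  · simpa [h] using measurable_pi_apply (⟨i, h⟩ : Fin n)
  · simp [h]

/-- the block map `ω ↦ (ξ c, …, ξ (c+n-1))`. -/
def bl (ξ : ℕ → Ω → ℝ) (c n : ℕ) (ω : Ω) : Fin n → ℝ := fun i => ξ (c + i) ω

lemma measurable_bl [MeasurableSpace Ω] {ξ : ℕ → Ω → ℝ} (hmeas : ∀ i, Measurable (ξ i))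
    (c n : ℕ) : Measurable (bl ξ c n) :=
  measurable_pi_lambda _ fun _ => hmeas _

lemma pwalk_bl (ξ : ℕ → Ω → ℝ) (c n k : ℕ) (hk : k ≤ n) (ω : Ω) :
    pwalk n k (bl ξ c n ω) = walk (fun i => ξ (c + i)) k ω := by
  unfold pwalk walk bl
  apply Finset.sum_congr rfl
  intro i hi
  have hin : i < n := lt_of_lt_of_le (Finset.mem_range.mp hi) hk
  simp [hin]

def VA (m : ℕ) (x : ℝ) : Set (Fin m → ℝ) :=
  {y | (∀ v, v ≤ m → ∀ u, u ≤ v → pwalk m v y - pwalk m u y ≤ x) ∧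
    ∀ k, k ≤ m → pwalk m m y - pwalk m k y ≤ x / 2}

def VB (n : ℕ) (x : ℝ) : Set (Fin n → ℝ) :=
  {y | (∀ v, v ≤ n → ∀ u, u ≤ v → pwalk n v y - pwalk n u y ≤ x) ∧
    ∀ k, k ≤ n → pwalk n k y ≤ x / 2}

lemma msImp {α : Type*} [MeasurableSpace α] {p : Prop} {s : Set α} (h : MeasurableSet s) :
    MeasurableSet {y | p → y ∈ s} := by
  by_cases hp : p
  · simpa [hp] using h
  · simp [hp]

lemma measurableSet_VA (m : ℕ) (x : ℝ) : MeasurableSet (VA m x) := by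
  apply MeasurableSet.inter
  · show MeasurableSet {y : Fin m → ℝ | ∀ v, v ≤ m → ∀ u, u ≤ v → pwalk m v y - pwalk m u y ≤ x}
    rw [show {y | ∀ v, v ≤ m → ∀ u, u ≤ v → pwalk m v y - pwalk m u y ≤ x}
      = ⋂ v, ⋂ u, {y | v ≤ m → u ≤ v → pwalk m v y - pwalk m u y ≤ x} by
        ext y; simp only [Set.mem_iInter, Set.mem_setOf_eq]; tauto]
    refine MeasurableSet.iInter fun v => MeasurableSet.iInter fun u => ?_
    exact msImp (msImp (measurableSet_le ((measurable_pwalk m v).sub (measurable_pwalk m u))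
      measurable_const))
  · show MeasurableSet {y : Fin m → ℝ | ∀ k, k ≤ m → pwalk m m y - pwalk m k y ≤ x / 2}
    rw [show {y | ∀ k, k ≤ m → pwalk m m y - pwalk m k y ≤ x / 2}
      = ⋂ k, {y | k ≤ m → pwalk m m y - pwalk m k y ≤ x / 2} by
        ext y; simp only [Set.mem_iInter, Set.mem_setOf_eq]]
    refine MeasurableSet.iInter fun k => ?_
    exact msImp (measurableSet_le ((measurable_pwalk m m).sub (measurable_pwalk m k))
      measurable_const)

lemma measurableSet_VB (n : ℕ) (x : ℝ) : MeasurableSet (VB n x) := by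
  apply MeasurableSet.inter
  · show MeasurableSet {y : Fin n → ℝ | ∀ v, v ≤ n → ∀ u, u ≤ v → pwalk n v y - pwalk n u y ≤ x}
    rw [show {y | ∀ v, v ≤ n → ∀ u, u ≤ v → pwalk n v y - pwalk n u y ≤ x}
      = ⋂ v, ⋂ u, {y | v ≤ n → u ≤ v → pwalk n v y - pwalk n u y ≤ x} by
        ext y; simp only [Set.mem_iInter, Set.mem_setOf_eq]; tauto]
    refine MeasurableSet.iInter fun v => MeasurableSet.iInter fun u => ?_
    exact msImp (msImp (measurableSet_le ((measurable_pwalk n v).sub (measurable_pwalk n u))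
      measurable_const))
  · show MeasurableSet {y : Fin n → ℝ | ∀ k, k ≤ n → pwalk n k y ≤ x / 2}
    rw [show {y | ∀ k, k ≤ n → pwalk n k y ≤ x / 2}
      = ⋂ k, {y | k ≤ n → pwalk n k y ≤ x / 2} by
        ext y; simp only [Set.mem_iInter, Set.mem_setOf_eq]]
    refine MeasurableSet.iInter fun k => ?_
    exact msImp (measurableSet_le (measurable_pwalk n k) measurable_const)

end RMS
namespace RMS
variable {Ω : Type*}

lemma mem_VB_bl (ξ : ℕ → Ω → ℝ) (c n : ℕ) (x : ℝ) (ω : Ω) :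
    bl ξ c n ω ∈ VB n x ↔
      reflMax (fun i => ξ (c + i)) n ω ≤ x ∧ walkMax (fun i => ξ (c + i)) n ω ≤ x / 2 := by
  rw [reflMax_le_iff, walkMax_le_iff]
  unfold VB
  simp only [Set.mem_setOf_eq]
  constructor
  · rintro ⟨h1, h2⟩
    refine ⟨fun v hv u hu => ?_, fun k hk => ?_⟩
    · rw [← pwalk_bl ξ c n v hv ω, ← pwalk_bl ξ c n u (hu.trans hv) ω]; exact h1 v hv u hu
    · rw [← pwalk_bl ξ c n k hk ω]; exact h2 k hk
  · rintro ⟨h1, h2⟩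
    refine ⟨fun v hv u hu => ?_, fun k hk => ?_⟩
    · rw [pwalk_bl ξ c n v hv ω, pwalk_bl ξ c n u (hu.trans hv) ω]; exact h1 v hv u hu
    · rw [pwalk_bl ξ c n k hk ω]; exact h2 k hk

lemma mem_VA_bl (ξ : ℕ → Ω → ℝ) (c m : ℕ) (x : ℝ) (ω : Ω) :
    bl ξ c m ω ∈ VA m x ↔
      reflMax (fun i => ξ (c + i)) m ω ≤ x ∧
        walk (fun i => ξ (c + i)) m ω - walkMin (fun i => ξ (c + i)) m ω ≤ x / 2 := by
  rw [reflMax_le_iff, sub_walkMin_le_iff]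
  unfold VA
  simp only [Set.mem_setOf_eq]
  constructor
  · rintro ⟨h1, h2⟩
    refine ⟨fun v hv u hu => ?_, fun k hk => ?_⟩
    · rw [← pwalk_bl ξ c m v hv ω, ← pwalk_bl ξ c m u (hu.trans hv) ω]; exact h1 v hv u hu
    · rw [← pwalk_bl ξ c m m le_rfl ω, ← pwalk_bl ξ c m k hk ω]; exact h2 k hk
  · rintro ⟨h1, h2⟩
    refine ⟨fun v hv u hu => ?_, fun k hk => ?_⟩
    · rw [pwalk_bl ξ c m v hv ω, pwalk_bl ξ c m u (hu.trans hv) ω]; exact h1 v hv u hu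
    · rw [pwalk_bl ξ c m m le_rfl ω, pwalk_bl ξ c m k hk ω]; exact h2 k hk

variable [MeasurableSpace Ω] {P : Measure Ω} [IsProbabilityMeasure P] {ξ : ℕ → Ω → ℝ}

lemma lawBlock (hmeas : ∀ i, Measurable (ξ i))
    (hindep : iIndepFun ξ P)
    (hident : ∀ i, IdentDistrib (ξ i) (ξ 0) P P) (c n : ℕ) :
    P.map (bl ξ c n) = Measure.pi (fun _ : Fin n => P.map (ξ 0)) := by
  classical
  have hpm : IsProbabilityMeasure (P.map (ξ 0)) :=
    Measure.isProbabilityMeasure_map (hmeas 0).aemeasurable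
  symm
  apply Measure.pi_eq
  intro s hs
  rw [Measure.map_apply (measurable_bl hmeas c n) (MeasurableSet.univ_pi hs)]
  set sets : ℕ → Set ℝ := fun j => if h : j - c < n then s ⟨j - c, h⟩ else Set.univ with hsets
  set S : Finset ℕ := (Finset.range n).map ⟨fun i => c + i, add_right_injective c⟩ with hS
  have hmsets : ∀ j, MeasurableSet (sets j) := by
    intro j
    by_cases h : j - c < n
    · simpa [hsets, h] using hs _
    · simp [hsets, h]
  have hpre : bl ξ c n ⁻¹' Set.pi Set.univ s = ⋂ j ∈ S, ξ j ⁻¹' sets j := by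
    ext ω
    simp only [Set.mem_preimage, Set.mem_pi, Set.mem_univ, forall_true_left, Set.mem_iInter,
      hS, Finset.mem_map, Finset.mem_range, Function.Embedding.coeFn_mk]
    constructor
    · rintro h j ⟨i, hi, rfl⟩
      simp only [hsets]
      rw [dif_pos (show (c + i) - c < n by omega)]
      convert h ⟨i, hi⟩ using 2
      rw [Fin.mk_eq_mk]; omega
      rfl
    · intro h i
      have h2 := h (c + i.1) ⟨i.1, i.2, rfl⟩
      simp only [hsets, Set.mem_preimage] at h2
      rw [dif_pos (show (c + i.1) - c < n by omega)] at h2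
      have hfin : (⟨(c + i.1) - c, show (c + i.1) - c < n by omega⟩ : Fin n) = i := by
        rw [Fin.mk_eq_mk]; omega
      rw [hfin] at h2
      simpa [bl] using h2
  rw [hpre, hindep.measure_inter_preimage_eq_mul S (fun j _ => hmsets j), hS, Finset.prod_map]
  have hemb : ∀ j : ℕ, (⟨fun i => c + i, add_right_injective c⟩ : ℕ ↪ ℕ) j = c + j :=
    fun _ => rfl
  simp only [hemb]
  rw [← Fin.prod_univ_eq_prod_range (fun j => P (ξ (c + j) ⁻¹' sets (c + j))) n]
  apply Finset.prod_congr rfl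
  intro i _
  have hset : sets (c + i.1) = s i := by
    simp only [hsets]
    rw [dif_pos (show (c + i.1) - c < n by omega)]
    apply congrArg
    apply Fin.ext
    simp only [Fin.val_mk]
    omega
  rw [hset, Measure.map_apply (hmeas 0) (hs i)]
  exact (hident (c + i.1)).measure_mem_eq (hs i)

lemma indep_bl (hmeas : ∀ i, Measurable (ξ i))
    (hindep : iIndepFun ξ P)
    (M c n : ℕ) (h : M ≤ c) : IndepFun (bl ξ 0 M) (bl ξ c n) P := by
  classical
  set S : Finset ℕ := Finset.range M with hSdef
  set T : Finset ℕ := (Finset.range n).map ⟨fun i => c + i, add_right_injective c⟩ with hTdef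
  have hST : Disjoint S T := by
    rw [Finset.disjoint_left]
    intro j hjS hjT
    simp only [hSdef, hTdef, Finset.mem_range, Finset.mem_map, Function.Embedding.coeFn_mk]
      at hjS hjT
    obtain ⟨i, _, rfl⟩ := hjT
    omega
  have h1 := hindep.indepFun_finset S T hST hmeas
  have e1 : bl ξ 0 M =
      (fun (y : S → ℝ) (i : Fin M) => y ⟨i.1, Finset.mem_range.mpr i.2⟩) ∘
        (fun ω (i : S) => ξ i ω) := by
    funext ω i
    simp [bl]
  have e2 : bl ξ c n =
      (fun (y : T → ℝ) (i : Fin n) =>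
          y ⟨c + i.1, Finset.mem_map.mpr ⟨i.1, Finset.mem_range.mpr i.2, rfl⟩⟩) ∘
        (fun ω (i : T) => ξ i ω) := by
    funext ω i
    simp [bl]
  rw [e1, e2]
  exact h1.comp (measurable_pi_lambda _ fun i => measurable_pi_apply _)
    (measurable_pi_lambda _ fun i => measurable_pi_apply _)

end RMS

open RMS

/-- For every `x ≥ 0` and integers `m, n ≥ 0`:
`P(V^#_{m+n+2} ≤ x) ≥ P(ξ₁ ≤ 0)² ⬝ P(V^#_m ≤ x, S_m - min_{0≤k≤m} S_k ≤ x/2)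
  ⬝ P(V^#_n ≤ x, max_{0≤k≤n} S_k ≤ x/2)`. -/
theorem reflMax_superadditivity_step
    {Ω : Type*} [MeasurableSpace Ω] (P : Measure Ω) [IsProbabilityMeasure P]
    (ξ : ℕ → Ω → ℝ) (hmeas : ∀ i, Measurable (ξ i))
    (hindep : iIndepFun ξ P)
    (hident : ∀ i, IdentDistrib (ξ i) (ξ 0) P P)
    (x : ℝ) (hx : 0 ≤ x) (m n : ℕ) :
    (P {ω | ξ 0 ω ≤ 0}).toReal ^ 2
        * (P {ω | reflMax ξ m ω ≤ x ∧ walk ξ m ω - walkMin ξ m ω ≤ x / 2}).toReal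
        * (P {ω | reflMax ξ n ω ≤ x ∧ walkMax ξ n ω ≤ x / 2}).toReal
      ≤ (P {ω | reflMax ξ (m + n + 2) ω ≤ x}).toReal := by
  classical
  have h0 : (fun i => ξ (0 + i)) = ξ := by funext i; rw [Nat.zero_add]
  set q : ENNReal := P {ω | ξ 0 ω ≤ 0} with hq
  set Aset := {ω | reflMax ξ m ω ≤ x ∧ walk ξ m ω - walkMin ξ m ω ≤ x / 2} with hAset
  set Bset := {ω | reflMax ξ n ω ≤ x ∧ walkMax ξ n ω ≤ x / 2} with hBset
  set Tset := {ω | reflMax ξ (m + n + 2) ω ≤ x} with hTset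
  set E2 := {ω | ξ m ω ≤ 0} with hE2def
  set E3 := {ω | ξ (m + 1) ω ≤ 0} with hE3def
  set E4 := bl ξ (m + 2) n ⁻¹' VB n x with hE4def
  -- preimage representations
  have hE1 : bl ξ 0 m ⁻¹' VA m x = Aset := by
    ext ω
    rw [Set.mem_preimage, mem_VA_bl, h0, hAset]
    rfl
  have hBrep : bl ξ 0 n ⁻¹' VB n x = Bset := by
    ext ω
    rw [Set.mem_preimage, mem_VB_bl, h0, hBset]
    rfl
  have hms0 : MeasurableSet {y : Fin 1 → ℝ | y 0 ≤ 0} :=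
    measurableSet_le (measurable_pi_apply 0) measurable_const
  have hE2 : bl ξ m 1 ⁻¹' {y : Fin 1 → ℝ | y 0 ≤ 0} = E2 := by
    ext ω
    simp [bl, hE2def]
  have hE3 : bl ξ (m + 1) 1 ⁻¹' {y : Fin 1 → ℝ | y 0 ≤ 0} = E3 := by
    ext ω
    simp [bl, hE3def]
  -- restriction maps
  have hr2meas : Measurable (fun (y : Fin (m + 2) → ℝ) (i : Fin m) => y ⟨i.1, by omega⟩) :=
    measurable_pi_lambda _ fun _ => measurable_pi_apply _
  have hr1meas : Measurable (fun (y : Fin (m + 1) → ℝ) (i : Fin m) => y ⟨i.1, by omega⟩) :=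
    measurable_pi_lambda _ fun _ => measurable_pi_apply _
  set U2 : Set (Fin (m + 2) → ℝ) :=
    ((fun (y : Fin (m + 2) → ℝ) (i : Fin m) => y ⟨i.1, by omega⟩) ⁻¹' VA m x)
      ∩ {y | y ⟨m, by omega⟩ ≤ 0} ∩ {y | y ⟨m + 1, by omega⟩ ≤ 0} with hU2def
  set U1 : Set (Fin (m + 1) → ℝ) :=
    ((fun (y : Fin (m + 1) → ℝ) (i : Fin m) => y ⟨i.1, by omega⟩) ⁻¹' VA m x)
      ∩ {y | y ⟨m, by omega⟩ ≤ 0} with hU1def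
  have hU2meas : MeasurableSet U2 :=
    (((measurableSet_VA m x).preimage hr2meas).inter
      (measurableSet_le (measurable_pi_apply _) measurable_const)).inter
      (measurableSet_le (measurable_pi_apply _) measurable_const)
  have hU1meas : MeasurableSet U1 :=
    ((measurableSet_VA m x).preimage hr1meas).inter
      (measurableSet_le (measurable_pi_apply _) measurable_const)
  have hres2 : ∀ ω, (fun (i : Fin m) => bl ξ 0 (m + 2) ω ⟨i.1, by omega⟩) = bl ξ 0 m ω := by
    intro ω; funext i; rfl
  have hres1 : ∀ ω, (fun (i : Fin m) => bl ξ 0 (m + 1) ω ⟨i.1, by omega⟩) = bl ξ 0 m ω := by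
    intro ω; funext i; rfl
  have hE123 : bl ξ 0 (m + 2) ⁻¹' U2 = Aset ∩ E2 ∩ E3 := by
    ext ω
    simp only [hU2def, Set.mem_preimage, Set.mem_inter_iff, Set.mem_setOf_eq]
    rw [show (fun (i : Fin m) => bl ξ 0 (m + 2) ω ⟨i.1, by omega⟩) = bl ξ 0 m ω from hres2 ω]
    have hc1 : bl ξ 0 (m + 2) ω ⟨m, by omega⟩ = ξ m ω := by simp [bl]
    have hc2 : bl ξ 0 (m + 2) ω ⟨m + 1, by omega⟩ = ξ (m + 1) ω := by simp [bl]
    rw [hc1, hc2, show (bl ξ 0 m ω ∈ VA m x) = (ω ∈ Aset) from by rw [← hE1]; rfl]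
    simp [hE2def, hE3def, Set.mem_setOf_eq]
  have hE12 : bl ξ 0 (m + 1) ⁻¹' U1 = Aset ∩ E2 := by
    ext ω
    simp only [hU1def, Set.mem_preimage, Set.mem_inter_iff, Set.mem_setOf_eq]
    rw [show (fun (i : Fin m) => bl ξ 0 (m + 1) ω ⟨i.1, by omega⟩) = bl ξ 0 m ω from hres1 ω]
    have hc1 : bl ξ 0 (m + 1) ω ⟨m, by omega⟩ = ξ m ω := by simp [bl]
    rw [hc1, show (bl ξ 0 m ω ∈ VA m x) = (ω ∈ Aset) from by rw [← hE1]; rfl]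
    simp [hE2def, Set.mem_setOf_eq]
  -- factorization
  have step1 : P (Aset ∩ E2 ∩ E3 ∩ E4) = P (Aset ∩ E2 ∩ E3) * P E4 := by
    rw [← hE123, hE4def]
    exact (indep_bl hmeas hindep (m + 2) (m + 2) n le_rfl).measure_inter_preimage_eq_mul _ _
      hU2meas (measurableSet_VB n x)
  have step2 : P (Aset ∩ E2 ∩ E3) = P (Aset ∩ E2) * P E3 := by
    rw [← hE12, ← hE3]
    exact (indep_bl hmeas hindep (m + 1) (m + 1) 1 le_rfl).measure_inter_preimage_eq_mul _ _
      hU1meas hms0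
  have step3 : P (Aset ∩ E2) = P Aset * P E2 := by
    rw [← hE1, ← hE2]
    exact (indep_bl hmeas hindep m m 1 le_rfl).measure_inter_preimage_eq_mul _ _
      (measurableSet_VA m x) hms0
  -- identical distribution facts
  have hq2 : P E2 = q := (hident m).measure_mem_eq (measurableSet_Iic (a := (0 : ℝ)))
  have hq3 : P E3 = q := (hident (m + 1)).measure_mem_eq (measurableSet_Iic (a := (0 : ℝ)))
  have hq4 : P E4 = P Bset := by
    rw [hE4def, ← hBrep,
      ← Measure.map_apply (measurable_bl hmeas (m + 2) n) (measurableSet_VB n x),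
      ← Measure.map_apply (measurable_bl hmeas 0 n) (measurableSet_VB n x),
      lawBlock hmeas hindep hident (m + 2) n, lawBlock hmeas hindep hident 0 n]
  -- pointwise inclusion
  have hincl : Aset ∩ E2 ∩ E3 ∩ E4 ⊆ Tset := by
    rintro ω ⟨⟨⟨hA, h2⟩, h3⟩, h4⟩
    have hA1 : ∀ v ≤ m, ∀ u ≤ v, walk ξ v ω - walk ξ u ω ≤ x := reflMax_le_iff.mp hA.1
    have hA2 : ∀ k ≤ m, walk ξ m ω - walk ξ k ω ≤ x / 2 := sub_walkMin_le_iff.mp hA.2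
    rw [hE4def, Set.mem_preimage, mem_VB_bl] at h4
    have hB1 : ∀ v ≤ n, ∀ u ≤ v,
        walk (fun i => ξ (m + 2 + i)) v ω - walk (fun i => ξ (m + 2 + i)) u ω ≤ x :=
      reflMax_le_iff.mp h4.1
    have hB2 : ∀ k ≤ n, walk (fun i => ξ (m + 2 + i)) k ω ≤ x / 2 := walkMax_le_iff.mp h4.2
    have h2' : ξ m ω ≤ 0 := h2
    have h3' : ξ (m + 1) ω ≤ 0 := h3
    have hstep1 : walk ξ (m + 1) ω = walk ξ m ω + ξ m ω := by
      simp [walk, Finset.sum_range_succ]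
    have hstep2 : walk ξ (m + 2) ω = walk ξ (m + 1) ω + ξ (m + 1) ω := by
      simp [walk, Finset.sum_range_succ]
    have hsplit : ∀ v, walk ξ (m + 2 + v) ω
        = walk ξ (m + 2) ω + walk (fun i => ξ (m + 2 + i)) v ω := fun v => walk_add ξ (m + 2) v ω
    have claimC : ∀ u ≤ m + 2, walk ξ (m + 2) ω - walk ξ u ω ≤ x / 2 := by
      intro u hu
      by_cases hum : u ≤ m
      · have := hA2 u hum; linarith
      · have : u = m + 1 ∨ u = m + 2 := by omega
        rcases this with rfl | rfl
        · linarith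
        · linarith [hx]
    rw [hTset, Set.mem_setOf_eq, reflMax_le_iff]
    intro v hv u hu
    by_cases hvm : v ≤ m
    · exact hA1 v hvm u hu
    · by_cases hv1 : v = m + 1
      · subst hv1
        by_cases hum : u ≤ m
        · have := hA2 u hum; linarith
        · have : u = m + 1 := by omega
          subst this; linarith
      · obtain ⟨w, hwv, hwn⟩ : ∃ w, v = m + 2 + w ∧ w ≤ n := ⟨v - (m + 2), by omega, by omega⟩
        subst hwv
        rw [hsplit w]
        by_cases hu2 : u ≤ m + 2
        · have := claimC u hu2; have := hB2 w hwn; linarith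
        · obtain ⟨z, hzu, hzw⟩ : ∃ z, u = m + 2 + z ∧ z ≤ w := ⟨u - (m + 2), by omega, by omega⟩
          subst hzu
          rw [hsplit z]
          have := hB1 w hwn z hzw
          linarith
  -- combine
  have key : q * q * P Aset * P Bset ≤ P Tset := by
    have hP : P (Aset ∩ E2 ∩ E3 ∩ E4) = P Aset * q * q * P Bset := by
      rw [step1, step2, step3, hq2, hq3, hq4]
    calc q * q * P Aset * P Bset = P Aset * q * q * P Bset := by ring
      _ = P (Aset ∩ E2 ∩ E3 ∩ E4) := hP.symm
      _ ≤ P Tset := measure_mono hincl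
  have htoReal : (q * q * P Aset * P Bset).toReal
      = q.toReal ^ 2 * (P Aset).toReal * (P Bset).toReal := by
    rw [ENNReal.toReal_mul, ENNReal.toReal_mul, ENNReal.toReal_mul, pow_two]
  rw [← htoReal]
  exact ENNReal.toReal_mono (measure_ne_top P _) key
end
end

section
/- Assume P(ξ₁ ≤ 0) > 0 and assume there exist a constant c > 0 and a threshold x₀ ≥ 0 such that for every real x ≥ x₀ and every integer n ≥ 0: P(V^#_n ≤ x and max_{0≤k≤n} S_k ≤ x/2) ≥ c·P(V^#_n ≤ x), and likewise P(V^#_n ≤ x and S_n − min_{0≤k≤n} S_k ≤ x/2) ≥ c·P(V^#_n ≤ x). Then there exists a constant C > 0 such that for every real x ≥ x₀ and all integers m ≥ 1, n ≥ 1: P(V^#_{m+n} ≤ x) ≥ C · P(V^#_m ≤ x) · P(V^#_n ≤ x). -/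
open MeasureTheory ProbabilityTheory Filter

noncomputable section

namespace ReflAux

/-- walk as a function of a finite vector of steps -/
def vwalk (n : ℕ) (y : Fin n → ℝ) (k : ℕ) : ℝ :=
  ∑ i ∈ Finset.range k, if h : i < n then y ⟨i, h⟩ else 0

def vReflMax (n : ℕ) (y : Fin n → ℝ) : ℝ :=
  (Finset.range (n + 1)).sup' Finset.nonempty_range_add_one fun v =>
    (Finset.range (v + 1)).sup' Finset.nonempty_range_add_one fun u =>
      vwalk n y v - vwalk n y u

def vWalkMax (n : ℕ) (y : Fin n → ℝ) : ℝ :=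
  (Finset.range (n + 1)).sup' Finset.nonempty_range_add_one fun k => vwalk n y k

def vWalkMin (n : ℕ) (y : Fin n → ℝ) : ℝ :=
  (Finset.range (n + 1)).inf' Finset.nonempty_range_add_one fun k => vwalk n y k

lemma measurable_vwalk (n k : ℕ) : Measurable fun y : Fin n → ℝ => vwalk n y k := by
  apply Finset.measurable_sum
  intro i _
  by_cases h : i < n
  · simp only [dif_pos h]; exact measurable_pi_apply _
  · simp only [dif_neg h]; exact measurable_const

lemma measurable_vReflMax (n : ℕ) : Measurable (vReflMax n) := by
  have : vReflMax n = (Finset.range (n + 1)).sup' Finset.nonempty_range_add_one fun v =>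
      (Finset.range (v + 1)).sup' Finset.nonempty_range_add_one fun u =>
        (fun y => vwalk n y v - vwalk n y u) := by
    funext y
    rw [Finset.sup'_apply]
    refine Finset.sup'_congr _ rfl fun v _ => ?_
    rw [Finset.sup'_apply]
  rw [this]
  refine Finset.measurable_sup' _ fun v _ => Finset.measurable_sup' _ fun u _ => ?_
  exact (measurable_vwalk n v).sub (measurable_vwalk n u)

lemma measurable_vWalkMax (n : ℕ) : Measurable (vWalkMax n) := by
  have : vWalkMax n = (Finset.range (n + 1)).sup' Finset.nonempty_range_add_one fun k =>
      (fun y => vwalk n y k) := by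
    funext y; rw [Finset.sup'_apply]; rfl
  rw [this]
  exact Finset.measurable_sup' _ fun k _ => measurable_vwalk n k

lemma measurable_vWalkMin (n : ℕ) : Measurable (vWalkMin n) := by
  have : vWalkMin n = (Finset.range (n + 1)).inf' Finset.nonempty_range_add_one fun k =>
      (fun y => vwalk n y k) := by
    funext y; rw [Finset.inf'_apply]; rfl
  rw [this]
  exact Finset.inf'_induction _ _ (fun f hf g hg => hf.inf hg) fun k _ => measurable_vwalk n k

lemma walk_eq_vwalk {Ω : Type*} (ξ : ℕ → Ω → ℝ) (n k : ℕ) (hk : k ≤ n) (ω : Ω) :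
    walk ξ k ω = vwalk n (fun i : Fin n => ξ i ω) k := by
  unfold walk vwalk
  refine Finset.sum_congr rfl fun i hi => ?_
  rw [dif_pos (lt_of_lt_of_le (Finset.mem_range.1 hi) hk)]

lemma reflMax_eq_v {Ω : Type*} (ξ : ℕ → Ω → ℝ) (n : ℕ) (ω : Ω) :
    reflMax ξ n ω = vReflMax n (fun i : Fin n => ξ i ω) := by
  unfold reflMax vReflMax
  refine Finset.sup'_congr _ rfl fun v hv => ?_
  have hv' : v ≤ n := Nat.lt_succ_iff.1 (Finset.mem_range.1 hv)
  refine Finset.sup'_congr _ rfl fun u hu => ?_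
  have hu' : u ≤ v := Nat.lt_succ_iff.1 (Finset.mem_range.1 hu)
  rw [walk_eq_vwalk ξ n v hv', walk_eq_vwalk ξ n u (hu'.trans hv')]

lemma walkMax_eq_v {Ω : Type*} (ξ : ℕ → Ω → ℝ) (n : ℕ) (ω : Ω) :
    walkMax ξ n ω = vWalkMax n (fun i : Fin n => ξ i ω) := by
  unfold walkMax vWalkMax
  refine Finset.sup'_congr _ rfl fun k hk => ?_
  exact walk_eq_vwalk ξ n k (Nat.lt_succ_iff.1 (Finset.mem_range.1 hk)) ω

lemma walkMin_eq_v {Ω : Type*} (ξ : ℕ → Ω → ℝ) (n : ℕ) (ω : Ω) :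
    walkMin ξ n ω = vWalkMin n (fun i : Fin n => ξ i ω) := by
  unfold walkMin vWalkMin
  refine Finset.inf'_congr _ rfl fun k hk => ?_
  exact walk_eq_vwalk ξ n k (Nat.lt_succ_iff.1 (Finset.mem_range.1 hk)) ω

/-- The key deterministic gluing lemma. -/
lemma key {Ω : Type*} (ξ : ℕ → Ω → ℝ) (m n : ℕ) (x : ℝ) (ω : Ω)
    (h1 : reflMax ξ m ω ≤ x) (h2 : walk ξ m ω - walkMin ξ m ω ≤ x / 2)
    (h3 : reflMax (fun i => ξ (m + i)) n ω ≤ x)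
    (h4 : walkMax (fun i => ξ (m + i)) n ω ≤ x / 2) :
    reflMax ξ (m + n) ω ≤ x := by
  set η : ℕ → Ω → ℝ := fun i => ξ (m + i) with hη
  have hdecomp : ∀ j, walk ξ (m + j) ω = walk ξ m ω + walk η j ω := by
    intro j
    simpa [walk] using Finset.sum_range_add (fun i => ξ i ω) m j
  have hbound : ∀ u v : ℕ, u ≤ v → v ≤ m → walk ξ v ω - walk ξ u ω ≤ x := by
    intro u v huv hv
    refine le_trans (le_trans (Finset.le_sup'
      (fun u => walk ξ v ω - walk ξ u ω)
      (Finset.mem_range.2 (Nat.lt_succ_of_le huv))) ?_) h1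
    exact Finset.le_sup'
      (fun v => (Finset.range (v + 1)).sup' Finset.nonempty_range_add_one
        fun u => walk ξ v ω - walk ξ u ω)
      (Finset.mem_range.2 (Nat.lt_succ_of_le hv))
  have hboundη : ∀ u v : ℕ, u ≤ v → v ≤ n → walk η v ω - walk η u ω ≤ x := by
    intro u v huv hv
    refine le_trans (le_trans (Finset.le_sup'
      (fun u => walk η v ω - walk η u ω)
      (Finset.mem_range.2 (Nat.lt_succ_of_le huv))) ?_) h3
    exact Finset.le_sup'
      (fun v => (Finset.range (v + 1)).sup' Finset.nonempty_range_add_one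
        fun u => walk η v ω - walk η u ω)
      (Finset.mem_range.2 (Nat.lt_succ_of_le hv))
  have hmaxη : ∀ j : ℕ, j ≤ n → walk η j ω ≤ x / 2 := by
    intro j hj
    exact le_trans (Finset.le_sup' (fun k => walk η k ω)
      (Finset.mem_range.2 (Nat.lt_succ_of_le hj))) h4
  have hminξ : ∀ u : ℕ, u ≤ m → walk ξ m ω - walk ξ u ω ≤ x / 2 := by
    intro u hu
    have := Finset.inf'_le (fun k => walk ξ k ω) (Finset.mem_range.2 (Nat.lt_succ_of_le hu))
    have h2' : walk ξ m ω - walkMin ξ m ω ≤ x / 2 := h2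
    unfold walkMin at h2'
    linarith
  unfold reflMax
  refine Finset.sup'_le _ _ fun v hv => Finset.sup'_le _ _ fun u hu => ?_
  have hv' : v ≤ m + n := Nat.lt_succ_iff.1 (Finset.mem_range.1 hv)
  have hu' : u ≤ v := Nat.lt_succ_iff.1 (Finset.mem_range.1 hu)
  rcases le_or_gt v m with hvm | hvm
  · exact hbound u v hu' hvm
  · have hjn : v - m ≤ n := by omega
    have hveq : walk ξ v ω = walk ξ m ω + walk η (v - m) ω := by
      have h := hdecomp (v - m)
      rwa [show m + (v - m) = v by omega] at h
    rcases le_or_gt u m with hum | hum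
    · linarith [hmaxη (v - m) hjn, hminξ u hum]
    · have hueq : walk ξ u ω = walk ξ m ω + walk η (u - m) ω := by
        have h := hdecomp (u - m)
        rwa [show m + (u - m) = u by omega] at h
      linarith [hboundη (u - m) (v - m) (by omega) hjn]

end ReflAux

open ReflAux in
/-- Law of a block of an i.i.d. sequence: it is the product of the common law. -/
lemma map_block {Ω : Type*} [MeasurableSpace Ω] (P : Measure Ω) [IsProbabilityMeasure P]
    (ξ : ℕ → Ω → ℝ) (hmeas : ∀ i, Measurable (ξ i))
    (hindep : iIndepFun ξ P)
    (hident : ∀ i, IdentDistrib (ξ i) (ξ 0) P P) (k n : ℕ) :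
    P.map (fun ω (i : Fin n) => ξ (k + i) ω)
      = Measure.pi (fun _ : Fin n => P.map (ξ 0)) := by
  have hYmeas : Measurable (fun ω (i : Fin n) => ξ (k + i) ω) :=
    measurable_pi_lambda _ fun i => hmeas _
  refine (Measure.pi_eq fun s hs => ?_).symm
  rw [Measure.map_apply hYmeas (MeasurableSet.univ_pi hs)]
  set S : Finset ℕ := (Finset.range n).image (k + ·) with hS
  set sets : ℕ → Set ℝ := fun j => if h : j - k < n then s ⟨j - k, h⟩ else Set.univ with hsetsdef
  have hsets : ∀ j, MeasurableSet (sets j) := by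
    intro j
    by_cases h : j - k < n
    · simp only [hsetsdef, dif_pos h]; exact hs _
    · simp only [hsetsdef, dif_neg h]; exact MeasurableSet.univ
  have hsets_eq : ∀ i : ℕ, i < n → ∀ h : i < n, sets (k + i) = s ⟨i, h⟩ := by
    intro i hi h
    simp only [hsetsdef, Nat.add_sub_cancel_left, dif_pos hi]
  have hpre : (fun ω (i : Fin n) => ξ (k + i) ω) ⁻¹' Set.pi Set.univ s
      = ⋂ j ∈ S, ξ j ⁻¹' sets j := by
    ext ω
    simp only [Set.mem_preimage, Set.mem_pi, Set.mem_univ, forall_true_left, Set.mem_iInter,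
      hS, Finset.mem_image, Finset.mem_range, forall_exists_index, and_imp]
    constructor
    · rintro h j i hi rfl
      have := h ⟨i, hi⟩
      simpa [hsets_eq i hi hi] using this
    · intro h i
      have := h (k + i) i i.isLt rfl
      have h2 : ξ (k + ↑i) ω ∈ s ⟨↑i, i.isLt⟩ := by
        rwa [hsets_eq ↑i i.isLt i.isLt] at this
      simpa using h2
  rw [hpre, hindep.measure_inter_preimage_eq_mul S fun j _ => hsets j]
  have hinj : Set.InjOn (k + ·) (Finset.range n) := fun a _ b _ h => by
    simpa using h
  rw [hS, Finset.prod_image hinj]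
  have hfac : ∀ j ∈ Finset.range n,
      P (ξ (k + j) ⁻¹' sets (k + j)) = (P.map (ξ 0)) (sets (k + j)) := by
    intro j hj
    rw [← (hident (k + j)).map_eq, Measure.map_apply (hmeas _) (hsets _)]
  rw [Finset.prod_congr rfl hfac]
  rw [← Fin.prod_univ_eq_prod_range (fun j => (P.map (ξ 0)) (sets (k + j))) n]
  refine Finset.prod_congr rfl fun i _ => ?_
  rw [hsets_eq ↑i i.isLt i.isLt]

open ReflAux in
/-- Suppose `P(ξ₁ ≤ 0) > 0` and there are `c > 0`, `x₀ ≥ 0` such that for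
all `x ≥ x₀` and `n ≥ 0`, `P(V^#_n ≤ x, max_{0≤k≤n} S_k ≤ x/2) ≥ c ⬝ P(V^#_n ≤ x)` and
`P(V^#_n ≤ x, S_n - min_{0≤k≤n} S_k ≤ x/2) ≥ c ⬝ P(V^#_n ≤ x)`.  Then there is `C > 0` such
that for all `x ≥ x₀` and `m, n ≥ 1`:
`P(V^#_{m+n} ≤ x) ≥ C ⬝ P(V^#_m ≤ x) ⬝ P(V^#_n ≤ x)`. -/
theorem reflMax_supermultiplicative
    {Ω : Type*} [MeasurableSpace Ω] (P : Measure Ω) [IsProbabilityMeasure P]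
    (ξ : ℕ → Ω → ℝ) (hmeas : ∀ i, Measurable (ξ i))
    (hindep : iIndepFun ξ P)
    (hident : ∀ i, IdentDistrib (ξ i) (ξ 0) P P)
    (hstep : 0 < (P {ω | ξ 0 ω ≤ 0}).toReal)
    (c x₀ : ℝ) (hc : 0 < c) (hx₀ : 0 ≤ x₀)
    (hmax : ∀ x : ℝ, x₀ ≤ x → ∀ n : ℕ,
      c * (P {ω | reflMax ξ n ω ≤ x}).toReal
        ≤ (P {ω | reflMax ξ n ω ≤ x ∧ walkMax ξ n ω ≤ x / 2}).toReal)
    (hmin : ∀ x : ℝ, x₀ ≤ x → ∀ n : ℕ,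
      c * (P {ω | reflMax ξ n ω ≤ x}).toReal
        ≤ (P {ω | reflMax ξ n ω ≤ x ∧ walk ξ n ω - walkMin ξ n ω ≤ x / 2}).toReal) :
    ∃ C : ℝ, 0 < C ∧ ∀ x : ℝ, x₀ ≤ x → ∀ m n : ℕ, 1 ≤ m → 1 ≤ n →
      C * (P {ω | reflMax ξ m ω ≤ x}).toReal * (P {ω | reflMax ξ n ω ≤ x}).toReal
        ≤ (P {ω | reflMax ξ (m + n) ω ≤ x}).toReal := by
  refine ⟨c * c, mul_pos hc hc, fun x hx m n hm hn => ?_⟩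
  -- the two block observables
  set Um : Ω → (Fin m → ℝ) := fun ω i => ξ i ω with hUm
  set Vmn : Ω → (Fin n → ℝ) := fun ω i => ξ (m + i) ω with hVmn
  set U0n : Ω → (Fin n → ℝ) := fun ω i => ξ i ω with hU0n
  have hUmeas : Measurable Um := measurable_pi_lambda _ fun i => hmeas _
  have hVmeas : Measurable Vmn := measurable_pi_lambda _ fun i => hmeas _
  have hU0meas : Measurable U0n := measurable_pi_lambda _ fun i => hmeas _
  -- target sets in the vector spaces
  set MA : Set (Fin m → ℝ) :=
    {y | vReflMax m y ≤ x ∧ vwalk m y m - vWalkMin m y ≤ x / 2} with hMA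
  set MB : Set (Fin n → ℝ) :=
    {y | vReflMax n y ≤ x ∧ vWalkMax n y ≤ x / 2} with hMB
  have hMAmeas : MeasurableSet MA :=
    (measurableSet_le (measurable_vReflMax m) measurable_const).inter
      (measurableSet_le ((measurable_vwalk m m).sub (measurable_vWalkMin m)) measurable_const)
  have hMBmeas : MeasurableSet MB :=
    (measurableSet_le (measurable_vReflMax n) measurable_const).inter
      (measurableSet_le (measurable_vWalkMax n) measurable_const)
  -- event identifications
  have hApre : {ω | reflMax ξ m ω ≤ x ∧ walk ξ m ω - walkMin ξ m ω ≤ x / 2} = Um ⁻¹' MA := by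
    ext ω
    simp only [Set.mem_setOf_eq, Set.mem_preimage, hMA, hUm,
      reflMax_eq_v ξ m ω, walk_eq_vwalk ξ m m le_rfl ω, walkMin_eq_v ξ m ω]
  have hBpre : {ω | reflMax (fun i => ξ (m + i)) n ω ≤ x
      ∧ walkMax (fun i => ξ (m + i)) n ω ≤ x / 2} = Vmn ⁻¹' MB := by
    ext ω
    simp only [Set.mem_setOf_eq, Set.mem_preimage, hMB, hVmn,
      reflMax_eq_v (fun i => ξ (m + i)) n ω, walkMax_eq_v (fun i => ξ (m + i)) n ω]
  have hB0pre : {ω | reflMax ξ n ω ≤ x ∧ walkMax ξ n ω ≤ x / 2} = U0n ⁻¹' MB := by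
    ext ω
    simp only [Set.mem_setOf_eq, Set.mem_preimage, hMB, hU0n,
      reflMax_eq_v ξ n ω, walkMax_eq_v ξ n ω]
  -- independence of the two blocks
  have hST : Disjoint (Finset.range m) ((Finset.range n).image (m + ·)) := by
    rw [Finset.disjoint_left]
    intro j hj hj'
    simp only [Finset.mem_range] at hj
    simp only [Finset.mem_image, Finset.mem_range] at hj'
    omega
  have hI := hindep.indepFun_finset (Finset.range m) ((Finset.range n).image (m + ·)) hST hmeas
  set φ : (↥(Finset.range m) → ℝ) → (Fin m → ℝ) :=
    fun g i => g ⟨(i : ℕ), Finset.mem_range.2 i.isLt⟩ with hφdef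
  set ψ : (↥((Finset.range n).image (m + ·)) → ℝ) → (Fin n → ℝ) :=
    fun g i => g ⟨m + (i : ℕ),
      Finset.mem_image.2 ⟨(i : ℕ), Finset.mem_range.2 i.isLt, rfl⟩⟩ with hψdef
  have hφmeas : Measurable φ := measurable_pi_lambda _ fun i => measurable_pi_apply _
  have hψmeas : Measurable ψ := measurable_pi_lambda _ fun i => measurable_pi_apply _
  have hIndep2 : IndepFun Um Vmn P := hI.comp hφmeas hψmeas
  have hprod : P (Um ⁻¹' MA ∩ Vmn ⁻¹' MB) = P (Um ⁻¹' MA) * P (Vmn ⁻¹' MB) :=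
    hIndep2.measure_inter_preimage_eq_mul MA MB hMAmeas hMBmeas
  -- identical distribution of the second block
  have hlaw : P (Vmn ⁻¹' MB) = P (U0n ⁻¹' MB) := by
    rw [← Measure.map_apply hVmeas hMBmeas, ← Measure.map_apply hU0meas hMBmeas]
    have h1 := map_block P ξ hmeas hindep hident m n
    have h2 := map_block P ξ hmeas hindep hident 0 n
    have h0 : (fun ω (i : Fin n) => ξ (0 + i) ω) = U0n := by
      funext ω i; rw [Nat.zero_add]
    rw [h0] at h2
    have hVfun : (fun ω (i : Fin n) => ξ (m + i) ω) = Vmn := rfl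
    rw [hVfun] at h1
    rw [h1, h2]
  -- gluing: the intersection is contained in the target event
  have hsub : Um ⁻¹' MA ∩ Vmn ⁻¹' MB ⊆ {ω | reflMax ξ (m + n) ω ≤ x} := by
    rw [← hApre, ← hBpre]
    rintro ω ⟨⟨h1, h2⟩, h3, h4⟩
    exact key ξ m n x ω h1 h2 h3 h4
  -- put everything together
  have hfin : ∀ s : Set Ω, P s ≠ ⊤ := fun s => measure_ne_top P s
  have hmono : (P (Um ⁻¹' MA ∩ Vmn ⁻¹' MB)).toReal
      ≤ (P {ω | reflMax ξ (m + n) ω ≤ x}).toReal :=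
    ENNReal.toReal_mono (hfin _) (measure_mono hsub)
  have hprodReal : (P (Um ⁻¹' MA ∩ Vmn ⁻¹' MB)).toReal
      = (P (Um ⁻¹' MA)).toReal * (P (U0n ⁻¹' MB)).toReal := by
    rw [hprod, hlaw, ENNReal.toReal_mul]
  have hA := hmin x hx m
  have hB := hmax x hx n
  rw [hApre] at hA
  rw [hB0pre] at hB
  have hnn1 : 0 ≤ c * (P {ω | reflMax ξ m ω ≤ x}).toReal :=
    mul_nonneg hc.le ENNReal.toReal_nonneg
  have hnn2 : 0 ≤ c * (P {ω | reflMax ξ n ω ≤ x}).toReal :=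
    mul_nonneg hc.le ENNReal.toReal_nonneg
  calc c * c * (P {ω | reflMax ξ m ω ≤ x}).toReal * (P {ω | reflMax ξ n ω ≤ x}).toReal
      = (c * (P {ω | reflMax ξ m ω ≤ x}).toReal)
        * (c * (P {ω | reflMax ξ n ω ≤ x}).toReal) := by ring
    _ ≤ (P (Um ⁻¹' MA)).toReal * (P (U0n ⁻¹' MB)).toReal :=
        mul_le_mul hA hB hnn2 ENNReal.toReal_nonneg
    _ = (P (Um ⁻¹' MA ∩ Vmn ⁻¹' MB)).toReal := hprodReal.symm
    _ ≤ (P {ω | reflMax ξ (m + n) ω ≤ x}).toReal := hmono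
end
end

section
/- Let (H_i)_{i≥1} be an i.i.d. sequence of nonnegative real-valued random variables and let Σ_n = H_1 + ⋯ + H_n. Let c : [1,∞) → (0,∞) be a continuous, strictly increasing function with c(x) → ∞ as x → ∞, and suppose that Σ_n/c(n) converges in probability to a constant κ ∈ (0,∞) as n → ∞. Let L(λ) = E[exp(−λ H₁)] denote the Laplace transform of H₁. Then 1 − L(1/x) is asymptotically equivalent to κ/c⁻¹(x) as x → ∞, i.e. lim_{x→∞} c⁻¹(x)·(1 − L(1/x)) = κ, where c⁻¹ denotes the inverse function of c. -/
open MeasureTheory ProbabilityTheory Filter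

lemma exp_neg_abs_sub_le {a b : ℝ} (ha : 0 ≤ a) (hb : 0 ≤ b) :
    |Real.exp (-a) - Real.exp (-b)| ≤ |a - b| := by
  have key : ∀ u v : ℝ, 0 ≤ u → u ≤ v → Real.exp (-u) - Real.exp (-v) ≤ v - u := by
    intro u v hu huv
    have h1 : Real.exp (-u) ≤ 1 := Real.exp_le_one_iff.2 (by linarith)
    have h2 : (u - v) + 1 ≤ Real.exp (u - v) := Real.add_one_le_exp _
    have h3 : Real.exp (u - v) ≤ 1 := Real.exp_le_one_iff.2 (by linarith)
    have h4 : Real.exp (-v) = Real.exp (-u) * Real.exp (u - v) := by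
      rw [← Real.exp_add]; ring_nf
    nlinarith [Real.exp_pos (-u)]
  rcases le_total a b with h | h
  · rw [abs_of_nonneg (by linarith [Real.exp_le_exp.2 (neg_le_neg h)]),
      abs_of_nonpos (by linarith)]
    linarith [key a b ha h]
  · rw [abs_of_nonpos (by linarith [Real.exp_le_exp.2 (neg_le_neg h)]),
      abs_of_nonneg (by linarith)]
    linarith [key b a hb h]

/-- Let `(H_i)` be an i.i.d. sequence of nonnegative random variables with
partial sums `Σ_n`, let `c : [1,∞) → (0,∞)` be continuous, strictly increasing and tending
to `∞`, and suppose `Σ_n / c(n) → κ ∈ (0,∞)` in probability.  If `L(λ) = E[exp(-λ H₁)]` is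
the Laplace transform of `H₁`, then `1 - L(1/x) ∼ κ / c⁻¹(x)` as `x → ∞`, i.e.
`c⁻¹(x) ⬝ (1 - L(1/x)) → κ`. -/
theorem one_sub_laplace_asymptotic
    {Ω : Type*} [MeasurableSpace Ω] (P : Measure Ω) [IsProbabilityMeasure P]
    (H : ℕ → Ω → ℝ) (hmeas : ∀ i, Measurable (H i))
    (hnonneg : ∀ i ω, 0 ≤ H i ω)
    (hindep : iIndepFun H P)
    (hident : ∀ i, IdentDistrib (H i) (H 0) P P)
    (c cinv : ℝ → ℝ)
    (hc_cont : ContinuousOn c (Set.Ici 1))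
    (hc_mono : StrictMonoOn c (Set.Ici 1))
    (hc_pos : ∀ x : ℝ, 1 ≤ x → 0 < c x)
    (hc_top : Tendsto c atTop atTop)
    (hcinv_left : ∀ x : ℝ, 1 ≤ x → cinv (c x) = x)
    (hcinv_right : ∀ y : ℝ, c 1 ≤ y → c (cinv y) = y)
    (κ : ℝ) (hκ : 0 < κ)
    (hprob : ∀ ε : ℝ, 0 < ε →
      Tendsto (fun n : ℕ =>
          (P {ω | ε ≤ |(∑ i ∈ Finset.range n, H i ω) / c n - κ|}).toReal)
        atTop (nhds 0)) :
    Tendsto (fun x : ℝ => cinv x * (1 - ∫ ω, Real.exp (-(1 / x) * H 0 ω) ∂P))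
      atTop (nhds κ) := by
  -- the Laplace transform
  set L : ℝ → ℝ := fun l => ∫ ω, Real.exp (-l * H 0 ω) ∂P with hLdef
  -- integrability of bounded exponentials
  have hint : ∀ (f : Ω → ℝ), Measurable f → (∀ ω, 0 ≤ f ω) →
      Integrable (fun ω => Real.exp (-f ω)) P := by
    intro f hf hf0
    refine Integrable.mono' (integrable_const 1)
      (hf.neg.exp.aestronglyMeasurable) (ae_of_all _ fun ω => ?_)
    rw [Real.norm_eq_abs, abs_of_pos (Real.exp_pos _)]
    exact Real.exp_le_one_iff.2 (by linarith [hf0 ω])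
  have hL_int : ∀ l : ℝ, 0 ≤ l → Integrable (fun ω => Real.exp (-l * H 0 ω)) P := by
    intro l hl
    have := hint (fun ω => l * H 0 ω) ((hmeas 0).const_mul l)
      (fun ω => mul_nonneg hl (hnonneg 0 ω))
    simpa [neg_mul] using this
  have hL_mgf : ∀ l : ℝ, L l = mgf (H 0) P (-l) := fun l => rfl
  have hL_pos : ∀ l : ℝ, 0 ≤ l → 0 < L l := by
    intro l hl
    rw [hL_mgf]
    exact mgf_pos (by simpa using hL_int l hl)
  have hL_le_one : ∀ l : ℝ, 0 ≤ l → L l ≤ 1 := by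
    intro l hl
    have : L l ≤ ∫ _ω, (1 : ℝ) ∂P := by
      refine integral_mono (hL_int l hl) (integrable_const 1) fun ω => ?_
      exact Real.exp_le_one_iff.2 (by nlinarith [hnonneg 0 ω])
    simpa using this
  have hL_anti : ∀ s t : ℝ, 0 ≤ s → s ≤ t → L t ≤ L s := by
    intro s t hs hst
    refine integral_mono (hL_int t (hs.trans hst)) (hL_int s hs) fun ω => ?_
    exact Real.exp_le_exp.2 (by nlinarith [hnonneg 0 ω])
  -- identically distributed mgf's
  have hmgf_eq : ∀ (i : ℕ) (t : ℝ), mgf (H i) P t = mgf (H 0) P t := by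
    intro i t
    exact ((hident i).comp (Real.measurable_exp.comp (measurable_id.const_mul t))).integral_eq
  have hprod : ∀ (n : ℕ) (t : ℝ),
      mgf (∑ i ∈ Finset.range n, H i) P t = (mgf (H 0) P t) ^ n := by
    intro n t
    rw [hindep.mgf_sum hmeas]
    rw [Finset.prod_congr rfl fun i _ => hmgf_eq i t, Finset.prod_const, Finset.card_range]
  set a : ℕ → ℝ := fun n => L (1 / c n) with hadef
  have hcn_pos : ∀ n : ℕ, 1 ≤ n → 0 < c n := fun n hn => hc_pos _ (by exact_mod_cast hn)
  have ha_pos : ∀ n : ℕ, 1 ≤ n → 0 < a n :=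
    fun n hn => hL_pos _ (one_div_nonneg.2 (hcn_pos n hn).le)
  have ha_le : ∀ n : ℕ, 1 ≤ n → a n ≤ 1 :=
    fun n hn => hL_le_one _ (one_div_nonneg.2 (hcn_pos n hn).le)
  -- writing the expectation as a power of the Laplace transform
  have hstep : ∀ n : ℕ,
      (∫ ω, Real.exp (-((∑ i ∈ Finset.range n, H i ω) / c n)) ∂P) = (a n) ^ n := by
    intro n
    have heq : ∀ ω, -((∑ i ∈ Finset.range n, H i ω) / c n)
        = (-(1 / c n)) * (∑ i ∈ Finset.range n, H i) ω := by
      intro ω; rw [Finset.sum_apply]; ring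
    calc (∫ ω, Real.exp (-((∑ i ∈ Finset.range n, H i ω) / c n)) ∂P)
        = mgf (∑ i ∈ Finset.range n, H i) P (-(1 / c n)) := by
          unfold mgf
          exact integral_congr_ae (ae_of_all _ fun ω => congrArg Real.exp (heq ω))
      _ = (mgf (H 0) P (-(1 / c n))) ^ n := hprod n _
      _ = (a n) ^ n := rfl
  -- the expectation converges to exp(-κ)
  have keyB : Tendsto (fun n : ℕ => (a n) ^ n) atTop (nhds (Real.exp (-κ))) := by
    have main : Tendsto
        (fun n : ℕ => ∫ ω, Real.exp (-((∑ i ∈ Finset.range n, H i ω) / c n)) ∂P)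
        atTop (nhds (Real.exp (-κ))) := by
      rw [Metric.tendsto_atTop]
      intro ε hε
      have hδ : (0:ℝ) < ε / 2 := by linarith
      obtain ⟨N1, hN1⟩ := (Metric.tendsto_atTop.1 (hprob (ε/2) hδ)) (ε/2) hδ
      refine ⟨max N1 1, fun n hn => ?_⟩
      have hn1 : 1 ≤ n := le_trans (le_max_right _ _) hn
      have hnN : N1 ≤ n := le_trans (le_max_left _ _) hn
      have hcpos := hcn_pos n hn1
      set Y : Ω → ℝ := fun ω => (∑ i ∈ Finset.range n, H i ω) / c n with hYdef
      have hYmeas : Measurable Y :=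
        (Finset.measurable_sum (Finset.range n) fun i _ => hmeas i).div_const _
      have hYnonneg : ∀ ω, 0 ≤ Y ω := fun ω =>
        div_nonneg (Finset.sum_nonneg fun i _ => hnonneg i ω) hcpos.le
      have hintY : Integrable (fun ω => Real.exp (-Y ω)) P := hint Y hYmeas hYnonneg
      set S : Set Ω := {ω | ε/2 ≤ |Y ω - κ|} with hSdef
      have hSmeas : MeasurableSet S :=
        measurableSet_le measurable_const ((hYmeas.sub measurable_const).abs)
      have hPS : (P S).toReal < ε / 2 := by
        have := hN1 n hnN
        rw [Real.dist_eq] at this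
        calc (P S).toReal ≤ |(P S).toReal - 0| := by
              rw [sub_zero]; exact le_abs_self _
          _ < ε/2 := this
      have hbound : ∀ ω, |Real.exp (-Y ω) - Real.exp (-κ)|
          ≤ ε/2 + S.indicator (fun _ => (1:ℝ)) ω := by
        intro ω
        by_cases h : ω ∈ S
        · rw [Set.indicator_of_mem h]
          have h1 : Real.exp (-Y ω) ≤ 1 := Real.exp_le_one_iff.2 (by linarith [hYnonneg ω])
          have h2 : Real.exp (-κ) ≤ 1 := Real.exp_le_one_iff.2 (by linarith)
          have h3 := Real.exp_pos (-Y ω)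
          have h4 := Real.exp_pos (-κ)
          rw [abs_sub_le_iff]
          constructor <;> nlinarith
        · rw [Set.indicator_of_notMem h, add_zero]
          have h5 : |Y ω - κ| < ε/2 := by
            by_contra hcon
            exact h (by simpa [hSdef] using le_of_not_gt hcon)
          exact le_trans (exp_neg_abs_sub_le (hYnonneg ω) hκ.le) h5.le
      have hintg : Integrable (fun ω => ε/2 + S.indicator (fun _ => (1:ℝ)) ω) P := by
        refine (integrable_const _).add ?_
        exact (integrable_const (1:ℝ)).indicator hSmeas
      calc dist (∫ ω, Real.exp (-Y ω) ∂P) (Real.exp (-κ))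
          = |∫ ω, (Real.exp (-Y ω) - Real.exp (-κ)) ∂P| := by
            rw [Real.dist_eq, integral_sub hintY (integrable_const _), integral_const,
              probReal_univ, one_smul]
        _ ≤ ∫ ω, |Real.exp (-Y ω) - Real.exp (-κ)| ∂P := by
            simpa [Real.norm_eq_abs] using
              norm_integral_le_integral_norm (μ := P)
                (fun ω => Real.exp (-Y ω) - Real.exp (-κ))
        _ ≤ ∫ ω, (ε/2 + S.indicator (fun _ => (1:ℝ)) ω) ∂P := by
            refine integral_mono ((hintY.sub (integrable_const _)).abs) hintg hbound
        _ = ε/2 + (P S).toReal := by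
            rw [integral_add (integrable_const _) ((integrable_const (1:ℝ)).indicator hSmeas),
              integral_const, probReal_univ, one_smul,
              integral_indicator_const _ hSmeas]
            simp [Measure.real]
        _ < ε := by linarith
    exact main.congr fun n => hstep n
  -- logarithmic manipulation: n log(a n) → -κ
  have hlog : Tendsto (fun n : ℕ => (n:ℝ) * Real.log (a n)) atTop (nhds (-κ)) := by
    have h1 : Tendsto (fun n : ℕ => Real.log ((a n) ^ n)) atTop
        (nhds (Real.log (Real.exp (-κ)))) :=
      ((Real.continuousAt_log (Real.exp_pos _).ne').tendsto).comp keyB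
    rw [Real.log_exp] at h1
    exact h1.congr fun n => by rw [Real.log_pow]
  have hlog0 : Tendsto (fun n : ℕ => Real.log (a n)) atTop (nhds 0) := by
    have hninv : Tendsto (fun n : ℕ => ((n:ℝ))⁻¹) atTop (nhds 0) :=
      tendsto_inv_atTop_nhds_zero_nat
    have h2 := hninv.mul hlog
    rw [zero_mul] at h2
    refine h2.congr' ?_
    filter_upwards [eventually_ge_atTop 1] with n hn
    have : (n:ℝ) ≠ 0 := Nat.cast_ne_zero.2 (by omega)
    field_simp
  have ha1 : Tendsto a atTop (nhds 1) := by
    have h3 := (Real.continuous_exp.tendsto 0).comp hlog0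
    rw [Real.exp_zero] at h3
    refine h3.congr' ?_
    filter_upwards [eventually_ge_atTop 1] with n hn
    exact Real.exp_log (ha_pos n hn)
  have hnlog : Tendsto (fun n : ℕ => (n:ℝ) * (-Real.log (a n))) atTop (nhds κ) := by
    have := hlog.neg
    rw [neg_neg] at this
    exact this.congr fun n => by ring
  -- n (1 - a n) → κ by squeezing
  have hmain : Tendsto (fun n : ℕ => (n:ℝ) * (1 - a n)) atTop (nhds κ) := by
    have hlow : Tendsto (fun n : ℕ => ((n:ℝ) * (-Real.log (a n))) * a n) atTop
        (nhds κ) := by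
      have := hnlog.mul ha1
      rwa [mul_one] at this
    refine tendsto_of_tendsto_of_tendsto_of_le_of_le' hlow hnlog ?_ ?_
    · filter_upwards [eventually_ge_atTop 1] with n hn
      have hp := ha_pos n hn
      have hinv := Real.log_le_sub_one_of_pos (inv_pos.2 hp)
      rw [Real.log_inv] at hinv
      have hc1 : a n * (a n)⁻¹ = 1 := mul_inv_cancel₀ hp.ne'
      have key : a n * (-Real.log (a n)) ≤ 1 - a n := by nlinarith
      have hn0 : (0:ℝ) ≤ (n:ℝ) := Nat.cast_nonneg n
      calc (n:ℝ) * (-Real.log (a n)) * a n = (n:ℝ) * (a n * (-Real.log (a n))) := by ring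
        _ ≤ (n:ℝ) * (1 - a n) := mul_le_mul_of_nonneg_left key hn0
    · filter_upwards [eventually_ge_atTop 1] with n hn
      have hp := ha_pos n hn
      have h6 := Real.log_le_sub_one_of_pos hp
      exact mul_le_mul_of_nonneg_left (by linarith) (Nat.cast_nonneg n)
  -- inverse function facts
  have hcinv_ge : ∀ b : ℝ, 1 ≤ b → ∀ x : ℝ, c b ≤ x → b ≤ cinv x := by
    intro b hb x hx
    obtain ⟨M, hMx, hMb⟩ := ((hc_top.eventually_ge_atTop x).and (eventually_ge_atTop b)).exists
    have hsub : Set.Icc b M ⊆ Set.Ici 1 := fun y hy => le_trans hb hy.1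
    have hIVT : Set.Icc (c b) (c M) ⊆ c '' Set.Icc b M :=
      intermediate_value_Icc hMb (hc_cont.mono hsub)
    obtain ⟨y, hy, hyx⟩ := hIVT ⟨hx, hMx⟩
    rw [← hyx, hcinv_left y (le_trans hb hy.1)]
    exact hy.1
  have hcinv_top : Tendsto cinv atTop atTop := by
    refine tendsto_atTop.2 fun b => ?_
    filter_upwards [eventually_ge_atTop (c (max b 1))] with x hx
    exact le_trans (le_max_left b 1) (hcinv_ge _ (le_max_right b 1) x hx)
  have hfloor : Tendsto (fun x : ℝ => ⌊cinv x⌋₊) atTop atTop :=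
    tendsto_nat_floor_atTop.comp hcinv_top
  -- the two squeezing sequences
  have hsub1 : Tendsto (fun n : ℕ => 1 - a n) atTop (nhds 0) := by
    have := (tendsto_const_nhds (x := (1:ℝ)) (f := atTop)).sub ha1
    rwa [sub_self] at this
  have hg2 : Tendsto (fun n : ℕ => ((n:ℝ) + 1) * (1 - a n)) atTop (nhds κ) := by
    have := hmain.add hsub1
    rw [add_zero] at this
    exact this.congr fun n => by ring
  have hshift : Tendsto (fun n : ℕ => ((n:ℝ) + 1) * (1 - a (n + 1))) atTop (nhds κ) := by
    have := hmain.comp (tendsto_add_atTop_nat 1)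
    exact this.congr fun n => by simp only [Function.comp_apply]; push_cast; ring
  have hsub1' : Tendsto (fun n : ℕ => 1 - a (n + 1)) atTop (nhds 0) :=
    hsub1.comp (tendsto_add_atTop_nat 1)
  have hg1 : Tendsto (fun n : ℕ => (n:ℝ) * (1 - a (n + 1))) atTop (nhds κ) := by
    have := hshift.sub hsub1'
    rw [sub_zero] at this
    exact this.congr fun n => by ring
  -- final squeeze
  have hmono := hc_mono.monotoneOn
  show Tendsto (fun x : ℝ => cinv x * (1 - L (1 / x))) atTop (nhds κ)
  refine tendsto_of_tendsto_of_tendsto_of_le_of_le'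
    (hg1.comp hfloor) (hg2.comp hfloor) ?_ ?_
  · filter_upwards [eventually_ge_atTop (c 1)] with x hx
    set n := ⌊cinv x⌋₊ with hndef
    have h1 : 1 ≤ cinv x := hcinv_ge 1 le_rfl x hx
    have hn1 : 1 ≤ n := Nat.le_floor (by exact_mod_cast h1)
    have hn1' : (1:ℝ) ≤ (n:ℝ) := by exact_mod_cast hn1
    have hfl : (n:ℝ) ≤ cinv x := Nat.floor_le (by linarith)
    have hfu : cinv x ≤ (n:ℝ) + 1 := (Nat.lt_floor_add_one _).le
    have hx_eq : c (cinv x) = x := hcinv_right x hx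
    have hxle : x ≤ c ((n:ℝ) + 1) := by
      rw [← hx_eq]
      exact hmono (Set.mem_Ici.2 h1) (Set.mem_Ici.2 (by linarith)) hfu
    have hcn1_pos : 0 < c ((n:ℝ) + 1) := hc_pos _ (by linarith)
    have hx_pos : 0 < x := lt_of_lt_of_le (hc_pos 1 le_rfl) hx
    have hb2 : L (1 / x) ≤ L (1 / c ((n:ℝ) + 1)) :=
      hL_anti _ _ (by positivity) (one_div_le_one_div_of_le hx_pos hxle)
    have hcast : ((n + 1 : ℕ) : ℝ) = (n:ℝ) + 1 := by push_cast; ring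
    have han1 : a (n + 1) = L (1 / c ((n:ℝ) + 1)) := by
      show L (1 / c ((n + 1 : ℕ) : ℝ)) = _; rw [hcast]
    have hL1 : L (1 / x) ≤ 1 := hL_le_one _ (by positivity)
    have h7 : 1 - a (n + 1) ≤ 1 - L (1 / x) := by rw [han1]; linarith
    have h8 : 0 ≤ 1 - a (n + 1) := by linarith [ha_le (n+1) (by omega)]
    exact mul_le_mul hfl h7 h8 (by linarith)
  · filter_upwards [eventually_ge_atTop (c 1)] with x hx
    set n := ⌊cinv x⌋₊ with hndef
    have h1 : 1 ≤ cinv x := hcinv_ge 1 le_rfl x hx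
    have hn1 : 1 ≤ n := Nat.le_floor (by exact_mod_cast h1)
    have hn1' : (1:ℝ) ≤ (n:ℝ) := by exact_mod_cast hn1
    have hfl : (n:ℝ) ≤ cinv x := Nat.floor_le (by linarith)
    have hfu : cinv x ≤ (n:ℝ) + 1 := (Nat.lt_floor_add_one _).le
    have hx_eq : c (cinv x) = x := hcinv_right x hx
    have hcnle : c (n:ℝ) ≤ x := by
      rw [← hx_eq]
      exact hmono (Set.mem_Ici.2 hn1') (Set.mem_Ici.2 h1) hfl
    have hcn_pos' : 0 < c (n:ℝ) := hc_pos _ hn1'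
    have hx_pos : 0 < x := lt_of_lt_of_le (hc_pos 1 le_rfl) hx
    have hb1 : L (1 / c (n:ℝ)) ≤ L (1 / x) :=
      hL_anti _ _ (by positivity) (one_div_le_one_div_of_le hcn_pos' hcnle)
    have han : a n = L (1 / c (n:ℝ)) := rfl
    have hL1 : L (1 / x) ≤ 1 := hL_le_one _ (by positivity)
    have h7 : 1 - L (1 / x) ≤ 1 - a n := by rw [han]; linarith
    exact mul_le_mul hfu h7 (by linarith) (by linarith)
end

section
/- Assume the random walk oscillates, i.e. limsup_n S_n = +∞ and liminf_n S_n = −∞ almost surely, so that the strict descending ladder epochs T₀ = 0, T_{n+1} = min{k > T_n : S_k < S_{T_n}} are almost surely finite. Let H_n = −S_{T_n} be the ladder heights and let M₁ = max{S_k : 0 ≤ k < T₁}. For x > 0 and y > 0 let Λ(x,y) denote the event that the walk (S_k)_{k≥0} enters the interval (y,∞) strictly before it enters (−∞,−x). Then P(Λ(x,y)) ≤ P(M₁ > y) · Σ_{k=0}^∞ P(H_k ≤ x), where the (possibly infinite) series Σ_{k=0}^∞ P(H_k ≤ x) is the renewal function of the ladder height process. -/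
open MeasureTheory ProbabilityTheory Filter

noncomputable section

/-- Strict descending ladder epochs: `T₀ = 0`, `T_{n+1} = min {k > T_n : S_k < S_{T_n}}`
(with the convention `sInf ∅ = 0`). -/
def ladderEpoch {Ω : Type*} (ξ : ℕ → Ω → ℝ) : ℕ → Ω → ℕ
  | 0 => fun _ => 0
  | n + 1 => fun ω =>
      sInf {k | ladderEpoch ξ n ω < k ∧ walk ξ k ω < walk ξ (ladderEpoch ξ n ω) ω}

/-- Ladder heights `H_n = -S_{T_n}`. -/
def ladderHeight {Ω : Type*} (ξ : ℕ → Ω → ℝ) (n : ℕ) (ω : Ω) : ℝ :=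
  - walk ξ (ladderEpoch ξ n ω) ω

/-- `M₁ = max {S_k : 0 ≤ k < T₁}`. -/
def ladderOvershoot {Ω : Type*} (ξ : ℕ → Ω → ℝ) (ω : Ω) : ℝ :=
  sSup ((fun k => walk ξ k ω) '' {k | k < ladderEpoch ξ 1 ω})

/-- `Λ(x,y)`: the walk enters `(y,∞)` strictly before it enters `(-∞,-x)`. -/
def hitsAboveBeforeBelow {Ω : Type*} (ξ : ℕ → Ω → ℝ) (x y : ℝ) : Set Ω :=
  {ω | ∃ k : ℕ, y < walk ξ k ω ∧ ∀ j ≤ k, -x ≤ walk ξ j ω}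

namespace ExitAux

/-! ### Auxiliary path-level definitions -/

/-- `lad S k n` : `n` is the `k`-th strict descending ladder epoch of the path `S`. -/
def lad (S : ℕ → ℝ) : ℕ → ℕ → Prop
  | 0, n => n = 0
  | k + 1, n => ∃ p, lad S k p ∧ p < n ∧ S n < S p ∧ ∀ i, p < i → i < n → S p ≤ S i

lemma lad_congr {S S' : ℕ → ℝ} : ∀ k n, (∀ j ≤ n, S j = S' j) → lad S k n → lad S' k n
  | 0, n, _, h => h
  | k + 1, n, hag, ⟨p, hp, hpn, hSn, hmin⟩ => by
    refine ⟨p, lad_congr k p (fun j hj => hag j (hj.trans hpn.le)) hp, hpn, ?_, ?_⟩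
    · rw [← hag n le_rfl, ← hag p hpn.le]; exact hSn
    · intro i hpi hin
      rw [← hag p hpn.le, ← hag i hin.le]; exact hmin i hpi hin

/-- partial sums of a finite vector. -/
def pwalk {m : ℕ} (v : Fin m → ℝ) (j : ℕ) : ℝ :=
  ∑ i ∈ Finset.range j, if h : i < m then v ⟨i, h⟩ else 0

lemma measurable_pwalk (m j : ℕ) : Measurable fun v : Fin m → ℝ => pwalk v j := by
  unfold pwalk
  refine Finset.measurable_sum _ fun i _ => ?_
  by_cases h : i < m
  · simpa [h] using measurable_pi_apply (⟨i, h⟩ : Fin m)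
  · simpa [h] using measurable_const

/-- the steps `ξ_n, …, ξ_{n+m-1}` as a random vector. -/
def vec {Ω : Type*} (ξ : ℕ → Ω → ℝ) (n m : ℕ) (ω : Ω) : Fin m → ℝ := fun i => ξ (n + i) ω

lemma measurable_vec {Ω : Type*} [MeasurableSpace Ω] {ξ : ℕ → Ω → ℝ}
    (hmeas : ∀ i, Measurable (ξ i)) (n m : ℕ) : Measurable (vec ξ n m) :=
  measurable_pi_lambda _ fun i => hmeas (n + i)

lemma walk_add {Ω : Type*} (ξ : ℕ → Ω → ℝ) (n j : ℕ) (ω : Ω) :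
    walk ξ (n + j) ω = walk ξ n ω + walk (fun l => ξ (n + l)) j ω := by
  simp [walk, Finset.sum_range_add]

lemma pwalk_vec {Ω : Type*} (ξ : ℕ → Ω → ℝ) (n m j : ℕ) (hj : j ≤ m) (ω : Ω) :
    pwalk (vec ξ n m ω) j = walk ξ (n + j) ω - walk ξ n ω := by
  have : walk (fun l => ξ (n + l)) j ω = pwalk (vec ξ n m ω) j := by
    unfold walk pwalk vec
    refine Finset.sum_congr rfl fun i hi => ?_
    have h : i < m := lt_of_lt_of_le (Finset.mem_range.1 hi) hj
    simp [h]
  rw [← this, walk_add]; ring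

lemma pwalk_vec0 {Ω : Type*} (ξ : ℕ → Ω → ℝ) (m j : ℕ) (hj : j ≤ m) (ω : Ω) :
    pwalk (vec ξ 0 m ω) j = walk ξ j ω := by
  have := pwalk_vec ξ 0 m j hj ω
  simpa [walk] using this

/-! ### Events -/

/-- vector version of the event `{T_k = n, S_{T_k} ≥ -x}`. -/
def eset (x : ℝ) (k n : ℕ) : Set (Fin n → ℝ) := {v | lad (pwalk v) k n ∧ -x ≤ pwalk v n}

/-- vector version of the event `{∃ j ≤ m, partial max exceeds y before going negative}`. -/
def dset (y : ℝ) (m : ℕ) : Set (Fin m → ℝ) :=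
  {v | ∃ j, j ≤ m ∧ y < pwalk v j ∧ ∀ i ≤ j, 0 ≤ pwalk v i}

lemma measurableSet_lad (N : ℕ) : ∀ k n, MeasurableSet {v : Fin N → ℝ | lad (pwalk v) k n}
  | 0, n => by
    by_cases h : n = 0 <;> simp [lad, h]
  | k + 1, n => by
    have hrw : {v : Fin N → ℝ | lad (pwalk v) (k + 1) n} =
        ⋃ p, ({v : Fin N → ℝ | lad (pwalk v) k p} ∩ {v | p < n} ∩
          {v | pwalk v n < pwalk v p} ∩ ⋂ i, {v | p < i → i < n → pwalk v p ≤ pwalk v i}) := by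
      ext v
      simp only [Set.mem_setOf_eq, Set.mem_iUnion, Set.mem_inter_iff, Set.mem_iInter]
      constructor
      · rintro ⟨p, h1, h2, h3, h4⟩; exact ⟨p, ⟨⟨h1, h2⟩, h3⟩, h4⟩
      · rintro ⟨p, ⟨⟨h1, h2⟩, h3⟩, h4⟩; exact ⟨p, h1, h2, h3, h4⟩
    rw [hrw]
    refine MeasurableSet.iUnion fun p => ?_
    refine (((measurableSet_lad N k p).inter ?_).inter ?_).inter ?_
    · by_cases h : p < n <;> simp [h]
    · exact measurableSet_lt (measurable_pwalk N n) (measurable_pwalk N p)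
    · refine MeasurableSet.iInter fun i => ?_
      by_cases h1 : p < i
      · by_cases h2 : i < n
        · simpa [h1, h2] using
            measurableSet_le (measurable_pwalk N p) (measurable_pwalk N i)
        · simp [h1, h2]
      · simp [h1]

lemma measurableSet_eset (x : ℝ) (k n : ℕ) : MeasurableSet (eset x k n) :=
  (measurableSet_lad n k n).inter
    (measurableSet_le measurable_const (measurable_pwalk n n))

lemma measurableSet_dset (y : ℝ) (m : ℕ) : MeasurableSet (dset y m) := by
  have hrw : dset y m =
      ⋃ j, ({v : Fin m → ℝ | j ≤ m} ∩ {v | y < pwalk v j} ∩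
        ⋂ i, {v | i ≤ j → 0 ≤ pwalk v i}) := by
    ext v
    simp only [dset, Set.mem_setOf_eq, Set.mem_iUnion, Set.mem_inter_iff, Set.mem_iInter]
    constructor
    · rintro ⟨j, h1, h2, h3⟩; exact ⟨j, ⟨h1, h2⟩, h3⟩
    · rintro ⟨j, ⟨h1, h2⟩, h3⟩; exact ⟨j, h1, h2, fun i hi => h3 i hi⟩
  rw [hrw]
  refine MeasurableSet.iUnion fun j => ?_
  refine (MeasurableSet.inter ?_ ?_).inter ?_
  · by_cases h : j ≤ m <;> simp [h]
  · exact measurableSet_lt measurable_const (measurable_pwalk m j)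
  · refine MeasurableSet.iInter fun i => ?_
    by_cases h : i ≤ j
    · simpa [h] using measurableSet_le measurable_const (measurable_pwalk m i)
    · simp [h]

variable {Ω : Type*}

/-- `Eev k n` : `T_k = n` (in the `lad` sense) and `S_n ≥ -x`. -/
def Eev (ξ : ℕ → Ω → ℝ) (x : ℝ) (k n : ℕ) : Set Ω := vec ξ 0 n ⁻¹' eset x k n

/-- `Dev n m` : the walk restarted at time `n` exceeds `y` within `m` steps, before going
(strictly) below its starting level. -/
def Dev (ξ : ℕ → Ω → ℝ) (y : ℝ) (n m : ℕ) : Set Ω := vec ξ n m ⁻¹' dset y m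

def Aev (ξ : ℕ → Ω → ℝ) (y : ℝ) (n : ℕ) : Set Ω := ⋃ m, Dev ξ y n m

/-- The (measurable) conull set where the walk is unbounded below. -/
def good (ξ : ℕ → Ω → ℝ) : Set Ω := ⋂ c : ℚ, ⋃ n, {ω | walk ξ n ω < (c : ℝ)}

lemma mem_Eev_iff {ξ : ℕ → Ω → ℝ} {x : ℝ} {k n : ℕ} {ω : Ω} :
    ω ∈ Eev ξ x k n ↔ lad (fun j => walk ξ j ω) k n ∧ -x ≤ walk ξ n ω := by
  have hag : ∀ j ≤ n, pwalk (vec ξ 0 n ω) j = walk ξ j ω := fun j hj => pwalk_vec0 ξ n j hj ω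
  constructor
  · rintro ⟨h1, h2⟩
    exact ⟨lad_congr k n hag h1, by rwa [hag n le_rfl] at h2⟩
  · rintro ⟨h1, h2⟩
    exact ⟨lad_congr k n (fun j hj => (hag j hj).symm) h1, by rwa [hag n le_rfl]⟩

lemma mem_Dev_iff {ξ : ℕ → Ω → ℝ} {y : ℝ} {n m : ℕ} {ω : Ω} :
    ω ∈ Dev ξ y n m ↔ ∃ j, j ≤ m ∧ y < walk ξ (n + j) ω - walk ξ n ω ∧
      ∀ i ≤ j, 0 ≤ walk ξ (n + i) ω - walk ξ n ω := by
  unfold Dev dset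
  simp only [Set.mem_preimage, Set.mem_setOf_eq]
  constructor
  · rintro ⟨j, hj, h1, h2⟩
    exact ⟨j, hj, by rwa [pwalk_vec ξ n m j hj ω] at h1,
      fun i hi => by rw [← pwalk_vec ξ n m i (hi.trans hj) ω]; exact h2 i hi⟩
  · rintro ⟨j, hj, h1, h2⟩
    exact ⟨j, hj, by rwa [pwalk_vec ξ n m j hj ω],
      fun i hi => by rw [pwalk_vec ξ n m i (hi.trans hj) ω]; exact h2 i hi⟩

lemma mem_Aev_iff {ξ : ℕ → Ω → ℝ} {y : ℝ} {n : ℕ} {ω : Ω} :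
    ω ∈ Aev ξ y n ↔ ∃ j, y < walk ξ (n + j) ω - walk ξ n ω ∧
      ∀ i ≤ j, 0 ≤ walk ξ (n + i) ω - walk ξ n ω := by
  unfold Aev
  simp only [Set.mem_iUnion, mem_Dev_iff]
  constructor
  · rintro ⟨m, j, _, h1, h2⟩; exact ⟨j, h1, h2⟩
  · rintro ⟨j, h1, h2⟩; exact ⟨j, j, le_rfl, h1, h2⟩

/-! ### Properties on the good set -/

lemma good_below {ξ : ℕ → Ω → ℝ} {ω : Ω} (hg : ω ∈ good ξ) (T : ℕ) :
    ∃ k, T < k ∧ walk ξ k ω < walk ξ T ω := by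
  set c0 : ℝ := walkMin ξ T ω with hc0
  obtain ⟨q, hq⟩ := exists_rat_lt c0
  have hq' := (Set.mem_iInter.1 hg) q
  obtain ⟨n, hn⟩ := Set.mem_iUnion.1 hq'
  have hn' : walk ξ n ω < c0 := lt_trans hn hq
  have hmin : ∀ j ≤ T, c0 ≤ walk ξ j ω := by
    intro j hj
    exact Finset.inf'_le _ (Finset.mem_range.2 (Nat.lt_succ_of_le hj))
  have hTn : T < n := by
    by_contra h
    push_neg at h
    exact absurd (hmin n h) (not_le.2 hn')
  exact ⟨n, hTn, lt_of_lt_of_le hn' (hmin T le_rfl)⟩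

lemma ladder_facts {ξ : ℕ → Ω → ℝ} {ω : Ω} (hg : ω ∈ good ξ) (k : ℕ) :
    ladderEpoch ξ k ω < ladderEpoch ξ (k + 1) ω ∧
      walk ξ (ladderEpoch ξ (k + 1) ω) ω < walk ξ (ladderEpoch ξ k ω) ω ∧
      ∀ i, ladderEpoch ξ k ω < i → i < ladderEpoch ξ (k + 1) ω →
        walk ξ (ladderEpoch ξ k ω) ω ≤ walk ξ i ω := by
  set T := ladderEpoch ξ k ω
  have hne : {m | T < m ∧ walk ξ m ω < walk ξ T ω}.Nonempty := by
    obtain ⟨m, h1, h2⟩ := good_below hg T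
    exact ⟨m, h1, h2⟩
  have hmem := Nat.sInf_mem hne
  have hdef : ladderEpoch ξ (k + 1) ω = sInf {m | T < m ∧ walk ξ m ω < walk ξ T ω} := rfl
  rw [hdef]
  refine ⟨hmem.1, hmem.2, fun i h1 h2 => ?_⟩
  have := Nat.notMem_of_lt_sInf h2
  simp only [Set.mem_setOf_eq, not_and, not_lt] at this
  exact this h1

lemma lad_iff {ξ : ℕ → Ω → ℝ} {ω : Ω} (hg : ω ∈ good ξ) :
    ∀ k n, lad (fun j => walk ξ j ω) k n ↔ ladderEpoch ξ k ω = n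
  | 0, n => by simp [lad, ladderEpoch, eq_comm]
  | k + 1, n => by
    constructor
    · rintro ⟨p, hp, hpn, hSn, hmin⟩
      have hTp : ladderEpoch ξ k ω = p := (lad_iff hg k p).1 hp
      have hdef : ladderEpoch ξ (k + 1) ω = sInf {m | ladderEpoch ξ k ω < m ∧
          walk ξ m ω < walk ξ (ladderEpoch ξ k ω) ω} := rfl
      rw [hdef, hTp]
      have hne : {m | p < m ∧ walk ξ m ω < walk ξ p ω}.Nonempty := by
        obtain ⟨m, h1, h2⟩ := good_below hg p
        exact ⟨m, h1, h2⟩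
      have hmemn : n ∈ {m | p < m ∧ walk ξ m ω < walk ξ p ω} := ⟨hpn, hSn⟩
      refine le_antisymm (Nat.sInf_le hmemn) ?_
      by_contra h
      push_neg at h
      have hmem := Nat.sInf_mem hne
      exact absurd hmem.2 (not_lt.2 (hmin _ hmem.1 h))
    · intro h
      have hfacts := ladder_facts hg k
      rw [h] at hfacts
      exact ⟨ladderEpoch ξ k ω, (lad_iff hg k _).2 rfl, hfacts.1, hfacts.2.1,
        fun i h1 h2 => hfacts.2.2 i h1 h2⟩

lemma walk_ladder_nonpos {ξ : ℕ → Ω → ℝ} {ω : Ω} (hg : ω ∈ good ξ) :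
    ∀ k, walk ξ (ladderEpoch ξ k ω) ω ≤ 0
  | 0 => by simp [ladderEpoch, walk]
  | k + 1 => le_of_lt (lt_of_lt_of_le (ladder_facts hg k).2.1 (walk_ladder_nonpos hg k))

lemma le_ladderEpoch {ξ : ℕ → Ω → ℝ} {ω : Ω} (hg : ω ∈ good ξ) :
    ∀ k, k ≤ ladderEpoch ξ k ω
  | 0 => Nat.zero_le _
  | k + 1 => Nat.lt_of_le_of_lt (le_ladderEpoch hg k) (ladder_facts hg k).1

/-! ### The pathwise inclusion -/

lemma lambda_subset {ξ : ℕ → Ω → ℝ} {x y : ℝ} :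
    hitsAboveBeforeBelow ξ x y ∩ good ξ ⊆ ⋃ k, ⋃ n, Eev ξ x k n ∩ Aev ξ y n := by
  classical
  rintro ω ⟨⟨m, hym, hbound⟩, hg⟩
  set T : ℕ → ℕ := fun k => ladderEpoch ξ k ω with hT
  set K := Nat.findGreatest (fun k => T k ≤ m) m with hKdef
  have hKm : T K ≤ m :=
    Nat.findGreatest_spec (P := fun k => T k ≤ m) (Nat.zero_le m)
      (show T 0 ≤ m from Nat.zero_le m)
  have hK1 : m < T (K + 1) := by
    by_cases h : K + 1 ≤ m
    · have hlt : Nat.findGreatest (fun k => T k ≤ m) m < K + 1 := by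
        rw [← hKdef]; exact Nat.lt_succ_self K
      exact not_le.1 (Nat.findGreatest_is_greatest (P := fun k => T k ≤ m) (n := m) hlt h)
    · push_neg at h
      exact lt_of_lt_of_le h (le_ladderEpoch hg (K + 1))
  set n := T K with hn
  have hnm : n ≤ m := hKm
  refine Set.mem_iUnion.2 ⟨K, Set.mem_iUnion.2 ⟨n, ?_, ?_⟩⟩
  · refine mem_Eev_iff.2 ⟨(lad_iff hg K n).2 rfl, hbound n hnm⟩
  · refine mem_Aev_iff.2 ⟨m - n, ?_, ?_⟩
    · rw [Nat.add_sub_cancel' hnm]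
      have hSn : walk ξ n ω ≤ 0 := walk_ladder_nonpos hg K
      linarith
    · intro i hi
      rcases Nat.eq_zero_or_pos i with h0 | h0
      · simp [h0]
      · have hni : n + i ≤ m := by omega
        have hlt : n + i < T (K + 1) := lt_of_le_of_lt hni hK1
        have hdef : T (K + 1) = sInf {l | T K < l ∧ walk ξ l ω < walk ξ (T K) ω} := rfl
        rw [hdef] at hlt
        have hnotmem := Nat.notMem_of_lt_sInf hlt
        simp only [Set.mem_setOf_eq, not_and, not_lt] at hnotmem
        have : walk ξ n ω ≤ walk ξ (n + i) ω := hnotmem (by omega)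
        linarith

/-! ### Inclusions into the target events -/

lemma Eev_subset {ξ : ℕ → Ω → ℝ} {x : ℝ} {k n : ℕ} :
    Eev ξ x k n ∩ good ξ ⊆ {ω | ladderHeight ξ k ω ≤ x} := by
  rintro ω ⟨hE, hg⟩
  obtain ⟨h1, h2⟩ := mem_Eev_iff.1 hE
  have hT : ladderEpoch ξ k ω = n := (lad_iff hg k n).1 h1
  simp only [Set.mem_setOf_eq, ladderHeight, hT]
  linarith

lemma Eev_disjoint {ξ : ℕ → Ω → ℝ} {x : ℝ} {k : ℕ} :
    Pairwise (Function.onFun Disjoint fun n => Eev ξ x k n ∩ good ξ) := by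
  intro n n' hnn'
  refine Set.disjoint_left.2 ?_
  rintro ω ⟨hE, hg⟩ ⟨hE', _⟩
  have h1 := (lad_iff hg k n).1 (mem_Eev_iff.1 hE).1
  have h2 := (lad_iff hg k n').1 (mem_Eev_iff.1 hE').1
  exact hnn' (h1 ▸ h2)

lemma Aev_subset {ξ : ℕ → Ω → ℝ} {y : ℝ} (hy : 0 < y) :
    Aev ξ y 0 ∩ good ξ ⊆ {ω | y < ladderOvershoot ξ ω} := by
  rintro ω ⟨hA, hg⟩
  obtain ⟨j, h1, h2⟩ := mem_Aev_iff.1 hA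
  have hw0 : walk ξ 0 ω = 0 := by simp [walk]
  simp only [Nat.zero_add, hw0, sub_zero] at h1 h2
  have hT1 : ladderEpoch ξ 1 ω = sInf {l | 0 < l ∧ walk ξ l ω < 0} := by
    have h0 : ladderEpoch ξ 1 ω =
        sInf {l | ladderEpoch ξ 0 ω < l ∧ walk ξ l ω < walk ξ (ladderEpoch ξ 0 ω) ω} := rfl
    have h00 : ladderEpoch ξ 0 ω = 0 := rfl
    rw [h0, h00, hw0]
  have hne : {l | 0 < l ∧ walk ξ l ω < 0}.Nonempty := by
    obtain ⟨l, hl1, hl2⟩ := good_below hg 0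
    exact ⟨l, hl1, by rwa [hw0] at hl2⟩
  have hjT : j < ladderEpoch ξ 1 ω := by
    rw [hT1]
    by_contra h
    push_neg at h
    have hmem := Nat.sInf_mem hne
    have := h2 _ h
    linarith [hmem.2]
  have hfin : ((fun k => walk ξ k ω) '' {k | k < ladderEpoch ξ 1 ω}).Finite :=
    (Set.finite_Iio _).image _
  have hbdd : BddAbove ((fun k => walk ξ k ω) '' {k | k < ladderEpoch ξ 1 ω}) :=
    hfin.bddAbove
  have hmem : walk ξ j ω ∈ (fun k => walk ξ k ω) '' {k | k < ladderEpoch ξ 1 ω} :=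
    ⟨j, hjT, rfl⟩
  exact lt_of_lt_of_le h1 (le_csSup hbdd hmem)

end ExitAux

open ExitAux in
/-- If the walk oscillates (so the strict descending ladder epochs are
a.s. finite), then for `x > 0`, `y > 0`:
`P(Λ(x,y)) ≤ P(M₁ > y) ⬝ Σ_{k=0}^∞ P(H_k ≤ x)`. -/
theorem exit_problem_upper_bound
    {Ω : Type*} [MeasurableSpace Ω] (P : Measure Ω) [IsProbabilityMeasure P]
    (ξ : ℕ → Ω → ℝ) (hmeas : ∀ i, Measurable (ξ i))
    (hindep : iIndepFun ξ P)
    (hident : ∀ i, IdentDistrib (ξ i) (ξ 0) P P)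
    (hosc : ∀ᵐ ω ∂P, (∀ c : ℝ, ∃ n : ℕ, c < walk ξ n ω) ∧ (∀ c : ℝ, ∃ n : ℕ, walk ξ n ω < c))
    (hladder : ∀ᵐ ω ∂P, ∀ n : ℕ,
      {k | ladderEpoch ξ n ω < k ∧ walk ξ k ω < walk ξ (ladderEpoch ξ n ω) ω}.Nonempty)
    (x y : ℝ) (hx : 0 < x) (hy : 0 < y) :
    P (hitsAboveBeforeBelow ξ x y)
      ≤ P {ω | y < ladderOvershoot ξ ω} * ∑' k : ℕ, P {ω | ladderHeight ξ k ω ≤ x} := by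
  classical
  -- measurability of the building blocks
  have hgood_meas : MeasurableSet (good ξ) := by
    refine MeasurableSet.iInter fun c => MeasurableSet.iUnion fun n => ?_
    exact measurableSet_lt (Finset.measurable_sum _ fun i _ => hmeas i) measurable_const
  have hgood_null : P (good ξ)ᶜ = 0 := by
    have hae : ∀ᵐ ω ∂P, ω ∈ good ξ := by
      filter_upwards [hosc] with ω hω
      exact Set.mem_iInter.2 fun c => Set.mem_iUnion.2 (hω.2 (c : ℝ))
    exact ae_iff.1 hae
  have hEev_meas : ∀ k n, MeasurableSet (Eev ξ x k n) := fun k n =>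
    (measurableSet_eset x k n).preimage (measurable_vec hmeas 0 n)
  have hDev_meas : ∀ n m, MeasurableSet (Dev ξ y n m) := fun n m =>
    (measurableSet_dset y m).preimage (measurable_vec hmeas n m)
  haveI : IsProbabilityMeasure (Measure.map (ξ 0) P) :=
    Measure.isProbabilityMeasure_map (hmeas 0).aemeasurable
  -- law of the shifted step vector
  have hmap : ∀ n m : ℕ, Measure.map (vec ξ n m) P
      = Measure.pi (fun _ : Fin m => Measure.map (ξ 0) P) := by
    intro n m
    refine (Measure.pi_eq fun s hs => ?_).symm
    rw [Measure.map_apply (measurable_vec hmeas n m) (MeasurableSet.univ_pi hs)]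
    set sets : ℕ → Set ℝ :=
      fun l => if h : n ≤ l ∧ l - n < m then s ⟨l - n, h.2⟩ else Set.univ with hsets_def
    have hsets_eq : ∀ i : Fin m, sets (n + (i : ℕ)) = s i := by
      intro i
      have hcond : n ≤ n + (i : ℕ) ∧ n + (i : ℕ) - n < m :=
        ⟨Nat.le_add_right _ _, by simpa using i.isLt⟩
      have hfin : (⟨n + (i : ℕ) - n, hcond.2⟩ : Fin m) = i := Fin.ext (by simp)
      exact (dif_pos hcond).trans (congrArg s hfin)
    have hpre : vec ξ n m ⁻¹' Set.univ.pi s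
        = ⋂ l ∈ Finset.image (fun i : Fin m => n + (i : ℕ)) Finset.univ, ξ l ⁻¹' sets l := by
      ext ω
      simp only [Set.mem_preimage, Set.mem_pi, Set.mem_univ, forall_true_left,
        Set.mem_iInter, Finset.mem_image, Finset.mem_univ, true_and]
      constructor
      · rintro h l ⟨i, rfl⟩
        have := h i
        rw [hsets_eq i]
        exact this
      · intro h i
        have := h (n + (i : ℕ)) ⟨i, rfl⟩
        rwa [hsets_eq i] at this
    rw [hpre, hindep.measure_inter_preimage_eq_mul _ ?_]
    · rw [Finset.prod_image ?_]
      · refine Finset.prod_congr rfl fun i _ => ?_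
        rw [hsets_eq i, ← Measure.map_apply (hmeas _) (hs i), (hident (n + (i : ℕ))).map_eq]
      · intro a _ b _ hab
        exact Fin.ext (Nat.add_left_cancel hab)
    · intro l hl
      obtain ⟨i, _, rfl⟩ := Finset.mem_image.1 hl
      rw [hsets_eq i]
      exact hs i
  -- independence of the pre-`n` part and the `n`-shifted part
  have hindepED : ∀ n m : ℕ, IndepFun (vec ξ 0 n) (vec ξ n m) P := by
    intro n m
    have hdisj : Disjoint (Finset.range n) (Finset.Ico n (n + m)) := by
      simp only [Finset.disjoint_left, Finset.mem_range, Finset.mem_Ico]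
      omega
    have h := hindep.indepFun_finset (Finset.range n) (Finset.Ico n (n + m)) hdisj hmeas
    set φ : (↥(Finset.range n) → ℝ) → (Fin n → ℝ) :=
      fun w i => w ⟨(i : ℕ), Finset.mem_range.2 i.isLt⟩ with hφdef
    set ψ : (↥(Finset.Ico n (n + m)) → ℝ) → (Fin m → ℝ) :=
      fun w i => w ⟨n + (i : ℕ), Finset.mem_Ico.2 ⟨Nat.le_add_right _ _, by omega⟩⟩ with hψdef
    have hφ : Measurable φ := measurable_pi_lambda _ fun i => measurable_pi_apply _
    have hψ : Measurable ψ := measurable_pi_lambda _ fun i => measurable_pi_apply _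
    have hcomp := h.comp hφ hψ
    have h1 : φ ∘ (fun ω (i : ↥(Finset.range n)) => ξ i ω) = vec ξ 0 n := by
      funext ω i
      simp [hφdef, vec]
    have h2 : ψ ∘ (fun ω (i : ↥(Finset.Ico n (n + m))) => ξ i ω) = vec ξ n m := by
      funext ω i
      simp [hψdef, vec]
    rwa [h1, h2] at hcomp
  -- measure of `Dev` does not depend on the shift
  have hDev_eq : ∀ n m, P (Dev ξ y n m)
      = (Measure.pi fun _ : Fin m => Measure.map (ξ 0) P) (dset y m) := by
    intro n m
    rw [show Dev ξ y n m = vec ξ n m ⁻¹' dset y m from rfl,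
      ← Measure.map_apply (measurable_vec hmeas n m) (measurableSet_dset y m), hmap n m]
  have hDev_mono : ∀ n, Monotone fun m => Dev ξ y n m := by
    intro n m m' hmm' ω hω
    obtain ⟨j, hj, h1, h2⟩ := mem_Dev_iff.1 hω
    exact mem_Dev_iff.2 ⟨j, hj.trans hmm', h1, h2⟩
  -- the key factorization
  have hAkey : ∀ k n, P (Eev ξ x k n ∩ Aev ξ y n) = P (Eev ξ x k n) * P (Aev ξ y 0) := by
    intro k n
    have hU : ∀ n', P (Aev ξ y n') = ⨆ m, P (Dev ξ y n' m) := fun n' =>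
      Directed.measure_iUnion (hDev_mono n').directed_le
    have h2 : ∀ m, P (Eev ξ x k n ∩ Dev ξ y n m) = P (Eev ξ x k n) * P (Dev ξ y n m) :=
      fun m => (hindepED n m).measure_inter_preimage_eq_mul _ _
        (measurableSet_eset x k n) (measurableSet_dset y m)
    have h1 : P (Eev ξ x k n ∩ Aev ξ y n) = ⨆ m, P (Eev ξ x k n ∩ Dev ξ y n m) := by
      rw [show Eev ξ x k n ∩ Aev ξ y n = ⋃ m, Eev ξ x k n ∩ Dev ξ y n m from
        Set.inter_iUnion _ _]
      exact Directed.measure_iUnion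
        (Monotone.directed_le fun m m' hmm' =>
          Set.inter_subset_inter_right _ (hDev_mono n hmm'))
    rw [h1]
    calc (⨆ m, P (Eev ξ x k n ∩ Dev ξ y n m))
        = ⨆ m, P (Eev ξ x k n) * P (Dev ξ y n m) := by simp_rw [h2]
      _ = P (Eev ξ x k n) * ⨆ m, P (Dev ξ y n m) := (ENNReal.mul_iSup _ _).symm
      _ = P (Eev ξ x k n) * ⨆ m, P (Dev ξ y 0 m) := by
          congr 1
          refine iSup_congr fun m => ?_
          rw [hDev_eq n m, hDev_eq 0 m]
      _ = P (Eev ξ x k n) * P (Aev ξ y 0) := by rw [← hU 0]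
  -- the sum over the ladder index
  have hEsum : ∀ k, ∑' n, P (Eev ξ x k n) ≤ P {ω | ladderHeight ξ k ω ≤ x} := by
    intro k
    have heq : ∀ n, P (Eev ξ x k n) = P (Eev ξ x k n ∩ good ξ) := by
      intro n
      have hd := measure_inter_add_diff (μ := P) (Eev ξ x k n) hgood_meas
      have hnull : P (Eev ξ x k n \ good ξ) = 0 :=
        measure_mono_null (fun ω h => h.2) hgood_null
      rw [hnull, add_zero] at hd
      exact hd.symm
    calc (∑' n, P (Eev ξ x k n)) = ∑' n, P (Eev ξ x k n ∩ good ξ) := tsum_congr heq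
      _ = P (⋃ n, Eev ξ x k n ∩ good ξ) :=
          (measure_iUnion Eev_disjoint fun n => (hEev_meas k n).inter hgood_meas).symm
      _ ≤ P {ω | ladderHeight ξ k ω ≤ x} :=
          measure_mono (Set.iUnion_subset fun n => Eev_subset)
  -- bounding P(Aev) by the overshoot event
  have hAle : P (Aev ξ y 0) ≤ P {ω | y < ladderOvershoot ξ ω} := by
    have hd := measure_inter_add_diff (μ := P) (Aev ξ y 0) hgood_meas
    have hnull : P (Aev ξ y 0 \ good ξ) = 0 :=
      measure_mono_null (fun ω h => h.2) hgood_null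
    rw [hnull, add_zero] at hd
    rw [← hd]
    exact measure_mono (Aev_subset hy)
  -- putting everything together
  have hstart : P (hitsAboveBeforeBelow ξ x y)
      = P (hitsAboveBeforeBelow ξ x y ∩ good ξ) := by
    have hd := measure_inter_add_diff (μ := P) (hitsAboveBeforeBelow ξ x y) hgood_meas
    have hnull : P (hitsAboveBeforeBelow ξ x y \ good ξ) = 0 :=
      measure_mono_null (fun ω h => h.2) hgood_null
    rw [hnull, add_zero] at hd
    exact hd.symm
  calc P (hitsAboveBeforeBelow ξ x y)
      = P (hitsAboveBeforeBelow ξ x y ∩ good ξ) := hstart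
    _ ≤ P (⋃ k, ⋃ n, Eev ξ x k n ∩ Aev ξ y n) := measure_mono lambda_subset
    _ ≤ ∑' k, P (⋃ n, Eev ξ x k n ∩ Aev ξ y n) := measure_iUnion_le _
    _ ≤ ∑' k, ∑' n, P (Eev ξ x k n ∩ Aev ξ y n) :=
        ENNReal.tsum_le_tsum fun k => measure_iUnion_le _
    _ = ∑' k, ∑' n, P (Eev ξ x k n) * P (Aev ξ y 0) := by
        refine tsum_congr fun k => tsum_congr fun n => hAkey k n
    _ = (∑' k, ∑' n, P (Eev ξ x k n)) * P (Aev ξ y 0) := by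
        rw [← ENNReal.tsum_mul_right]
        exact tsum_congr fun k => ENNReal.tsum_mul_right
    _ ≤ (∑' k, P {ω | ladderHeight ξ k ω ≤ x}) * P (Aev ξ y 0) :=
        mul_le_mul_left (ENNReal.tsum_le_tsum hEsum) _
    _ ≤ (∑' k, P {ω | ladderHeight ξ k ω ≤ x}) * P {ω | y < ladderOvershoot ξ ω} :=
        mul_le_mul_right hAle _
    _ = P {ω | y < ladderOvershoot ξ ω} * ∑' k, P {ω | ladderHeight ξ k ω ≤ x} :=
        mul_comm _ _
end
end

section
/- Let a : [1,∞) → [1,∞) be a continuous, strictly increasing, unbounded function with a(1) = 1 whose inverse a⁻¹ is regularly varying at infinity with index α > 0. Assume sup_{m≥1} P(S_m < 0) < 1 and sup_{m≥1} P(S_m > 0) < 1, and assume there exists a constant C such that for all integers n ≥ 1 and all reals x ≥ 1: P(S_n > x) ≤ C·n/a⁻¹(x) and P(S_n < −x) ≤ C·n/a⁻¹(x). Then there exists a constant C′ such that for all integers n ≥ 1 and all reals x ≥ 1: P(max_{0≤k≤n} S_k > x) ≤ C′·n/a⁻¹(x), P(−min_{0≤k≤n} S_k > x) ≤ C′·n/a⁻¹(x),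 P(max_{0≤k≤n} |S_k| > x) ≤ C′·n/a⁻¹(x), and P(V^#_n > x) ≤ C′·n/a⁻¹(x). -/
open MeasureTheory ProbabilityTheory Filter

noncomputable section

/-- `max_{0 ≤ k ≤ n} |S_k|`. -/
def walkAbsMax {Ω : Type*} (ξ : ℕ → Ω → ℝ) (n : ℕ) (ω : Ω) : ℝ :=
  (Finset.range (n + 1)).sup' Finset.nonempty_range_add_one fun k => |walk ξ k ω|

section AuxLemmas

variable {Ω : Type*} [MeasurableSpace Ω] {P : Measure Ω} [IsProbabilityMeasure P]
  {ξ : ℕ → Ω → ℝ}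

lemma walk_measurable (hmeas : ∀ i, Measurable (ξ i)) (n : ℕ) : Measurable (walk ξ n) :=
  Finset.measurable_sum _ (fun i _ => hmeas i)

lemma walk_neg_apply (ξ : ℕ → Ω → ℝ) (k : ℕ) (ω : Ω) :
    walk (fun i ω => -ξ i ω) k ω = -walk ξ k ω := by
  simp [walk]

lemma walkMax_neg_eq (ξ : ℕ → Ω → ℝ) (n : ℕ) (ω : Ω) :
    walkMax (fun i ω => -ξ i ω) n ω = -walkMin ξ n ω := by
  simp only [walkMax, walkMin]
  have hx : ∀ k, walk (fun i ω => -ξ i ω) k ω = -walk ξ k ω := fun k => walk_neg_apply ξ k ω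
  apply le_antisymm
  · apply Finset.sup'_le
    intro k hk
    rw [hx k]
    exact neg_le_neg (Finset.inf'_le _ hk)
  · rw [neg_le]
    apply Finset.le_inf'
    intro b hb
    have h1 : -walk ξ b ω ≤ (Finset.range (n+1)).sup' Finset.nonempty_range_add_one
        fun k => walk (fun i ω => -ξ i ω) k ω := by
      have := Finset.le_sup' (fun k => walk (fun i ω => -ξ i ω) k ω) hb
      rwa [hx b] at this
    exact neg_le.1 h1

/-- Block sums of an i.i.d. sequence are distributed as the walk. -/
lemma block_identDistrib (hmeas : ∀ i, Measurable (ξ i))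
    (hindep : iIndepFun ξ P)
    (hident : ∀ i, IdentDistrib (ξ i) (ξ 0) P P) (k : ℕ) :
    ∀ m : ℕ, IdentDistrib (fun ω => ∑ j ∈ Finset.range m, ξ (k + j) ω) (walk ξ m) P P := by
  intro m
  induction m with
  | zero =>
      have h : (fun ω : Ω => ∑ j ∈ Finset.range 0, ξ (k + j) ω) = walk ξ 0 := by
        funext ω; simp [walk]
      rw [h]
      exact IdentDistrib.refl (walk_measurable hmeas 0).aemeasurable
  | succ m ih =>
      set f := fun ω => ∑ j ∈ Finset.range m, ξ (k + j) ω with hf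
      have hfm : Measurable f := Finset.measurable_sum _ fun i _ => hmeas _
      have hgm : Measurable (ξ (k + m)) := hmeas _
      have h1 : IndepFun f (ξ (k + m)) P := by
        have hs : k + m ∉ (Finset.range m).image (fun j => k + j) := by
          simp only [Finset.mem_image, Finset.mem_range, not_exists]
          intro j; omega
        have h0 := hindep.indepFun_finsetSum_of_notMem hmeas hs
        have hsum : (∑ j ∈ (Finset.range m).image (fun j => k + j), ξ j) = f := by
          funext ω
          rw [Finset.sum_apply]
          rw [Finset.sum_image (by intro a _ b _ h; simp only at h; omega)]
        rwa [hsum] at h0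
      have h1' : IndepFun (walk ξ m) (ξ m) P := by
        have h0 := hindep.indepFun_sum_range_succ hmeas m
        have hsum : (∑ j ∈ Finset.range m, ξ j) = walk ξ m := by
          funext ω; rw [Finset.sum_apply]; rfl
        rwa [hsum] at h0
      have e1 := (indepFun_iff_map_prod_eq_prod_map_map hfm.aemeasurable hgm.aemeasurable).1 h1
      have e2 := (indepFun_iff_map_prod_eq_prod_map_map
        (walk_measurable hmeas m).aemeasurable (hmeas m).aemeasurable).1 h1'
      have hpair : IdentDistrib (fun ω => (f ω, ξ (k+m) ω))
          (fun ω => (walk ξ m ω, ξ m ω)) P P := by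
        refine ⟨(hfm.prodMk hgm).aemeasurable,
          ((walk_measurable hmeas m).prodMk (hmeas m)).aemeasurable, ?_⟩
        rw [e1, e2, ih.map_eq, ((hident (k+m)).trans (hident m).symm).map_eq]
      have hcomp := hpair.comp (u := fun p : ℝ × ℝ => p.1 + p.2)
        (measurable_fst.add measurable_snd)
      have e3 : ((fun p : ℝ × ℝ => p.1 + p.2) ∘ fun ω => (f ω, ξ (k+m) ω))
          = fun ω => ∑ j ∈ Finset.range (m+1), ξ (k + j) ω := by
        funext ω; simp [hf, Finset.sum_range_succ]
      have e4 : ((fun p : ℝ × ℝ => p.1 + p.2) ∘ fun ω => (walk ξ m ω, ξ m ω))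
          = walk ξ (m+1) := by
        funext ω; simp [walk, Finset.sum_range_succ]
      rwa [e3, e4] at hcomp

/-- Ottaviani-type maximal inequality. -/
lemma ottaviani (hmeas : ∀ i, Measurable (ξ i))
    (hindep : iIndepFun ξ P)
    (hident : ∀ i, IdentDistrib (ξ i) (ξ 0) P P)
    {c : ℝ}
    (hneg : ∀ m : ℕ, 1 ≤ m → (P {ω | walk ξ m ω < 0}).toReal ≤ c)
    (n : ℕ) (x : ℝ) :
    (1 - c) * (P {ω | x < walkMax ξ n ω}).toReal ≤ (P {ω | x < walk ξ n ω}).toReal := by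
  classical
  set A : ℕ → Set Ω := fun k =>
    {ω | x < walk ξ k ω} ∩ ⋂ j ∈ Finset.range k, {ω | walk ξ j ω ≤ x} with hA_def
  set T : ℕ → Ω → ℝ := fun k ω => ∑ i ∈ Finset.Ico k n, ξ i ω with hT_def
  set B : ℕ → Set Ω := fun k => {ω | 0 ≤ T k ω} with hB_def
  have hAmeas : ∀ k, MeasurableSet (A k) := fun k =>
    (measurableSet_lt measurable_const (walk_measurable hmeas k)).inter
      (MeasurableSet.biInter (Set.to_countable _)
        fun j _ => measurableSet_le (walk_measurable hmeas j) measurable_const)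
  have hTmeas : ∀ k, Measurable (T k) := fun k =>
    Finset.measurable_sum _ (fun i _ => hmeas i)
  have hBmeas : ∀ k, MeasurableSet (B k) := fun k =>
    measurableSet_le measurable_const (hTmeas k)
  -- independence of A k and B k
  have hkey : ∀ k, P (A k ∩ B k) = P (A k) * P (B k) := by
    intro k
    set S1 : Set ℕ := {i | i < k}
    set S2 : Set ℕ := {i | k ≤ i}
    have h_le : ∀ i : ℕ, MeasurableSpace.comap (ξ i) inferInstance ≤ ‹MeasurableSpace Ω› :=
      fun i => (hmeas i).comap_le
    have hST : Disjoint S1 S2 := by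
      rw [Set.disjoint_left]; intro i h1 h2
      simp only [S1, S2, Set.mem_setOf_eq] at h1 h2; omega
    have hIndep := indep_iSup_of_disjoint h_le hindep.iIndep hST
    have hxi : ∀ i ∈ S1, Measurable[⨆ i ∈ S1, MeasurableSpace.comap (ξ i) inferInstance] (ξ i) :=
      fun i hi => Measurable.of_comap_le (le_iSup₂ (f := fun i (_ : i ∈ S1) =>
        MeasurableSpace.comap (ξ i) inferInstance) i hi)
    have hA1 : MeasurableSet[⨆ i ∈ S1, MeasurableSpace.comap (ξ i) inferInstance] (A k) := by
      have hw : ∀ j ≤ k, Measurable[⨆ i ∈ S1, MeasurableSpace.comap (ξ i) inferInstance]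
          (walk ξ j) := by
        intro j hj
        apply Finset.measurable_sum
        intro i hi
        exact hxi i (by simpa [S1] using lt_of_lt_of_le (Finset.mem_range.1 hi) hj)
      exact (measurableSet_lt measurable_const (hw k le_rfl)).inter
        (MeasurableSet.biInter (Set.to_countable _) fun j hj =>
          measurableSet_le (hw j (le_of_lt (Finset.mem_range.1 hj))) measurable_const)
    have hB1 : MeasurableSet[⨆ i ∈ S2, MeasurableSpace.comap (ξ i) inferInstance] (B k) := by
      have hT1 : Measurable[⨆ i ∈ S2, MeasurableSpace.comap (ξ i) inferInstance] (T k) := by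
        apply Finset.measurable_sum
        intro i hi
        exact Measurable.of_comap_le (le_iSup₂ (f := fun i (_ : i ∈ S2) =>
          MeasurableSpace.comap (ξ i) inferInstance) i (by
            simpa [S2] using (Finset.mem_Ico.1 hi).1))
      exact measurableSet_le measurable_const hT1
    exact (Indep_iff _ _ _).1 hIndep _ _ hA1 hB1
  -- disjointness
  have hdisj : (↑(Finset.range (n+1)) : Set ℕ).PairwiseDisjoint A := by
    intro k hk l hl hkl
    wlog h : k < l generalizing k l
    · exact (this hl hk hkl.symm (by omega)).symm
    rw [Function.onFun, Set.disjoint_left]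
    rintro ω ⟨hw1, -⟩ ⟨-, hw2⟩
    simp only [Set.mem_setOf_eq] at hw1
    exact absurd hw1 (not_lt.2 (Set.mem_iInter₂.1 hw2 k (Finset.mem_range.2 h)))
  -- the union identity
  have hunion : {ω | x < walkMax ξ n ω} = ⋃ k ∈ Finset.range (n+1), A k := by
    ext ω
    simp only [Set.mem_setOf_eq, Set.mem_iUnion, Finset.mem_range, walkMax]
    constructor
    · intro hω
      obtain ⟨k, hk, hxk⟩ := (Finset.lt_sup'_iff _).1 hω
      have hex : ∃ j, x < walk ξ j ω := ⟨k, hxk⟩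
      refine ⟨Nat.find hex, ?_, Nat.find_spec hex, ?_⟩
      · have := Nat.find_min' hex hxk
        have := Finset.mem_range.1 hk
        omega
      · exact Set.mem_iInter₂.2 fun j hj =>
          not_lt.1 (Nat.find_min hex (Finset.mem_range.1 hj))
    · rintro ⟨k, hk, hxk, -⟩
      exact lt_of_lt_of_le hxk
        (Finset.le_sup' (fun k => walk ξ k ω) (Finset.mem_range.2 hk))
  -- subset for union of A∩B
  have hsubset : ∀ k ∈ Finset.range (n+1), A k ∩ B k ⊆ {ω | x < walk ξ n ω} := by
    intro k hk
    rintro ω ⟨⟨hw1, -⟩, hw2⟩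
    have hdecomp : walk ξ n ω = walk ξ k ω + T k ω := by
      have := Finset.sum_Ico_consecutive (fun i => ξ i ω) (Nat.zero_le k)
        (Nat.lt_succ_iff.1 (Finset.mem_range.1 hk))
      simp only [walk, T, Finset.range_eq_Ico]
      linarith [this]
    simp only [Set.mem_setOf_eq, hdecomp]
    have : (0:ℝ) ≤ T k ω := hw2
    have : x < walk ξ k ω := hw1
    linarith
  -- bound on P (B k)
  have hc0 : 0 ≤ c := le_trans ENNReal.toReal_nonneg (hneg 1 le_rfl)
  have hBbound : ∀ k ∈ Finset.range (n+1), 1 - c ≤ (P (B k)).toReal := by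
    intro k hk
    rcases eq_or_lt_of_le (Nat.lt_succ_iff.1 (Finset.mem_range.1 hk)) with hkn | hkn
    · have : B k = Set.univ := by
        ext ω; simp [B, T, hkn]
      rw [this]; simp; linarith
    · have hID : IdentDistrib (T k) (walk ξ (n - k)) P P := by
        have he : T k = fun ω => ∑ j ∈ Finset.range (n - k), ξ (k + j) ω := by
          funext ω; exact Finset.sum_Ico_eq_sum_range (fun i => ξ i ω) k n
        rw [he]; exact block_identDistrib hmeas hindep hident k (n - k)
      have hmm : P {ω | T k ω < 0} = P {ω | walk ξ (n-k) ω < 0} := by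
        have := hID.measure_mem_eq (s := {y : ℝ | y < 0})
          (measurableSet_lt measurable_id measurable_const)
        simpa using this
      have hcompl : B k = {ω | T k ω < 0}ᶜ := by
        ext ω; simp [B, not_lt]
      have hns : P {ω | T k ω < 0} ≤ 1 := prob_le_one
      rw [hcompl, prob_compl_eq_one_sub (measurableSet_lt (hTmeas k) measurable_const),
        ENNReal.toReal_sub_of_le hns ENNReal.one_ne_top]
      have : (P {ω | T k ω < 0}).toReal ≤ c := by
        rw [hmm]; exact hneg (n - k) (by omega)
      simp only [ENNReal.toReal_one]
      linarith
  -- measure identities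
  have hPU : P {ω | x < walkMax ξ n ω} = ∑ k ∈ Finset.range (n+1), P (A k) := by
    rw [hunion]; exact measure_biUnion_finset hdisj (fun k _ => hAmeas k)
  have hdisj2 : (↑(Finset.range (n+1)) : Set ℕ).PairwiseDisjoint (fun k => A k ∩ B k) := by
    intro k hk l hl hkl
    exact (hdisj hk hl hkl).mono Set.inter_subset_left Set.inter_subset_left
  have hPU2 : P (⋃ k ∈ Finset.range (n+1), A k ∩ B k)
      = ∑ k ∈ Finset.range (n+1), P (A k ∩ B k) :=
    measure_biUnion_finset hdisj2 (fun k _ => (hAmeas k).inter (hBmeas k))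
  -- final chain
  have h1 : (1 - c) * (P {ω | x < walkMax ξ n ω}).toReal
      = ∑ k ∈ Finset.range (n+1), (1 - c) * (P (A k)).toReal := by
    rw [hPU, ENNReal.toReal_sum (fun k _ => measure_ne_top _ _), Finset.mul_sum]
  rw [h1]
  calc ∑ k ∈ Finset.range (n+1), (1 - c) * (P (A k)).toReal
      ≤ ∑ k ∈ Finset.range (n+1), (P (A k ∩ B k)).toReal := by
        apply Finset.sum_le_sum
        intro k hk
        rw [hkey k, ENNReal.toReal_mul]
        calc (1 - c) * (P (A k)).toReal ≤ (P (B k)).toReal * (P (A k)).toReal :=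
              mul_le_mul_of_nonneg_right (hBbound k hk) ENNReal.toReal_nonneg
          _ = (P (A k)).toReal * (P (B k)).toReal := mul_comm _ _
    _ = (P (⋃ k ∈ Finset.range (n+1), A k ∩ B k)).toReal := by
        rw [hPU2, ENNReal.toReal_sum (fun k _ => measure_ne_top _ _)]
    _ ≤ (P {ω | x < walk ξ n ω}).toReal := by
        apply ENNReal.toReal_mono (measure_ne_top _ _)
        apply measure_mono
        exact Set.iUnion₂_subset hsubset

end AuxLemmas

/-- Let `a : [1,∞) → [1,∞)` be continuous, strictly increasing,
unbounded, `a(1) = 1`, with inverse `a⁻¹` regularly varying with index `α > 0`.  If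
`sup_m P(S_m < 0) < 1`, `sup_m P(S_m > 0) < 1` and `P(S_n > x) ≤ C n / a⁻¹(x)`,
`P(S_n < -x) ≤ C n / a⁻¹(x)` for all `n ≥ 1`, `x ≥ 1`, then there is `C'` with
`P(max S_k > x), P(-min S_k > x), P(max |S_k| > x), P(V^#_n > x) ≤ C' n / a⁻¹(x)`. -/
theorem fluctuation_bounds_from_marginal_bounds
    {Ω : Type*} [MeasurableSpace Ω] (P : Measure Ω) [IsProbabilityMeasure P]
    (ξ : ℕ → Ω → ℝ) (hmeas : ∀ i, Measurable (ξ i))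
    (hindep : iIndepFun ξ P)
    (hident : ∀ i, IdentDistrib (ξ i) (ξ 0) P P)
    (a ainv : ℝ → ℝ) (α : ℝ) (hα : 0 < α)
    (ha_cont : ContinuousOn a (Set.Ici 1))
    (ha_mono : StrictMonoOn a (Set.Ici 1))
    (ha_top : Tendsto a atTop atTop)
    (ha_one : a 1 = 1)
    (ha_maps : ∀ x : ℝ, 1 ≤ x → 1 ≤ a x)
    (hainv_left : ∀ x : ℝ, 1 ≤ x → ainv (a x) = x)
    (hainv_right : ∀ y : ℝ, 1 ≤ y → a (ainv y) = y)
    (hainv_maps : ∀ y : ℝ, 1 ≤ y → 1 ≤ ainv y)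
    (hainv_rv : ∀ l : ℝ, 0 < l →
      Tendsto (fun x : ℝ => ainv (l * x) / ainv x) atTop (nhds (l ^ α)))
    (hneg : ∃ c : ℝ, c < 1 ∧ ∀ m : ℕ, 1 ≤ m → (P {ω | walk ξ m ω < 0}).toReal ≤ c)
    (hpos : ∃ c : ℝ, c < 1 ∧ ∀ m : ℕ, 1 ≤ m → (P {ω | 0 < walk ξ m ω}).toReal ≤ c)
    (C : ℝ)
    (hup : ∀ n : ℕ, 1 ≤ n → ∀ x : ℝ, 1 ≤ x →
      (P {ω | x < walk ξ n ω}).toReal ≤ C * n / ainv x)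
    (hdown : ∀ n : ℕ, 1 ≤ n → ∀ x : ℝ, 1 ≤ x →
      (P {ω | walk ξ n ω < -x}).toReal ≤ C * n / ainv x) :
    ∃ C' : ℝ, ∀ n : ℕ, 1 ≤ n → ∀ x : ℝ, 1 ≤ x →
      (P {ω | x < walkMax ξ n ω}).toReal ≤ C' * n / ainv x ∧
      (P {ω | x < -walkMin ξ n ω}).toReal ≤ C' * n / ainv x ∧
      (P {ω | x < walkAbsMax ξ n ω}).toReal ≤ C' * n / ainv x ∧
      (P {ω | x < reflMax ξ n ω}).toReal ≤ C' * n / ainv x := by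
  classical
  obtain ⟨c₁, hc₁, hneg₁⟩ := hneg
  obtain ⟨c₂, hc₂, hpos₂⟩ := hpos
  -- basic facts about ainv
  have hainv_one : ainv 1 = 1 := by
    have := hainv_left 1 le_rfl
    rwa [ha_one] at this
  have hainv_pos : ∀ y : ℝ, 1 ≤ y → 0 < ainv y := fun y hy =>
    lt_of_lt_of_le one_pos (hainv_maps y hy)
  have hainv_mono : ∀ u v : ℝ, 1 ≤ u → u ≤ v → ainv u ≤ ainv v := by
    intro u v hu huv
    by_contra h
    push_neg at h
    have h1 : 1 ≤ v := le_trans hu huv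
    have := ha_mono (Set.mem_Ici.2 (hainv_maps v h1)) (Set.mem_Ici.2 (hainv_maps u hu)) h
    rw [hainv_right v h1, hainv_right u hu] at this
    linarith
  have hC0 : 0 ≤ C := by
    have h := hup 1 le_rfl 1 le_rfl
    simp only [Nat.cast_one, mul_one, hainv_one, div_one] at h
    exact le_trans ENNReal.toReal_nonneg h
  -- constants
  set K₁ : ℝ := (1 - c₁)⁻¹ * C with hK₁
  set K₂ : ℝ := (1 - c₂)⁻¹ * C with hK₂
  have h1c₁ : 0 < 1 - c₁ := by linarith
  have h1c₂ : 0 < 1 - c₂ := by linarith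
  have hK₁0 : 0 ≤ K₁ := mul_nonneg (inv_nonneg.2 h1c₁.le) hC0
  have hK₂0 : 0 ≤ K₂ := mul_nonneg (inv_nonneg.2 h1c₂.le) hC0
  -- bound on the max
  have hmax : ∀ n : ℕ, 1 ≤ n → ∀ x : ℝ, 1 ≤ x →
      (P {ω | x < walkMax ξ n ω}).toReal ≤ K₁ * n / ainv x := by
    intro n hn x hx
    have h := ottaviani hmeas hindep hident hneg₁ n x
    have h2 : (1 - c₁) * (P {ω | x < walkMax ξ n ω}).toReal ≤ C * n / ainv x :=
      h.trans (hup n hn x hx)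
    have h3 : (P {ω | x < walkMax ξ n ω}).toReal ≤ (C * n / ainv x) / (1 - c₁) := by
      rw [le_div_iff₀ h1c₁]
      linarith [h2]
    calc (P {ω | x < walkMax ξ n ω}).toReal ≤ (C * n / ainv x) / (1 - c₁) := h3
      _ = K₁ * n / ainv x := by rw [hK₁]; ring
  -- the negated walk
  set ξ' : ℕ → Ω → ℝ := fun i ω => -ξ i ω with hξ'
  have hmeas' : ∀ i, Measurable (ξ' i) := fun i => (hmeas i).neg
  have hindep' : iIndepFun ξ' P :=
    hindep.comp (fun _ => fun y : ℝ => -y) (fun _ => measurable_neg)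
  have hident' : ∀ i, IdentDistrib (ξ' i) (ξ' 0) P P := fun i =>
    (hident i).comp measurable_neg
  have hneg' : ∀ m : ℕ, 1 ≤ m → (P {ω | walk ξ' m ω < 0}).toReal ≤ c₂ := by
    intro m hm
    have hset : {ω | walk ξ' m ω < 0} = {ω | 0 < walk ξ m ω} := by
      ext ω
      simp only [hξ', Set.mem_setOf_eq, walk_neg_apply, neg_lt_zero]
    rw [hset]
    exact hpos₂ m hm
  have hmaxset : ∀ n : ℕ, ∀ x : ℝ, {ω | x < walkMax ξ' n ω} = {ω | x < -walkMin ξ n ω} := by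
    intro n x
    ext ω
    simp only [hξ', Set.mem_setOf_eq, walkMax_neg_eq]
  have hmin : ∀ n : ℕ, 1 ≤ n → ∀ x : ℝ, 1 ≤ x →
      (P {ω | x < -walkMin ξ n ω}).toReal ≤ K₂ * n / ainv x := by
    intro n hn x hx
    have h := ottaviani hmeas' hindep' hident' hneg' n x
    rw [hmaxset n x] at h
    have hdownset : {ω | x < walk ξ' n ω} = {ω | walk ξ n ω < -x} := by
      ext ω
      simp only [hξ', Set.mem_setOf_eq, walk_neg_apply, lt_neg]
    rw [hdownset] at h
    have h2 : (1 - c₂) * (P {ω | x < -walkMin ξ n ω}).toReal ≤ C * n / ainv x :=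
      h.trans (hdown n hn x hx)
    have h3 : (P {ω | x < -walkMin ξ n ω}).toReal ≤ (C * n / ainv x) / (1 - c₂) := by
      rw [le_div_iff₀ h1c₂]
      linarith [h2]
    calc (P {ω | x < -walkMin ξ n ω}).toReal ≤ (C * n / ainv x) / (1 - c₂) := h3
      _ = K₂ * n / ainv x := by rw [hK₂]; ring
  -- union-type bound helper
  have hsum2 : ∀ (s t u : Set Ω), MeasurableSet t → MeasurableSet u → s ⊆ t ∪ u →
      (P s).toReal ≤ (P t).toReal + (P u).toReal := by
    intro s t u _ _ hsub
    have h1 : P s ≤ P t + P u := le_trans (measure_mono hsub) (measure_union_le t u)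
    have h2 : (P s).toReal ≤ (P t + P u).toReal :=
      ENNReal.toReal_mono (by finiteness) h1
    rwa [ENNReal.toReal_add (measure_ne_top _ _) (measure_ne_top _ _)] at h2
  -- subset facts
  have habs_subset : ∀ n : ℕ, ∀ x : ℝ,
      {ω | x < walkAbsMax ξ n ω} ⊆ {ω | x < walkMax ξ n ω} ∪ {ω | x < -walkMin ξ n ω} := by
    intro n x ω hω
    simp only [Set.mem_setOf_eq, walkAbsMax] at hω
    obtain ⟨k, hk, hxk⟩ := (Finset.lt_sup'_iff _).1 hω
    rw [abs_eq_max_neg, lt_max_iff] at hxk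
    rcases hxk with h | h
    · left
      simp only [Set.mem_setOf_eq, walkMax]
      exact lt_of_lt_of_le h (Finset.le_sup' (fun k => walk ξ k ω) hk)
    · right
      simp only [Set.mem_setOf_eq]
      have h2 : walkMin ξ n ω ≤ walk ξ k ω := Finset.inf'_le _ hk
      linarith
  have hrefl_subset : ∀ n : ℕ, ∀ x : ℝ,
      {ω | x < reflMax ξ n ω} ⊆ {ω | x/2 < walkMax ξ n ω} ∪ {ω | x/2 < -walkMin ξ n ω} := by
    intro n x ω hω
    simp only [Set.mem_setOf_eq, reflMax] at hω
    obtain ⟨v, hv, hxv⟩ := (Finset.lt_sup'_iff _).1 hω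
    obtain ⟨u, hu, hxu⟩ := (Finset.lt_sup'_iff _).1 hxv
    rcases le_or_gt (walk ξ v ω) (x/2) with h | h
    · right
      simp only [Set.mem_setOf_eq]
      have h2 : walkMin ξ n ω ≤ walk ξ u ω := by
        apply Finset.inf'_le
        have := Finset.mem_range.1 hu
        have := Finset.mem_range.1 hv
        exact Finset.mem_range.2 (by omega)
      linarith
    · left
      simp only [Set.mem_setOf_eq, walkMax]
      exact lt_of_lt_of_le h (Finset.le_sup' (fun k => walk ξ k ω) hv)
  -- measurability of events
  have hmaxmeas : ∀ (ζ : ℕ → Ω → ℝ), (∀ i, Measurable (ζ i)) → ∀ n : ℕ, ∀ x : ℝ,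
      MeasurableSet {ω | x < walkMax ζ n ω} := by
    intro ζ hζ n x
    have hMw : Measurable (walkMax ζ n) := by
      have h : walkMax ζ n = (Finset.range (n+1)).sup' Finset.nonempty_range_add_one
          (fun k => walk ζ k) := by
        funext ω
        rw [walkMax, Finset.sup'_apply]
      rw [h]
      exact Finset.measurable_sup' _ (fun k _ => walk_measurable hζ k)
    exact measurableSet_lt measurable_const hMw
  have hminmeas : ∀ n : ℕ, ∀ x : ℝ, MeasurableSet {ω | x < -walkMin ξ n ω} := by
    intro n x
    rw [← hmaxset n x]
    exact hmaxmeas ξ' hmeas' n x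
  -- regular variation constant
  have hRV := hainv_rv 2 two_pos
  have hev : ∀ᶠ y : ℝ in atTop, ainv (2 * y) / ainv y ≤ 2 ^ α + 1 :=
    hRV.eventually (eventually_le_nhds (lt_add_one _))
  obtain ⟨y₀, hy₀⟩ := eventually_atTop.1 hev
  set z : ℝ := max y₀ 1 with hz
  set M : ℝ := max (2 ^ α + 1) (ainv (2 * z)) with hM
  have hz1 : 1 ≤ z := le_max_right _ _
  have hM0 : 0 ≤ M := le_trans (hainv_pos (2*z) (by linarith)).le (le_max_right _ _)
  have hMkey : ∀ x : ℝ, 2 ≤ x → ainv x ≤ M * ainv (x / 2) := by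
    intro x hx
    have hx2 : 1 ≤ x / 2 := by linarith
    have hrw : x = 2 * (x / 2) := by ring
    rcases le_or_gt z (x / 2) with h | h
    · have hb := hy₀ (x/2) (le_trans (le_max_left _ _) h)
      have hpos2 : 0 < ainv (x/2) := hainv_pos _ hx2
      rw [div_le_iff₀ hpos2] at hb
      calc ainv x = ainv (2 * (x/2)) := by rw [← hrw]
        _ ≤ (2 ^ α + 1) * ainv (x/2) := hb
        _ ≤ M * ainv (x/2) :=
            mul_le_mul_of_nonneg_right (le_max_left _ _) hpos2.le
    · have h1 : ainv x ≤ ainv (2 * z) := by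
        rw [hrw]
        exact hainv_mono _ _ (by linarith) (by linarith)
      have h2 : 1 ≤ ainv (x/2) := hainv_maps _ hx2
      calc ainv x ≤ ainv (2*z) := h1
        _ = ainv (2*z) * 1 := (mul_one _).symm
        _ ≤ ainv (2*z) * ainv (x/2) :=
            mul_le_mul_of_nonneg_left h2 (hainv_pos (2*z) (by linarith)).le
        _ ≤ M * ainv (x/2) := mul_le_mul_of_nonneg_right (le_max_right _ _) (by linarith)
  -- final constant
  set C' : ℝ := max (K₁ + K₂) (max ((K₁ + K₂) * M) (ainv 2)) with hC'
  refine ⟨C', ?_⟩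
  intro n hn x hx
  have hn0 : (0:ℝ) ≤ n := Nat.cast_nonneg n
  have hn1 : (1:ℝ) ≤ n := by exact_mod_cast hn
  have hax : 0 < ainv x := hainv_pos x hx
  have hdivnn : 0 ≤ (n : ℝ) / ainv x := div_nonneg hn0 hax.le
  have hmono_const : ∀ K : ℝ, K ≤ C' → ∀ p : ℝ, p ≤ K * n / ainv x → p ≤ C' * n / ainv x := by
    intro K hK p hp
    calc p ≤ K * n / ainv x := hp
      _ ≤ C' * n / ainv x :=
          (div_le_div_iff_of_pos_right hax).2 (mul_le_mul_of_nonneg_right hK hn0)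
  refine ⟨?_, ?_, ?_, ?_⟩
  · exact hmono_const K₁ (le_trans (le_add_of_nonneg_right hK₂0) (le_max_left _ _)) _
      (hmax n hn x hx)
  · exact hmono_const K₂ (le_trans (le_add_of_nonneg_left hK₁0) (le_max_left _ _)) _
      (hmin n hn x hx)
  · apply hmono_const (K₁ + K₂) (le_max_left _ _)
    have h1 := hsum2 _ _ _ (hmaxmeas ξ hmeas n x) (hminmeas n x) (habs_subset n x)
    calc (P {ω | x < walkAbsMax ξ n ω}).toReal
        ≤ (P {ω | x < walkMax ξ n ω}).toReal + (P {ω | x < -walkMin ξ n ω}).toReal := h1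
      _ ≤ K₁ * n / ainv x + K₂ * n / ainv x := add_le_add (hmax n hn x hx) (hmin n hn x hx)
      _ = (K₁ + K₂) * n / ainv x := by ring
  · rcases le_or_gt 2 x with hx2 | hx2
    · -- large x : use the factor 2 trick
      have hx2' : 1 ≤ x / 2 := by linarith
      have hax2 : 0 < ainv (x/2) := hainv_pos _ hx2'
      apply hmono_const ((K₁ + K₂) * M) (le_trans (le_max_left _ _) (le_max_right _ _))
      have h1 := hsum2 _ _ _ (hmaxmeas ξ hmeas n (x/2)) (hminmeas n (x/2)) (hrefl_subset n x)
      have h2 : (P {ω | x < reflMax ξ n ω}).toReal ≤ (K₁ + K₂) * n / ainv (x/2) := by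
        calc (P {ω | x < reflMax ξ n ω}).toReal
            ≤ (P {ω | x/2 < walkMax ξ n ω}).toReal
              + (P {ω | x/2 < -walkMin ξ n ω}).toReal := h1
          _ ≤ K₁ * n / ainv (x/2) + K₂ * n / ainv (x/2) :=
              add_le_add (hmax n hn (x/2) hx2') (hmin n hn (x/2) hx2')
          _ = (K₁ + K₂) * n / ainv (x/2) := by ring
      refine h2.trans ?_
      rw [div_le_div_iff₀ hax2 hax]
      have h5 : (K₁ + K₂) * (n:ℝ) * ainv x ≤ (K₁ + K₂) * (n:ℝ) * (M * ainv (x/2)) :=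
        mul_le_mul_of_nonneg_left (hMkey x hx2)
          (mul_nonneg (add_nonneg hK₁0 hK₂0) hn0)
      calc (K₁ + K₂) * (n:ℝ) * ainv x ≤ (K₁ + K₂) * (n:ℝ) * (M * ainv (x/2)) := h5
        _ = (K₁ + K₂) * M * (n:ℝ) * ainv (x/2) := by ring
    · -- small x : trivial bound
      apply hmono_const (ainv 2) (le_trans (le_max_right _ _) (le_max_right _ _))
      have h1 : (P {ω | x < reflMax ξ n ω}).toReal ≤ 1 := by
        have := ENNReal.toReal_mono ENNReal.one_ne_top (prob_le_one (μ := P)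
          (s := {ω | x < reflMax ξ n ω}))
        simpa using this
      refine h1.trans ?_
      rw [le_div_iff₀ hax]
      have h2 : ainv x ≤ ainv 2 := hainv_mono x 2 hx hx2.le
      have h3 : (1:ℝ) ≤ ainv 2 := hainv_maps 2 one_le_two
      nlinarith
end
end

section
/- Let a : [1,∞) → [1,∞) be a continuous, strictly increasing, unbounded function with a(1) = 1 whose inverse a⁻¹ is regularly varying at infinity with index α > 0. Let M_n := max_{0≤k≤n} S_k (so M_n ≥ 0), and suppose there exists a constant C such that P(M_n > x) ≤ C·n/a⁻¹(x) for all integers n ≥ 1 and reals x ≥ 1. Then for every δ with 0 < δ < α one has sup_{n≥1} E[(M_n/a(n))^δ] < ∞. -/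
open MeasureTheory ProbabilityTheory Filter

noncomputable section

lemma aux_arith (l x₀ C δ : ℝ) (hl : 0 < l) (hx : 0 ≤ x₀) (k : ℕ) :
    (l ^ (k + 1) * x₀) ^ δ * (C / (2 * l ^ δ) ^ k)
      = (C * x₀ ^ δ * l ^ δ) * (1 / 2) ^ k := by
  have ht : 0 < l ^ δ := Real.rpow_pos_of_pos hl δ
  have h1 : (l ^ (k + 1) * x₀) ^ δ = (l ^ δ) ^ (k + 1) * x₀ ^ δ := by
    rw [Real.mul_rpow (pow_nonneg hl.le _) hx, ← Real.rpow_natCast l (k + 1),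
      ← Real.rpow_mul hl.le, mul_comm (((k + 1 : ℕ) : ℝ)) δ, Real.rpow_mul hl.le,
      Real.rpow_natCast]
  rw [h1, mul_pow]
  have h2 : (2 : ℝ) ^ k ≠ 0 := by positivity
  have h3 : (l ^ δ) ^ k ≠ 0 := by positivity
  rw [div_pow, one_pow]
  field_simp
  ring

/-- Let `a : [1,∞) → [1,∞)` be continuous, strictly increasing,
unbounded, `a(1) = 1`, with inverse `a⁻¹` regularly varying with index `α > 0`, and set
`M_n = max_{0≤k≤n} S_k`.  If `P(M_n > x) ≤ C n / a⁻¹(x)` for all `n ≥ 1, x ≥ 1`, then for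
every `0 < δ < α`, `sup_{n ≥ 1} E[(M_n / a(n))^δ] < ∞`. -/
theorem uniform_moment_bound_walkMax
    {Ω : Type*} [MeasurableSpace Ω] (P : Measure Ω) [IsProbabilityMeasure P]
    (ξ : ℕ → Ω → ℝ) (hmeas : ∀ i, Measurable (ξ i))
    (hindep : iIndepFun ξ P)
    (hident : ∀ i, IdentDistrib (ξ i) (ξ 0) P P)
    (a ainv : ℝ → ℝ) (α : ℝ) (hα : 0 < α)
    (ha_cont : ContinuousOn a (Set.Ici 1))
    (ha_mono : StrictMonoOn a (Set.Ici 1))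
    (ha_top : Tendsto a atTop atTop)
    (ha_one : a 1 = 1)
    (ha_maps : ∀ x : ℝ, 1 ≤ x → 1 ≤ a x)
    (hainv_left : ∀ x : ℝ, 1 ≤ x → ainv (a x) = x)
    (hainv_right : ∀ y : ℝ, 1 ≤ y → a (ainv y) = y)
    (hainv_maps : ∀ y : ℝ, 1 ≤ y → 1 ≤ ainv y)
    (hainv_rv : ∀ l : ℝ, 0 < l →
      Tendsto (fun x : ℝ => ainv (l * x) / ainv x) atTop (nhds (l ^ α)))
    (C : ℝ)
    (hbound : ∀ n : ℕ, 1 ≤ n → ∀ x : ℝ, 1 ≤ x →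
      (P {ω | x < walkMax ξ n ω}).toReal ≤ C * n / ainv x)
    (δ : ℝ) (hδ : 0 < δ) (hδα : δ < α) :
    ∃ B : ℝ, ∀ n : ℕ, 1 ≤ n →
      ∫⁻ ω, ENNReal.ofReal ((walkMax ξ n ω / a n) ^ δ) ∂P ≤ ENNReal.ofReal B := by
  classical
  have hαδ : 0 < α - δ := by linarith
  set l : ℝ := (2 : ℝ) ^ ((2 : ℝ) / (α - δ)) with hl_def
  have hl1 : 1 < l := by
    rw [hl_def]
    exact (Real.one_lt_rpow_iff_of_pos (by norm_num)).2 (Or.inl ⟨by norm_num, by positivity⟩)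
  have hl0 : 0 < l := lt_trans one_pos hl1
  have hlδ_pos : 0 < l ^ δ := Real.rpow_pos_of_pos hl0 δ
  have hlαδ : l ^ (α - δ) = 4 := by
    rw [hl_def, ← Real.rpow_mul (by norm_num), div_mul_cancel₀ _ hαδ.ne']
    rw [show (2 : ℝ) = ((2 : ℕ) : ℝ) by norm_num, Real.rpow_natCast]
    norm_num
  have hlα : l ^ α = 4 * l ^ δ := by
    rw [show α = (α - δ) + δ by ring, Real.rpow_add hl0, hlαδ]
  set r : ℝ := 2 * l ^ δ with hr_def
  have hr_pos : 0 < r := by positivity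
  have hr_lt : r < l ^ α := by rw [hlα, hr_def]; nlinarith
  -- choose x₀ from regular variation
  have hev : ∀ᶠ x : ℝ in atTop, r < ainv (l * x) / ainv x :=
    (hainv_rv l hl0).eventually (eventually_gt_nhds hr_lt)
  obtain ⟨x₁, hx₁⟩ := eventually_atTop.1 hev
  set x₀ : ℝ := max x₁ 1 with hx₀_def
  have hx₀1 : (1 : ℝ) ≤ x₀ := le_max_right _ _
  have hratio : ∀ x : ℝ, x₀ ≤ x → r * ainv x ≤ ainv (l * x) := by
    intro x hx
    have hx1 : (1 : ℝ) ≤ x := le_trans hx₀1 hx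
    have hpos : 0 < ainv x := lt_of_lt_of_le one_pos (hainv_maps x hx1)
    have := hx₁ x (le_trans (le_max_left _ _) hx)
    exact ((lt_div_iff₀ hpos).1 this).le
  have hkey : ∀ k : ℕ, ∀ x : ℝ, x₀ ≤ x → r ^ k * ainv x ≤ ainv (l ^ k * x) := by
    intro k
    induction k with
    | zero => intro x _; simp
    | succ k ih =>
      intro x hx
      have hx1 : (1 : ℝ) ≤ x := le_trans hx₀1 hx
      have hlx : x₀ ≤ l * x := le_trans hx (le_mul_of_one_le_left (by linarith) hl1.le)
      calc r ^ (k + 1) * ainv x = r ^ k * (r * ainv x) := by ring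
        _ ≤ r ^ k * ainv (l * x) :=
            mul_le_mul_of_nonneg_left (hratio x hx) (pow_nonneg hr_pos.le _)
        _ ≤ ainv (l ^ k * (l * x)) := ih (l * x) hlx
        _ = ainv (l ^ (k + 1) * x) := by congr 1; ring
  have hainv_mono : ∀ y z : ℝ, 1 ≤ y → y ≤ z → ainv y ≤ ainv z := by
    intro y z hy hyz
    by_contra h
    push_neg at h
    have hz : 1 ≤ z := hy.trans hyz
    have := ha_mono (Set.mem_Ici.2 (hainv_maps z hz)) (Set.mem_Ici.2 (hainv_maps y hy)) h
    rw [hainv_right y hy, hainv_right z hz] at this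
    linarith
  have hC : 0 ≤ C := by
    by_contra hC'
    push_neg at hC'
    have h1 : (0 : ℝ) < ainv 1 := lt_of_lt_of_le one_pos (hainv_maps 1 le_rfl)
    have h2 := (ENNReal.toReal_nonneg).trans (hbound 1 le_rfl 1 le_rfl)
    have : C * (1 : ℕ) / ainv 1 < 0 := div_neg_of_neg_of_pos (by simpa using hC') h1
    linarith
  -- the uniform bound
  refine ⟨(l * x₀) ^ δ + 2 * (C * x₀ ^ δ * l ^ δ), fun n hn => ?_⟩
  have hn1 : (1 : ℝ) ≤ (n : ℝ) := by exact_mod_cast hn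
  have han : 1 ≤ a n := ha_maps n hn1
  have han0 : 0 < a n := lt_of_lt_of_le one_pos han
  set b : ℝ := x₀ * a n with hb_def
  have hb_x₀ : x₀ ≤ b := le_mul_of_one_le_right (by linarith) han
  have hb1 : (1 : ℝ) ≤ b := hx₀1.trans hb_x₀
  -- measurability
  have hwalk_meas : ∀ k : ℕ, Measurable (walk ξ k) := by
    intro k
    exact Finset.measurable_sum _ fun i _ => hmeas i
  have hMeas : ∀ c : ℝ, MeasurableSet {ω | c < walkMax ξ n ω} := by
    intro c
    have : {ω | c < walkMax ξ n ω} = ⋃ k ∈ Finset.range (n + 1), {ω | c < walk ξ k ω} := by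
      ext ω
      simp [walkMax, Finset.lt_sup'_iff]
    rw [this]
    exact MeasurableSet.biUnion (Finset.range (n + 1)).countable_toSet fun k _ =>
      measurableSet_lt measurable_const (hwalk_meas k)
  -- tail bound
  have htail : ∀ k : ℕ, P {ω | l ^ k * b < walkMax ξ n ω} ≤ ENNReal.ofReal (C / r ^ k) := by
    intro k
    have hlk1 : (1 : ℝ) ≤ l ^ k := one_le_pow₀ hl1.le
    have hxk1 : (1 : ℝ) ≤ l ^ k * b := one_le_mul_of_one_le_of_one_le hlk1 hb1
    have hainvb : (n : ℝ) ≤ ainv b := by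
      have : ainv (a n) ≤ ainv b :=
        hainv_mono (a n) b han (le_mul_of_one_le_left han0.le hx₀1)
      rwa [hainv_left n hn1] at this
    have hlow : r ^ k * n ≤ ainv (l ^ k * b) := by
      calc r ^ k * (n : ℝ) ≤ r ^ k * ainv b :=
            mul_le_mul_of_nonneg_left hainvb (pow_nonneg hr_pos.le _)
        _ ≤ ainv (l ^ k * b) := hkey k b hb_x₀
    have hpos : (0 : ℝ) < r ^ k * n := by positivity
    have h1 : (P {ω | l ^ k * b < walkMax ξ n ω}).toReal ≤ C / r ^ k := by
      calc (P {ω | l ^ k * b < walkMax ξ n ω}).toReal ≤ C * n / ainv (l ^ k * b) :=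
            hbound n hn _ hxk1
        _ ≤ C * n / (r ^ k * n) :=
            div_le_div_of_nonneg_left (by positivity) hpos hlow
        _ = C / r ^ k := by
            field_simp
    rw [← ENNReal.ofReal_toReal (measure_ne_top P _)]
    exact ENNReal.ofReal_le_ofReal h1
  -- pointwise bound
  have hM0 : ∀ ω, 0 ≤ walkMax ξ n ω := by
    intro ω
    have h0 : walk ξ 0 ω = 0 := by simp [walk]
    calc (0 : ℝ) = walk ξ 0 ω := h0.symm
      _ ≤ walkMax ξ n ω := Finset.le_sup' (fun k => walk ξ k ω)
          (Finset.mem_range.2 (Nat.succ_pos n))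
  have hpt : ∀ ω, ENNReal.ofReal ((walkMax ξ n ω / a n) ^ δ)
      ≤ ENNReal.ofReal ((l * x₀) ^ δ)
        + ∑' k : ℕ, ENNReal.ofReal ((l ^ (k + 1) * x₀) ^ δ)
            * Set.indicator {ω | l ^ k * b < walkMax ξ n ω} (fun _ => (1 : ENNReal)) ω := by
    intro ω
    set m : ℝ := walkMax ξ n ω with hm_def
    have hm0 : 0 ≤ m := hM0 ω
    by_cases hcase : m ≤ l * b
    · refine le_trans ?_ le_self_add
      apply ENNReal.ofReal_le_ofReal
      apply Real.rpow_le_rpow (by positivity) _ hδ.le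
      rw [div_le_iff₀ han0]
      calc m ≤ l * b := hcase
        _ = l * x₀ * a n := by rw [hb_def]; ring
    · push_neg at hcase
      have hex : ∃ k : ℕ, m ≤ l ^ (k + 1) * b := by
        obtain ⟨k, hk⟩ := pow_unbounded_of_one_lt m hl1
        exact ⟨k, le_trans hk.le (by
          calc l ^ k ≤ l ^ (k + 1) := pow_le_pow_right₀ hl1.le (Nat.le_succ k)
            _ = l ^ (k + 1) * 1 := by ring
            _ ≤ l ^ (k + 1) * b := by
                apply mul_le_mul_of_nonneg_left hb1 (by positivity))⟩
      set K := Nat.find hex with hK_def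
      have hK : m ≤ l ^ (K + 1) * b := Nat.find_spec hex
      have hKpos : 0 < K := by
        rcases Nat.eq_zero_or_pos K with h0 | h
        · exfalso
          have := Nat.find_spec hex
          rw [← hK_def, h0] at this
          simp at this
          linarith
        · exact h
      have hKlow : l ^ K * b < m := by
        have := Nat.find_min hex (m := K - 1) (by omega)
        push_neg at this
        have heq : K - 1 + 1 = K := by omega
        rwa [heq] at this
      have hind : Set.indicator {ω | l ^ K * b < walkMax ξ n ω}
          (fun _ => (1 : ENNReal)) ω = 1 := by
        apply Set.indicator_of_mem
        exact hKlow
      calc ENNReal.ofReal ((m / a n) ^ δ)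
          ≤ ENNReal.ofReal ((l ^ (K + 1) * x₀) ^ δ) := by
            apply ENNReal.ofReal_le_ofReal
            apply Real.rpow_le_rpow (by positivity) _ hδ.le
            rw [div_le_iff₀ han0]
            calc m ≤ l ^ (K + 1) * b := hK
              _ = l ^ (K + 1) * x₀ * a n := by rw [hb_def]; ring
        _ = ENNReal.ofReal ((l ^ (K + 1) * x₀) ^ δ)
            * Set.indicator {ω | l ^ K * b < walkMax ξ n ω} (fun _ => (1 : ENNReal)) ω := by
            rw [hind, mul_one]
        _ ≤ ∑' k : ℕ, ENNReal.ofReal ((l ^ (k + 1) * x₀) ^ δ)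
            * Set.indicator {ω | l ^ k * b < walkMax ξ n ω} (fun _ => (1 : ENNReal)) ω :=
            ENNReal.le_tsum K
        _ ≤ _ := le_add_self
  -- integrate
  have hind_meas : ∀ k : ℕ, Measurable fun ω =>
      ENNReal.ofReal ((l ^ (k + 1) * x₀) ^ δ)
        * Set.indicator {ω | l ^ k * b < walkMax ξ n ω} (fun _ => (1 : ENNReal)) ω := by
    intro k
    exact (measurable_const.indicator (hMeas _)).const_mul _
  have hx₀0 : (0 : ℝ) ≤ x₀ := by linarith
  calc ∫⁻ ω, ENNReal.ofReal ((walkMax ξ n ω / a n) ^ δ) ∂P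
      ≤ ∫⁻ ω, (ENNReal.ofReal ((l * x₀) ^ δ)
          + ∑' k : ℕ, ENNReal.ofReal ((l ^ (k + 1) * x₀) ^ δ)
              * Set.indicator {ω | l ^ k * b < walkMax ξ n ω} (fun _ => (1 : ENNReal)) ω) ∂P :=
        lintegral_mono hpt
    _ = ENNReal.ofReal ((l * x₀) ^ δ)
        + ∑' k : ℕ, ENNReal.ofReal ((l ^ (k + 1) * x₀) ^ δ)
            * P {ω | l ^ k * b < walkMax ξ n ω} := by
        rw [lintegral_add_left measurable_const, lintegral_const, measure_univ, mul_one,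
          lintegral_tsum fun k => (hind_meas k).aemeasurable]
        refine congrArg _ (tsum_congr fun k => ?_)
        rw [lintegral_const_mul _ (measurable_const.indicator (hMeas _))]
        congr 1
        exact lintegral_indicator_one (hMeas _)
    _ ≤ ENNReal.ofReal ((l * x₀) ^ δ)
        + ∑' k : ℕ, ENNReal.ofReal ((C * x₀ ^ δ * l ^ δ) * (1 / 2) ^ k) := by
        apply add_le_add_right
        apply ENNReal.tsum_le_tsum
        intro k
        calc ENNReal.ofReal ((l ^ (k + 1) * x₀) ^ δ) * P {ω | l ^ k * b < walkMax ξ n ω}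
            ≤ ENNReal.ofReal ((l ^ (k + 1) * x₀) ^ δ) * ENNReal.ofReal (C / r ^ k) :=
              mul_le_mul_right (htail k) _
          _ = ENNReal.ofReal ((l ^ (k + 1) * x₀) ^ δ * (C / r ^ k)) :=
              (ENNReal.ofReal_mul (by positivity)).symm
          _ = ENNReal.ofReal ((C * x₀ ^ δ * l ^ δ) * (1 / 2) ^ k) := by
              rw [hr_def, aux_arith l x₀ C δ hl0 hx₀0 k]
    _ = ENNReal.ofReal ((l * x₀) ^ δ) + ENNReal.ofReal (2 * (C * x₀ ^ δ * l ^ δ)) := by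
        rw [← ENNReal.ofReal_tsum_of_nonneg (fun k => by positivity)
          (summable_geometric_two.mul_left _), tsum_mul_left, tsum_geometric_two]
        ring_nf
    _ = ENNReal.ofReal ((l * x₀) ^ δ + 2 * (C * x₀ ^ δ * l ^ δ)) :=
        (ENNReal.ofReal_add (by positivity) (by positivity)).symm
end
end

section
/- Let a : [1,∞) → [1,∞) be a continuous, strictly increasing, unbounded function with a(1) = 1 whose inverse a⁻¹ is regularly varying at infinity with index α ∈ (0,2]. Assume: (i) there is C₀ such that a⁻¹(x)·P(ξ₁ > x) ≤ C₀ and a⁻¹(x)·P(ξ₁ < −x) ≤ C₀ for all x ≥ 1; (ii) there is C₁ such that E[ξ₁²·1_{|ξ₁|≤z}] ≤ C₁·z²/a⁻¹(z) for all z ≥ 1; (iii) there is C₂ such that |E[ξ₁·1_{|ξ₁|≤z}]| ≤ C₂·z/a⁻¹(z) for all z ≥ 1. Then there exists a constant C such that for all integers n ≥ 1 and all reals x ≥ 1: P(S_n > x) ≤ C·n/a⁻¹(x). -/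
open MeasureTheory ProbabilityTheory Filter

noncomputable section

set_option maxHeartbeats 1600000 in
/-- Let `a : [1,∞) → [1,∞)` be continuous, strictly increasing,
unbounded, `a(1) = 1`, with inverse `a⁻¹` regularly varying with index `α ∈ (0,2]`.
Assume (i) `a⁻¹(x) P(ξ₁ > x) ≤ C₀` and `a⁻¹(x) P(ξ₁ < -x) ≤ C₀` for `x ≥ 1`;
(ii) `E[ξ₁² 1_{|ξ₁|≤z}] ≤ C₁ z²/a⁻¹(z)` for `z ≥ 1`;
(iii) `|E[ξ₁ 1_{|ξ₁|≤z}]| ≤ C₂ z/a⁻¹(z)` for `z ≥ 1`.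
Then there is `C` with `P(S_n > x) ≤ C n / a⁻¹(x)` for all `n ≥ 1`, `x ≥ 1`. -/
theorem large_deviation_upper_bound
    {Ω : Type*} [MeasurableSpace Ω] (P : Measure Ω) [IsProbabilityMeasure P]
    (ξ : ℕ → Ω → ℝ) (hmeas : ∀ i, Measurable (ξ i))
    (hindep : iIndepFun ξ P)
    (hident : ∀ i, IdentDistrib (ξ i) (ξ 0) P P)
    (a ainv : ℝ → ℝ) (α : ℝ) (hα : 0 < α) (hα2 : α ≤ 2)
    (ha_cont : ContinuousOn a (Set.Ici 1))
    (ha_mono : StrictMonoOn a (Set.Ici 1))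
    (ha_top : Tendsto a atTop atTop)
    (ha_one : a 1 = 1)
    (ha_maps : ∀ x : ℝ, 1 ≤ x → 1 ≤ a x)
    (hainv_left : ∀ x : ℝ, 1 ≤ x → ainv (a x) = x)
    (hainv_right : ∀ y : ℝ, 1 ≤ y → a (ainv y) = y)
    (hainv_maps : ∀ y : ℝ, 1 ≤ y → 1 ≤ ainv y)
    (hainv_rv : ∀ l : ℝ, 0 < l →
      Tendsto (fun x : ℝ => ainv (l * x) / ainv x) atTop (nhds (l ^ α)))
    (C₀ C₁ C₂ : ℝ)
    (htail : ∀ x : ℝ, 1 ≤ x →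
      ainv x * (P {ω | x < ξ 0 ω}).toReal ≤ C₀ ∧
      ainv x * (P {ω | ξ 0 ω < -x}).toReal ≤ C₀)
    (hvar : ∀ z : ℝ, 1 ≤ z →
      ∫ ω in {ω | |ξ 0 ω| ≤ z}, (ξ 0 ω) ^ 2 ∂P ≤ C₁ * z ^ 2 / ainv z)
    (hmean : ∀ z : ℝ, 1 ≤ z →
      |∫ ω in {ω | |ξ 0 ω| ≤ z}, ξ 0 ω ∂P| ≤ C₂ * z / ainv z) :
    ∃ C : ℝ, ∀ n : ℕ, 1 ≤ n → ∀ x : ℝ, 1 ≤ x →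
      (P {ω | x < walk ξ n ω}).toReal ≤ C * n / ainv x := by
    classical
  set S := fun z : ℝ => {ω | |ξ 0 ω| ≤ z} with hSdef
  have hSmeas : ∀ z : ℝ, MeasurableSet (S z) := fun z =>
    measurableSet_le (hmeas 0).abs measurable_const
  -- nonnegativity of the constants
  have hainv1 : (1:ℝ) ≤ ainv 1 := hainv_maps 1 le_rfl
  have hC0 : 0 ≤ C₀ := by
    refine le_trans ?_ (htail 1 le_rfl).1
    exact mul_nonneg (by linarith) ENNReal.toReal_nonneg
  have hC1 : 0 ≤ C₁ := by
    have hint : 0 ≤ ∫ ω in S 1, (ξ 0 ω) ^ 2 ∂P :=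
      setIntegral_nonneg (hSmeas 1) fun ω _ => sq_nonneg _
    have h := le_trans hint (hvar 1 le_rfl)
    rw [le_div_iff₀ (by linarith : (0:ℝ) < ainv 1)] at h
    nlinarith
  have hC2 : 0 ≤ C₂ := by
    have h := (abs_nonneg _).trans (hmean 1 le_rfl)
    rw [le_div_iff₀ (by linarith : (0:ℝ) < ainv 1)] at h
    nlinarith
  refine ⟨2 * C₀ + 4 * C₁ + 2 * (C₂ + 1), ?_⟩
  intro n hn x hx
  set A := ainv x with hAdef
  have hA1 : (1:ℝ) ≤ A := hainv_maps x hx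
  have hA0 : (0:ℝ) < A := by linarith
  have hx0 : (0:ℝ) < x := by linarith
  have hn0 : (0:ℝ) < (n:ℝ) := by exact_mod_cast hn
  -- truncation
  set φ : ℝ → ℝ := fun y => if |y| ≤ x then y else 0 with hφdef
  have hφm : Measurable φ :=
    Measurable.ite (measurableSet_le measurable_abs measurable_const)
      measurable_id measurable_const
  set η : ℕ → Ω → ℝ := fun i ω => φ (ξ i ω) with hηdef
  have hηmeas : ∀ i, Measurable (η i) := fun i => hφm.comp (hmeas i)
  have hηb : ∀ i ω, ‖η i ω‖ ≤ x := by
    intro i ω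
    simp only [hηdef, hφdef, Real.norm_eq_abs]
    split_ifs with h
    · exact h
    · simpa using hx0.le
  have hηmem : ∀ i, MemLp (η i) 2 P := fun i =>
    MemLp.of_bound (hηmeas i).aestronglyMeasurable x (Filter.Eventually.of_forall (hηb i))
  have hηint : ∀ i, Integrable (η i) P := fun i => (hηmem i).integrable one_le_two
  have hηident : ∀ i, IdentDistrib (η i) (η 0) P P := fun i => (hident i).comp hφm
  have hηindep : iIndepFun η P :=
    hindep.comp (fun _ => φ) (fun _ => hφm)
  -- mean of truncated variable
  set m : ℝ := ∫ ω, η 0 ω ∂P with hmdef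
  have hind : (fun ω => η 0 ω) = (S x).indicator (ξ 0) := by
    funext ω
    simp only [hηdef, hφdef, Set.indicator_apply, hSdef, Set.mem_setOf_eq]
  have hm : m = ∫ ω in S x, ξ 0 ω ∂P := by
    rw [hmdef, hind, integral_indicator (hSmeas x)]
  have hmabs : |m| ≤ (C₂ + 1) * x / A := by
    rw [hm]
    refine (hmean x hx).trans ?_
    exact (div_le_div_iff_of_pos_right hA0).mpr (by nlinarith)
  -- second moment of truncated variable
  have hsq : ∫ ω, (η 0 ω) ^ 2 ∂P = ∫ ω in S x, (ξ 0 ω) ^ 2 ∂P := by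
    have h2 : (fun ω => (η 0 ω) ^ 2) = (S x).indicator (fun ω => (ξ 0 ω) ^ 2) := by
      funext ω
      by_cases h : ω ∈ S x
      · simp [hηdef, hφdef, Set.indicator_of_mem h, hSdef, Set.mem_setOf_eq.mp h]
      · have h' : ¬ |ξ 0 ω| ≤ x := h
        simp [hηdef, hφdef, Set.indicator_of_notMem h, h']
    rw [h2, integral_indicator (hSmeas x)]
  have hvar0 : variance (η 0) P ≤ C₁ * x ^ 2 / A := by
    refine (variance_le_expectation_sq (hηmeas 0).aestronglyMeasurable).trans ?_
    have : P[(η 0) ^ 2] = ∫ ω, (η 0 ω) ^ 2 ∂P := by rfl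
    rw [this, hsq]
    exact hvar x hx
  -- the truncated sum
  set T : Ω → ℝ := ∑ i ∈ Finset.range n, η i with hTdef
  have hTmem : MemLp T 2 P := memLp_finsetSum' _ (fun i _ => hηmem i)
  have hTmean : ∫ ω, T ω ∂P = n * m := by
    simp only [hTdef, Finset.sum_apply]
    rw [integral_finset_sum _ (fun i _ => hηint i),
      Finset.sum_congr rfl (fun i _ => (hηident i).integral_eq)]
    simp [hmdef, mul_comm]
  have hTvar : variance T P ≤ n * (C₁ * x ^ 2 / A) := by
    rw [hTdef, IndepFun.variance_sum (fun i _ => hηmem i)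
      (fun i _ j _ hij => hηindep.indepFun hij),
      Finset.sum_congr rfl (fun i _ => (hηident i).variance_eq)]
    simp only [Finset.sum_const, Finset.card_range, nsmul_eq_mul]
    exact mul_le_mul_of_nonneg_left hvar0 (Nat.cast_nonneg n)
  -- event inclusion
  have hsub : {ω | x < walk ξ n ω} ⊆
      (⋃ i ∈ Finset.range n, {ω | x < |ξ i ω|}) ∪ {ω | x < T ω} := by
    intro ω hω
    by_cases h : ∀ i ∈ Finset.range n, |ξ i ω| ≤ x
    · right
      have hT : T ω = walk ξ n ω := by
        simp only [hTdef, Finset.sum_apply, walk]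
        exact Finset.sum_congr rfl fun i hi => by
          simp [hηdef, hφdef, if_pos (h i hi)]
      simpa [Set.mem_setOf_eq, hT] using hω
    · left
      push_neg at h
      obtain ⟨i, hi, hxi⟩ := h
      exact Set.mem_biUnion hi hxi
  have hP1 : P {ω | x < walk ξ n ω} ≤
      (∑ i ∈ Finset.range n, P {ω | x < |ξ i ω|}) + P {ω | x < T ω} := by
    refine (measure_mono hsub).trans ?_
    refine (measure_union_le _ _).trans ?_
    gcongr
    exact measure_biUnion_finset_le _ _
  -- tail probabilities
  have htaili : ∀ i, P {ω | x < |ξ i ω|} = P {ω | x < |ξ 0 ω|} := fun i =>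
    (hident i).measure_mem_eq (measurableSet_lt measurable_const measurable_abs)
  have htail0 : (P {ω | x < |ξ 0 ω|}).toReal ≤ 2 * C₀ / A := by
    have hsubt : {ω | x < |ξ 0 ω|} ⊆ {ω | x < ξ 0 ω} ∪ {ω | ξ 0 ω < -x} := by
      intro ω h
      simp only [Set.mem_setOf_eq] at h
      rcases lt_abs.mp h with h' | h'
      · exact Or.inl h'
      · exact Or.inr (by simp only [Set.mem_setOf_eq]; linarith)
    have hle := (measure_mono (μ := P) hsubt).trans (measure_union_le (μ := P) _ _)
    have h1 : (P {ω | x < ξ 0 ω}).toReal ≤ C₀ / A := by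
      rw [le_div_iff₀ hA0, mul_comm]
      exact (htail x hx).1
    have h2 : (P {ω | ξ 0 ω < -x}).toReal ≤ C₀ / A := by
      rw [le_div_iff₀ hA0, mul_comm]
      exact (htail x hx).2
    calc (P {ω | x < |ξ 0 ω|}).toReal
        ≤ (P {ω | x < ξ 0 ω} + P {ω | ξ 0 ω < -x}).toReal :=
          ENNReal.toReal_mono (by finiteness) hle
      _ = (P {ω | x < ξ 0 ω}).toReal + (P {ω | ξ 0 ω < -x}).toReal :=
          ENNReal.toReal_add (measure_ne_top _ _) (measure_ne_top _ _)
      _ ≤ C₀ / A + C₀ / A := add_le_add h1 h2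
      _ = 2 * C₀ / A := by ring
  -- truncated sum probability
  have hTrunc : (P {ω | x < T ω}).toReal ≤ (4 * C₁ + 2 * (C₂ + 1)) * n / A := by
    by_cases hcase : A ≤ 2 * (C₂ + 1) * n
    · have h1 : (P {ω | x < T ω}).toReal ≤ 1 := by
        have := ENNReal.toReal_mono ENNReal.one_ne_top (prob_le_one (μ := P) (s := {ω | x < T ω}))
        simpa using this
      refine h1.trans ?_
      rw [le_div_iff₀ hA0]
      nlinarith
    · push_neg at hcase
      have hnm : (n:ℝ) * ((C₂ + 1) * x / A) ≤ x / 2 := by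
        have heq : (n:ℝ) * ((C₂ + 1) * x / A) = ((n:ℝ) * ((C₂ + 1) * x)) / A := by ring
        rw [heq, div_le_div_iff₀ hA0 (by norm_num : (0:ℝ) < 2)]
        nlinarith [mul_lt_mul_of_pos_left hcase hx0]
      have hsub2 : {ω | x < T ω} ⊆ {ω | x / 2 ≤ |T ω - P[T]|} := by
        intro ω h
        have hTω : x < T ω := h
        have hEm : P[T] = n * m := hTmean
        have habs : (n:ℝ) * m ≤ x / 2 := by
          have h1 : |(n:ℝ) * m| ≤ x / 2 := by
            rw [abs_mul, abs_of_nonneg (Nat.cast_nonneg n)]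
            exact (mul_le_mul_of_nonneg_left hmabs (Nat.cast_nonneg n)).trans hnm
          exact (le_abs_self _).trans h1
        rw [Set.mem_setOf_eq, hEm]
        have : x / 2 ≤ T ω - n * m := by linarith
        exact this.trans (le_abs_self _)
      have hcheb := meas_ge_le_variance_div_sq hTmem (show (0:ℝ) < x / 2 by linarith)
      have hb : (P {ω | x < T ω}).toReal ≤ variance T P / (x / 2) ^ 2 := by
        calc (P {ω | x < T ω}).toReal
            ≤ (ENNReal.ofReal (variance T P / (x / 2) ^ 2)).toReal :=
              ENNReal.toReal_mono ENNReal.ofReal_ne_top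
                ((measure_mono hsub2).trans hcheb)
          _ = variance T P / (x / 2) ^ 2 := ENNReal.toReal_ofReal
              (div_nonneg (variance_nonneg _ _) (by positivity))
      refine hb.trans ?_
      have hx2 : (0:ℝ) < (x / 2) ^ 2 := by positivity
      rw [div_le_iff₀ hx2]
      calc variance T P ≤ n * (C₁ * x ^ 2 / A) := hTvar
        _ ≤ (4 * C₁ + 2 * (C₂ + 1)) * n / A * (x / 2) ^ 2 := by
            have h1 : (n:ℝ) * (C₁ * x ^ 2 / A) = (C₁ * n * x ^ 2) / A := by ring
            have h2 : (4 * C₁ + 2 * (C₂ + 1)) * n / A * (x / 2) ^ 2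
                = ((4 * C₁ + 2 * (C₂ + 1)) * n * (x / 2) ^ 2) / A := by ring
            rw [h1, h2]
            refine (div_le_div_iff_of_pos_right hA0).mpr ?_
            nlinarith [mul_nonneg hn0.le (sq_nonneg x), hC2]
  -- combine
  have hfin0 : (∑ i ∈ Finset.range n, P {ω | x < |ξ i ω|}) ≠ ⊤ :=
    (ENNReal.sum_lt_top.mpr fun i _ => measure_lt_top P _).ne
  have hfin : (∑ i ∈ Finset.range n, P {ω | x < |ξ i ω|}) + P {ω | x < T ω} ≠ ⊤ :=
    ENNReal.add_ne_top.mpr ⟨hfin0, measure_ne_top P _⟩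
  calc (P {ω | x < walk ξ n ω}).toReal
      ≤ ((∑ i ∈ Finset.range n, P {ω | x < |ξ i ω|}) + P {ω | x < T ω}).toReal :=
        ENNReal.toReal_mono hfin hP1
    _ = (∑ i ∈ Finset.range n, (P {ω | x < |ξ i ω|}).toReal) + (P {ω | x < T ω}).toReal := by
        rw [ENNReal.toReal_add hfin0 (measure_ne_top _ _),
          ENNReal.toReal_sum (fun i _ => measure_ne_top _ _)]
    _ ≤ (∑ i ∈ Finset.range n, (2 * C₀ / A)) + (4 * C₁ + 2 * (C₂ + 1)) * n / A := by
        refine add_le_add (Finset.sum_le_sum fun i _ => ?_) hTrunc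
        rw [htaili i]; exact htail0
    _ = n * (2 * C₀ / A) + (4 * C₁ + 2 * (C₂ + 1)) * n / A := by
        simp [Finset.sum_const, Finset.card_range]
    _ = (2 * C₀ + 4 * C₁ + 2 * (C₂ + 1)) * n / A := by ring
end
end
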